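/- arXiv:0709.1127 — 3 statements merged into one kernel-verified Lean document; each statement's English description precedes it below -/
import Mathlib

section
/- Let 𝔠 be a filtered Floer-Novikov complex over a Noetherian ring R. Then for any nonzero homology class a ∈ H_*(𝔠), the spectral number ρ(a) = inf{ℓ(c) : c ∈ C_*(𝔠), [c] = a} is finite (ρ(a) > −∞). -/
noncomputable section

open Filter

variable {R : Type*} [CommRing R] {Γ : Type*} [CommGroup Γ] {P : Type*} [MulAction Γ P]

/-- The chain condition for the downward-completed Floer complex: for every `C`
only finitely many points with nonzero coefficient have action greater than `C`. -/
def IsFloerChain (act : P → ℝ) (c : P → R) : Prop :=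
  ∀ C : ℝ, {p : P | c p ≠ 0 ∧ C < act p}.Finite

/-- The boundary operator determined by the incidence numbers `bnd`:
`(∂c)(q) = Σ_p c(p) · n(p,q)` (a finite sum on Floer chains). -/
def floerBdry (bnd : P → P → R) (c : P → R) : P → R :=
  fun q => ∑ᶠ p : P, c p * bnd p q

/-- The filtration level `ℓ(c) = max {𝒜(p) : c_p ≠ 0}` (with `ℓ(0) = -∞`). -/
def floerLevel (act : P → ℝ) (c : P → R) : EReal :=
  ⨆ p ∈ {p : P | c p ≠ 0}, (act p : EReal)

/-- A filtered Floer–Novikov complex over `R`: a principal `Γ`-bundle `P → S`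
with `S` finite (encoded as a free `Γ`-action on `P` with finitely many orbits),
an action functional and period homomorphism satisfying
`𝒜(g·p) = 𝒜(p) − ω(g)`, and incidence numbers `n(p,q)` which strictly decrease
the action, are `Γ`-invariant, and define a boundary operator on the completed
complex squaring to zero. -/
structure FloerComplex (R : Type*) [CommRing R] (Γ : Type*) [CommGroup Γ]
    (P : Type*) [MulAction Γ P] where
  /-- the `Γ`-action on the total space `P` is free -/
  free : ∀ (g : Γ) (p : P), g • p = p → g = 1
  /-- the base `S = P/Γ` is a finite set -/
  finiteOrbits : Finite (MulAction.orbitRel.Quotient Γ P)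
  /-- the action functional `𝒜 : P → ℝ` -/
  act : P → ℝ
  /-- the period homomorphism `ω : Γ → ℝ` -/
  per : Γ → ℝ
  per_hom : ∀ g h : Γ, per (g * h) = per g + per h
  act_smul : ∀ (g : Γ) (p : P), act (g • p) = act p - per g
  /-- the incidence numbers `n : P × P → R` -/
  bnd : P → P → R
  bnd_vanish : ∀ p q : P, bnd p q ≠ 0 → act q < act p
  bnd_equivariant : ∀ (g : Γ) (p q : P), bnd (g • p) (g • q) = bnd p q
  bnd_chain : ∀ p : P, ∀ C : ℝ, {q : P | bnd p q ≠ 0 ∧ C < act q}.Finite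
  bdry_isChain : ∀ c : P → R, IsFloerChain act c → IsFloerChain act (floerBdry bnd c)
  bdry_bdry : ∀ c : P → R, IsFloerChain act c → floerBdry bnd (floerBdry bnd c) = 0

/-- The set of filtration levels of the representatives of the homology class
of the cycle `c₀`; its infimum is the spectral number `ρ([c₀])`. -/
def repLevels (𝔠 : FloerComplex R Γ P) (c₀ : P → R) : Set EReal :=
  {x : EReal | ∃ c : P → R, IsFloerChain 𝔠.act c ∧ floerBdry 𝔠.bnd c = 0 ∧
    (∃ h : P → R, IsFloerChain 𝔠.act h ∧ floerBdry 𝔠.bnd h = c - c₀) ∧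
    x = floerLevel 𝔠.act c}

namespace FloerProof

variable (𝔠 : FloerComplex R Γ P)

lemma per_one : 𝔠.per 1 = 0 := by
  have h := 𝔠.per_hom 1 1
  simp only [mul_one] at h
  linarith

lemma per_inv (g : Γ) : 𝔠.per g⁻¹ = - 𝔠.per g := by
  have h := 𝔠.per_hom g g⁻¹
  rw [mul_inv_cancel] at h
  rw [per_one] at h
  linarith

lemma act_inv_smul (g : Γ) (p : P) : 𝔠.act (g⁻¹ • p) = 𝔠.act p + 𝔠.per g := by
  rw [𝔠.act_smul, per_inv]; ring

/-- `Bdd c μ`: the chain `c` is supported in action level `≤ μ`. -/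
def Bdd (c : P → R) (μ : ℝ) : Prop := ∀ p, c p ≠ 0 → 𝔠.act p ≤ μ

variable {𝔠}

lemma Bdd.mono {c : P → R} {μ μ' : ℝ} (h : Bdd 𝔠 c μ) (hμ : μ ≤ μ') : Bdd 𝔠 c μ' :=
  fun p hp => le_trans (h p hp) hμ

lemma bdd_zero (μ : ℝ) : Bdd 𝔠 (0 : P → R) μ := fun p hp => absurd rfl hp

lemma Bdd.add {c c' : P → R} {μ : ℝ} (h : Bdd 𝔠 c μ) (h' : Bdd 𝔠 c' μ) :
    Bdd 𝔠 (c + c') μ := by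
  intro p hp
  by_cases hc : c p ≠ 0
  · exact h p hc
  · push_neg at hc
    apply h' p
    intro hc'
    apply hp
    simp [Pi.add_apply, hc, hc']

lemma Bdd.neg {c : P → R} {μ : ℝ} (h : Bdd 𝔠 c μ) : Bdd 𝔠 (-c) μ := by
  intro p hp
  apply h p
  simpa using hp

lemma Bdd.sub {c c' : P → R} {μ : ℝ} (h : Bdd 𝔠 c μ) (h' : Bdd 𝔠 c' μ) :
    Bdd 𝔠 (c - c') μ := by
  rw [sub_eq_add_neg]; exact h.add h'.neg

lemma Bdd.smul {c : P → R} {μ : ℝ} (r : R) (h : Bdd 𝔠 c μ) : Bdd 𝔠 (r • c) μ := by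
  intro p hp
  apply h p
  intro h0
  apply hp
  simp [Pi.smul_apply, h0]

/-- a chain that is bounded by every level is zero -/
lemma eq_zero_of_forall_bdd {c : P → R} (h : ∀ μ : ℝ, Bdd 𝔠 c μ) : c = 0 := by
  funext p
  by_contra hp
  have := h (𝔠.act p - 1) p hp
  linarith

/-! ### The boundary operator on chains -/

section D

lemma isc_zero : IsFloerChain 𝔠.act (0 : P → R) := by
  intro C
  convert Set.finite_empty using 1
  ext p
  simp

lemma isc_add {c c' : P → R} (h : IsFloerChain 𝔠.act c) (h' : IsFloerChain 𝔠.act c') :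
    IsFloerChain 𝔠.act (c + c') := by
  intro C
  apply ((h C).union (h' C)).subset
  rintro p ⟨hp, hC⟩
  by_cases hc : c p ≠ 0
  · exact Or.inl ⟨hc, hC⟩
  · push_neg at hc
    refine Or.inr ⟨?_, hC⟩
    intro hc'
    exact hp (by simp [Pi.add_apply, hc, hc'])

lemma isc_neg {c : P → R} (h : IsFloerChain 𝔠.act c) : IsFloerChain 𝔠.act (-c) := by
  intro C
  apply (h C).subset
  rintro p ⟨hp, hC⟩
  exact ⟨by simpa using hp, hC⟩

lemma isc_sub {c c' : P → R} (h : IsFloerChain 𝔠.act c) (h' : IsFloerChain 𝔠.act c') :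
    IsFloerChain 𝔠.act (c - c') := by
  rw [sub_eq_add_neg]; exact isc_add h (isc_neg h')

lemma isc_smul {c : P → R} (r : R) (h : IsFloerChain 𝔠.act c) :
    IsFloerChain 𝔠.act (r • c) := by
  intro C
  apply (h C).subset
  rintro p ⟨hp, hC⟩
  refine ⟨fun h0 => hp ?_, hC⟩
  simp [Pi.smul_apply, h0]

/-- every Floer chain is bounded above in level -/
lemma isc_bdd {c : P → R} (h : IsFloerChain 𝔠.act c) : ∃ μ : ℝ, Bdd 𝔠 c μ := by
  have hf : ((fun p => 𝔠.act p) '' {p : P | c p ≠ 0 ∧ 0 < 𝔠.act p}).Finite :=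
    (h 0).image _
  obtain ⟨b, hb⟩ := hf.bddAbove
  refine ⟨max 0 b, fun p hp => ?_⟩
  rcases le_or_gt (𝔠.act p) 0 with h0 | h0
  · exact le_trans h0 (le_max_left _ _)
  · exact le_trans (hb ⟨p, ⟨hp, h0⟩, rfl⟩) (le_max_right _ _)

lemma suppD_finite {c : P → R} (hc : IsFloerChain 𝔠.act c) (q : P) :
    (Function.support fun p => c p * 𝔠.bnd p q).Finite := by
  apply (hc (𝔠.act q)).subset
  intro p hp
  have hcp : c p ≠ 0 := fun h0 => hp (by simp [h0])
  have hb : 𝔠.bnd p q ≠ 0 := fun h0 => hp (by simp [h0])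
  exact ⟨hcp, 𝔠.bnd_vanish p q hb⟩

lemma D_zero : floerBdry 𝔠.bnd (0 : P → R) = 0 := by
  funext q
  exact finsum_eq_zero_of_forall_eq_zero fun p => by simp [floerBdry]

lemma D_add {c c' : P → R} (hc : IsFloerChain 𝔠.act c) (hc' : IsFloerChain 𝔠.act c') :
    floerBdry 𝔠.bnd (c + c') = floerBdry 𝔠.bnd c + floerBdry 𝔠.bnd c' := by
  funext q
  show ∑ᶠ p, (c + c') p * 𝔠.bnd p q = _
  have : ∀ p, (c + c') p * 𝔠.bnd p q = c p * 𝔠.bnd p q + c' p * 𝔠.bnd p q := by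
    intro p; simp [Pi.add_apply, add_mul]
  rw [finsum_congr this, finsum_add_distrib (suppD_finite hc q) (suppD_finite hc' q)]
  rfl

lemma D_neg (c : P → R) : floerBdry 𝔠.bnd (-c) = - floerBdry 𝔠.bnd c := by
  funext q
  show ∑ᶠ p, (-c) p * 𝔠.bnd p q = -∑ᶠ p, c p * 𝔠.bnd p q
  rw [← finsum_neg_distrib]
  exact finsum_congr fun p => by simp

lemma D_sub {c c' : P → R} (hc : IsFloerChain 𝔠.act c) (hc' : IsFloerChain 𝔠.act c') :
    floerBdry 𝔠.bnd (c - c') = floerBdry 𝔠.bnd c - floerBdry 𝔠.bnd c' := by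
  rw [sub_eq_add_neg, sub_eq_add_neg, D_add hc (isc_neg hc'), D_neg]

lemma D_smul {c : P → R} (r : R) (hc : IsFloerChain 𝔠.act c) :
    floerBdry 𝔠.bnd (r • c) = r • floerBdry 𝔠.bnd c := by
  funext q
  show ∑ᶠ p, (r • c) p * 𝔠.bnd p q = r * ∑ᶠ p, c p * 𝔠.bnd p q
  rw [mul_finsum' _ _ (suppD_finite hc q)]
  exact finsum_congr fun p => by simp [Pi.smul_apply, mul_assoc]

lemma Bdd.D {c : P → R} {μ : ℝ} (h : Bdd 𝔠 c μ) : Bdd 𝔠 (floerBdry 𝔠.bnd c) μ := by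
  intro q hq
  have : ∃ p, c p * 𝔠.bnd p q ≠ 0 := by
    by_contra hap
    push_neg at hap
    exact hq (finsum_eq_zero_of_forall_eq_zero hap)
  obtain ⟨p, hp⟩ := this
  have hcp : c p ≠ 0 := fun h0 => hp (by simp [h0])
  have hb : 𝔠.bnd p q ≠ 0 := fun h0 => hp (by simp [h0])
  exact le_trans (le_of_lt (𝔠.bnd_vanish p q hb)) (h p hcp)

end D

/-! ### The translation action on chains -/

section Shift

/-- translation of a chain by a group element -/
def sh (γ : Γ) (c : P → R) : P → R := fun p => c (γ⁻¹ • p)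

lemma sh_apply (γ : Γ) (c : P → R) (p : P) : sh γ c p = c (γ⁻¹ • p) := rfl

lemma act_sh_support {γ : Γ} {c : P → R} {p : P} (h : sh γ c p ≠ 0) :
    𝔠.act p = 𝔠.act (γ⁻¹ • p) - 𝔠.per γ := by
  conv_lhs => rw [← smul_inv_smul γ p]
  rw [𝔠.act_smul]

lemma isc_sh {c : P → R} (γ : Γ) (hc : IsFloerChain 𝔠.act c) :
    IsFloerChain 𝔠.act (sh γ c) := by
  intro C
  have : {p : P | sh γ c p ≠ 0 ∧ C < 𝔠.act p} ⊆
      (fun p' => γ • p') '' {p' : P | c p' ≠ 0 ∧ C + 𝔠.per γ < 𝔠.act p'} := by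
    rintro p ⟨hp, hC⟩
    refine ⟨γ⁻¹ • p, ⟨hp, ?_⟩, smul_inv_smul γ p⟩
    have := act_sh_support (𝔠 := 𝔠) (γ := γ) (c := c) hp
    linarith
  exact (((hc (C + 𝔠.per γ)).image _).subset this)

lemma Bdd.sh {c : P → R} {μ : ℝ} (γ : Γ) (h : Bdd 𝔠 c μ) :
    Bdd 𝔠 (sh γ c) (μ - 𝔠.per γ) := by
  intro p hp
  rw [act_sh_support (𝔠 := 𝔠) hp]
  have := h _ hp
  linarith

lemma sh_add (γ : Γ) (c c' : P → R) : sh γ (c + c') = sh γ c + sh γ c' := rfl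

lemma sh_sub (γ : Γ) (c c' : P → R) : sh γ (c - c') = sh γ c - sh γ c' := rfl

lemma sh_smul (γ : Γ) (r : R) (c : P → R) : sh γ (r • c) = r • sh γ c := rfl

lemma D_sh (γ : Γ) (c : P → R) :
    floerBdry 𝔠.bnd (sh γ c) = sh γ (floerBdry 𝔠.bnd c) := by
  funext q
  show ∑ᶠ p, c (γ⁻¹ • p) * 𝔠.bnd p q = ∑ᶠ p', c p' * 𝔠.bnd p' (γ⁻¹ • q)
  rw [← finsum_comp_equiv (MulAction.toPerm (α := Γ) (β := P) γ)]
  apply finsum_congr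
  intro p'
  have h1 : γ⁻¹ • (MulAction.toPerm (α := Γ) (β := P) γ) p' = p' := by
    show γ⁻¹ • γ • p' = p'
    exact inv_smul_smul γ p'
  have h2 : 𝔠.bnd ((MulAction.toPerm (α := Γ) (β := P) γ) p') q = 𝔠.bnd p' (γ⁻¹ • q) := by
    show 𝔠.bnd (γ • p') q = _
    conv_lhs => rw [← smul_inv_smul γ q]
    exact 𝔠.bnd_equivariant γ p' (γ⁻¹ • q)
  rw [h1, h2]

end Shift

/-! ### Attained top level -/

/-- `TopAt c ν`: the chain `c` has (attained) top level exactly `ν`. -/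
def TopAt (𝔠 : FloerComplex R Γ P) (c : P → R) (ν : ℝ) : Prop :=
  Bdd 𝔠 c ν ∧ ∃ p, c p ≠ 0 ∧ 𝔠.act p = ν

lemma exists_topAt {c : P → R} (hc : IsFloerChain 𝔠.act c) (hne : c ≠ 0) :
    ∃ ν, TopAt 𝔠 c ν := by
  classical
  have : ∃ p₀, c p₀ ≠ 0 := by
    by_contra h
    push_neg at h
    exact hne (funext fun p => h p)
  obtain ⟨p₀, hp₀⟩ := this
  have hfin := hc (𝔠.act p₀ - 1)
  set S := hfin.toFinset.image (fun p => 𝔠.act p) with hS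
  have hSne : S.Nonempty := ⟨𝔠.act p₀, Finset.mem_image.2 ⟨p₀,
    hfin.mem_toFinset.2 ⟨hp₀, by linarith⟩, rfl⟩⟩
  refine ⟨S.max' hSne, ⟨?_, ?_⟩⟩
  · intro p hp
    rcases le_or_gt (𝔠.act p) (𝔠.act p₀ - 1) with h | h
    · have hp₀S : 𝔠.act p₀ ≤ S.max' hSne := Finset.le_max' _ _ (Finset.mem_image.2 ⟨p₀,
        hfin.mem_toFinset.2 ⟨hp₀, by linarith⟩, rfl⟩)
      linarith
    · exact Finset.le_max' _ _ (Finset.mem_image.2 ⟨p, hfin.mem_toFinset.2 ⟨hp, h⟩, rfl⟩)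
  · obtain ⟨p, hp, hact⟩ := Finset.mem_image.1 (S.max'_mem hSne)
    exact ⟨p, (hfin.mem_toFinset.1 hp).1, hact⟩

/-! ### Approximable chains -/

/-- `Approx x`: the chain `x` can be approximated by boundaries to every depth. -/
def Approx (𝔠 : FloerComplex R Γ P) (x : P → R) : Prop :=
  IsFloerChain 𝔠.act x ∧
    ∀ μ : ℝ, ∃ h, IsFloerChain 𝔠.act h ∧ Bdd 𝔠 (x - floerBdry 𝔠.bnd h) μ

lemma Approx.subD {x g : P → R} (hx : Approx 𝔠 x) (hg : IsFloerChain 𝔠.act g) :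
    Approx 𝔠 (x - floerBdry 𝔠.bnd g) := by
  refine ⟨isc_sub hx.1 (𝔠.bdry_isChain g hg), fun μ => ?_⟩
  obtain ⟨h, hh, hb⟩ := hx.2 μ
  refine ⟨h - g, isc_sub hh hg, ?_⟩
  have heq : x - floerBdry 𝔠.bnd g - floerBdry 𝔠.bnd (h - g) = x - floerBdry 𝔠.bnd h := by
    rw [D_sub hh hg, sub_sub_sub_cancel_right]
  rw [heq]
  exact hb

lemma Approx.shift {x : P → R} (γ : Γ) (hx : Approx 𝔠 x) : Approx 𝔠 (sh γ x) := by
  refine ⟨isc_sh γ hx.1, fun μ => ?_⟩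
  obtain ⟨h, hh, hb⟩ := hx.2 (μ + 𝔠.per γ)
  refine ⟨sh γ h, isc_sh γ hh, ?_⟩
  have : sh γ x - floerBdry 𝔠.bnd (sh γ h) = sh γ (x - floerBdry 𝔠.bnd h) := by
    rw [D_sh, sh_sub]
  rw [this]
  have := hb.sh γ
  simpa using this

lemma Approx.smul {x : P → R} (r : R) (hx : Approx 𝔠 x) : Approx 𝔠 (r • x) := by
  refine ⟨isc_smul r hx.1, fun μ => ?_⟩
  obtain ⟨h, hh, hb⟩ := hx.2 μ
  refine ⟨r • h, isc_smul r hh, ?_⟩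
  have : r • x - floerBdry 𝔠.bnd (r • h) = r • (x - floerBdry 𝔠.bnd h) := by
    rw [D_smul r hh, smul_sub]
  rw [this]
  exact hb.smul r


/-! ### The kernel of the period homomorphism and its group algebra -/

/-- the kernel of the period homomorphism, as a subgroup of `Γ` -/
def Kg (𝔠 : FloerComplex R Γ P) : Subgroup Γ where
  carrier := {γ | 𝔠.per γ = 0}
  mul_mem' := by
    intro a b ha hb
    have := 𝔠.per_hom a b
    simp only [Set.mem_setOf_eq] at *
    rw [this, ha, hb]; ring
  one_mem' := per_one 𝔠
  inv_mem' := by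
    intro a ha
    simp only [Set.mem_setOf_eq] at *
    rw [per_inv 𝔠, ha]; ring

lemma per_kg (k : Kg 𝔠) : 𝔠.per (k : Γ) = 0 := k.2

lemma kg_fg [Group.FG Γ] : Group.FG (Kg 𝔠) := by
  rw [Group.fg_iff_subgroup_fg, Subgroup.fg_iff_add_fg]
  haveI : Module.Finite ℤ (Additive Γ) := Module.Finite.iff_addGroup_fg.2 inferInstance
  haveI : IsNoetherian ℤ (Additive Γ) := isNoetherian_of_isNoetherianRing_of_finite ℤ _
  have hN : (AddSubgroup.toIntSubmodule ((Kg 𝔠).toAddSubgroup)).FG :=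
    IsNoetherian.noetherian _
  have := (Submodule.fg_iff_addSubgroup_fg _).1 hN
  rwa [AddSubgroup.toIntSubmodule_toAddSubgroup] at this

lemma kg_noetherian [Group.FG Γ] [IsNoetherianRing R] :
    IsNoetherianRing (MonoidAlgebra R (Kg 𝔠)) := by
  haveI : Group.FG (Kg 𝔠) := kg_fg
  haveI : Monoid.FG (Kg 𝔠) := Group.fg_iff_monoid_fg.1 inferInstance
  exact Algebra.FiniteType.isNoetherianRing R _


/-! ### Level classes, base points and coordinates -/

section Coord

open Classical in
instance [Nonempty P] : Nonempty (MulAction.orbitRel.Quotient Γ P) :=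
  ⟨Quotient.mk'' (Classical.arbitrary P)⟩

variable [Nonempty P]

/-- the orbit of a point, in the finite orbit space -/
def qm (p : P) : MulAction.orbitRel.Quotient Γ P := Quotient.mk'' p

lemma qm_smul (γ : Γ) (p : P) : qm (γ • p) = (qm p : MulAction.orbitRel.Quotient Γ P) :=
  MulAction.orbitRel.Quotient.mem_orbit.1 (MulAction.mem_orbit p γ)

lemma same_orbit {p p' : P} (h : (qm p : MulAction.orbitRel.Quotient Γ P) = qm p') :
    ∃ γ : Γ, γ • p' = p :=
  MulAction.mem_orbit_iff.1 (MulAction.orbitRel.Quotient.mem_orbit.2 h)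

lemma qm_out (q : MulAction.orbitRel.Quotient Γ P) : qm q.out = q := Quotient.out_eq' q

variable (𝔠)

/-- two levels are related if they differ by a period -/
def lrel (ν ν' : ℝ) : Prop := ∃ γ : Γ, 𝔠.per γ = ν - ν'

lemma lrel_refl (ν : ℝ) : lrel 𝔠 ν ν := ⟨1, by rw [per_one]; ring⟩

lemma lrel_symm {ν ν' : ℝ} (h : lrel 𝔠 ν ν') : lrel 𝔠 ν' ν := by
  obtain ⟨γ, hγ⟩ := h
  exact ⟨γ⁻¹, by rw [per_inv, hγ]; ring⟩

lemma lrel_trans {ν ν' ν'' : ℝ} (h : lrel 𝔠 ν ν') (h' : lrel 𝔠 ν' ν'') : lrel 𝔠 ν ν'' := by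
  obtain ⟨γ, hγ⟩ := h; obtain ⟨γ', hγ'⟩ := h'
  exact ⟨γ * γ', by rw [𝔠.per_hom, hγ, hγ']; ring⟩

/-- the orbits having a point whose level is related to `ν` -/
def clsSet (ν : ℝ) : Set (MulAction.orbitRel.Quotient Γ P) :=
  {q | lrel 𝔠 (𝔠.act q.out) ν}

lemma clsSet_congr {ν ν' : ℝ} (h : lrel 𝔠 ν ν') : clsSet 𝔠 ν = clsSet 𝔠 ν' := by
  ext q
  exact ⟨fun hq => lrel_trans 𝔠 hq h, fun hq => lrel_trans 𝔠 hq (lrel_symm 𝔠 h)⟩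

open Classical in
/-- the canonical reference orbit of a level class -/
noncomputable def refQ (ν : ℝ) : MulAction.orbitRel.Quotient Γ P :=
  if h : (clsSet 𝔠 ν).Nonempty then h.choose else Classical.arbitrary _

lemma refQ_mem {ν : ℝ} (h : (clsSet 𝔠 ν).Nonempty) : refQ 𝔠 ν ∈ clsSet 𝔠 ν := by
  rw [refQ, dif_pos h]
  exact h.choose_spec

lemma refQ_congr {ν ν' : ℝ} (h : lrel 𝔠 ν ν') : refQ 𝔠 ν = refQ 𝔠 ν' := by
  have e := clsSet_congr 𝔠 h
  unfold refQ
  rw [e]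

/-- the canonical reference level of a level class -/
noncomputable def lam (ν : ℝ) : ℝ := 𝔠.act (refQ 𝔠 ν).out

lemma lam_congr {ν ν' : ℝ} (h : lrel 𝔠 ν ν') : lam 𝔠 ν = lam 𝔠 ν' := by
  unfold lam
  rw [refQ_congr 𝔠 h]

lemma lrel_lam {ν : ℝ} (h : (clsSet 𝔠 ν).Nonempty) : lrel 𝔠 (lam 𝔠 ν) ν := refQ_mem 𝔠 h

open Classical in
/-- the canonical shift taking the reference level to `ν` -/
noncomputable def gsh (ν : ℝ) : Γ :=
  if h : ∃ γ : Γ, 𝔠.per γ = ν - lam 𝔠 ν then h.choose else 1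

lemma per_gsh {ν : ℝ} (h : (clsSet 𝔠 ν).Nonempty) : 𝔠.per (gsh 𝔠 ν) = ν - lam 𝔠 ν := by
  have hex : ∃ γ : Γ, 𝔠.per γ = ν - lam 𝔠 ν := lrel_symm 𝔠 (lrel_lam 𝔠 h)
  rw [gsh, dif_pos hex]
  exact hex.choose_spec

open Classical in
/-- a canonical base point of an orbit at a given level -/
noncomputable def bpt (q : MulAction.orbitRel.Quotient Γ P) (lv : ℝ) : P :=
  if h : ∃ p, qm p = q ∧ 𝔠.act p = lv then h.choose else q.out

lemma bpt_spec {q : MulAction.orbitRel.Quotient Γ P} {lv : ℝ}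
    (h : ∃ p, qm p = q ∧ 𝔠.act p = lv) : qm (bpt 𝔠 q lv) = q ∧ 𝔠.act (bpt 𝔠 q lv) = lv := by
  rw [bpt, dif_pos h]
  exact h.choose_spec

/-- the canonical point of the orbit `q` at level `ν` -/
noncomputable def sig (ν : ℝ) (q : MulAction.orbitRel.Quotient Γ P) : P :=
  (gsh 𝔠 ν)⁻¹ • bpt 𝔠 q (lam 𝔠 ν)

/-- `HasPt q ν`: the orbit `q` has a point at level `ν`. -/
def HasPt (q : MulAction.orbitRel.Quotient Γ P) (ν : ℝ) : Prop :=
  ∃ p, qm p = q ∧ 𝔠.act p = ν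

lemma HasPt.cls {q : MulAction.orbitRel.Quotient Γ P} {ν : ℝ} (h : HasPt 𝔠 q ν) :
    (clsSet 𝔠 ν).Nonempty := by
  obtain ⟨p, hpq, hpν⟩ := h
  refine ⟨q, ?_⟩
  obtain ⟨γ, hγ⟩ := same_orbit (by rw [qm_out q, hpq] : (qm q.out : _) = qm p)
  refine ⟨γ⁻¹, ?_⟩
  have h2 : 𝔠.act q.out = 𝔠.act (γ • p) := by rw [hγ]
  rw [𝔠.act_smul] at h2
  rw [per_inv, h2, hpν]
  ring

lemma HasPt.bpt {q : MulAction.orbitRel.Quotient Γ P} {ν : ℝ} (h : HasPt 𝔠 q ν) :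
    HasPt 𝔠 q (lam 𝔠 ν) := by
  obtain ⟨γ, hγ⟩ := lrel_lam 𝔠 (HasPt.cls 𝔠 h)
  obtain ⟨p, hpq, hpν⟩ := h
  refine ⟨γ⁻¹ • p, by rw [qm_smul, hpq], ?_⟩
  rw [act_inv_smul, hpν, hγ]
  ring

lemma sig_spec {q : MulAction.orbitRel.Quotient Γ P} {ν : ℝ} (h : HasPt 𝔠 q ν) :
    qm (sig 𝔠 ν q) = q ∧ 𝔠.act (sig 𝔠 ν q) = ν := by
  obtain ⟨hq, hl⟩ := bpt_spec 𝔠 (HasPt.bpt 𝔠 h)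
  constructor
  · rw [sig, qm_smul, hq]
  · rw [sig, act_inv_smul, hl, per_gsh 𝔠 (HasPt.cls 𝔠 h)]
    ring

/-- every point at level `ν` is a `ker per`-translate of the canonical point of its orbit -/
lemma exists_kg_smul_sig {p : P} {ν : ℝ} (hl : 𝔠.act p = ν) :
    ∃ k : Kg 𝔠, (k : Γ) • sig 𝔠 ν (qm p) = p := by
  have h : HasPt 𝔠 (qm p) ν := ⟨p, rfl, hl⟩
  obtain ⟨hq, hσ⟩ := sig_spec 𝔠 h
  obtain ⟨γ, hγ⟩ := same_orbit (by rw [hq] : (qm p : _) = qm (sig 𝔠 ν (qm p)))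
  have hper : 𝔠.per γ = 0 := by
    have h2 : 𝔠.act p = 𝔠.act (sig 𝔠 ν (qm p)) - 𝔠.per γ := by
      conv_lhs => rw [← hγ]
      rw [𝔠.act_smul]
    rw [hσ, hl] at h2
    linarith
  exact ⟨⟨γ, hper⟩, hγ⟩

/-- coherence: a single group element translates all canonical points between two
related levels -/
lemma sig_coherent {ν ν' : ℝ} (h : lrel 𝔠 ν ν') (q : MulAction.orbitRel.Quotient Γ P) :
    ((gsh 𝔠 ν')⁻¹ * gsh 𝔠 ν) • sig 𝔠 ν q = sig 𝔠 ν' q := by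
  rw [sig, sig, lam_congr 𝔠 h, smul_smul, mul_assoc, mul_inv_cancel, mul_one]

lemma per_beta {ν ν' : ℝ} (hν : (clsSet 𝔠 ν).Nonempty) (hν' : (clsSet 𝔠 ν').Nonempty)
    (h : lrel 𝔠 ν ν') : 𝔠.per ((gsh 𝔠 ν')⁻¹ * gsh 𝔠 ν) = ν - ν' := by
  rw [𝔠.per_hom, per_inv, per_gsh 𝔠 hν, per_gsh 𝔠 hν', lam_congr 𝔠 h]
  ring

end Coord


/-! ### Coordinates of a chain at a level, and the action of the group algebra -/

section CoordMap

variable [Nonempty P] (𝔠)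

lemma kg_smul_level (k : Kg 𝔠) (p : P) : 𝔠.act ((k : Γ) • p) = 𝔠.act p := by
  rw [𝔠.act_smul, per_kg]
  ring

lemma kg_smul_inj (p₀ : P) : Function.Injective fun k : Kg 𝔠 => (k : Γ) • p₀ := by
  intro k k' h
  simp only at h
  have h2 : ((k'⁻¹ * k : Kg 𝔠) : Γ) • p₀ = p₀ := by
    rw [Subgroup.coe_mul, mul_smul]
    rw [h]
    rw [← mul_smul]
    simp
  have := 𝔠.free _ _ h2
  have h3 : (k'⁻¹ * k : Kg 𝔠) = 1 := by
    ext
    simpa using this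
  rw [inv_mul_eq_one] at h3
  exact h3.symm

lemma kg_orbit_finite {x : P → R} (hx : IsFloerChain 𝔠.act x) (p₀ : P) :
    (Function.support fun k : Kg 𝔠 => x ((k : Γ) • p₀)).Finite := by
  have hfin := hx (𝔠.act p₀ - 1)
  have hsub : (Function.support fun k : Kg 𝔠 => x ((k : Γ) • p₀)) ⊆
      (fun k : Kg 𝔠 => (k : Γ) • p₀) ⁻¹' {p : P | x p ≠ 0 ∧ 𝔠.act p₀ - 1 < 𝔠.act p} := by
    intro k hk
    refine ⟨hk, ?_⟩
    rw [kg_smul_level]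
    linarith
  exact (hfin.preimage ((kg_smul_inj 𝔠 p₀).injOn)).subset hsub

open Classical in
/-- the coordinates of a chain along the orbit `q` at level `ν`, as an element
of the group algebra of `ker per` -/
noncomputable def coord (x : P → R) (ν : ℝ) (q : MulAction.orbitRel.Quotient Γ P) :
    MonoidAlgebra R (Kg 𝔠) :=
  if h : (Function.support fun k : Kg 𝔠 => x ((k : Γ) • sig 𝔠 ν q)).Finite
  then MonoidAlgebra.ofCoeff (Finsupp.ofSupportFinite _ h) else 0

lemma coord_apply {x : P → R} (hx : IsFloerChain 𝔠.act x) (ν : ℝ)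
    (q : MulAction.orbitRel.Quotient Γ P) (k : Kg 𝔠) :
    (coord 𝔠 x ν q).coeff k = x ((k : Γ) • sig 𝔠 ν q) := by
  rw [coord, dif_pos (kg_orbit_finite 𝔠 hx _)]
  rfl

lemma coord_add {x y : P → R} (hx : IsFloerChain 𝔠.act x) (hy : IsFloerChain 𝔠.act y)
    (ν : ℝ) (q : MulAction.orbitRel.Quotient Γ P) :
    coord 𝔠 (x + y) ν q = coord 𝔠 x ν q + coord 𝔠 y ν q := by
  ext k
  rw [MonoidAlgebra.coeff_add, Finsupp.add_apply, coord_apply 𝔠 (isc_add hx hy), coord_apply 𝔠 hx, coord_apply 𝔠 hy]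
  rfl

/-- the action of the group algebra of `ker per` on chains -/
noncomputable def mact (r : MonoidAlgebra R (Kg 𝔠)) (c : P → R) : P → R :=
  r.coeff.sum fun k a => a • sh ((k : Γ)) c

lemma mact_apply (r : MonoidAlgebra R (Kg 𝔠)) (c : P → R) (p : P) :
    mact 𝔠 r c p = ∑ k ∈ r.coeff.support, r.coeff k * c ((k : Γ)⁻¹ • p) := by
  rw [mact, Finsupp.sum]
  rw [Finset.sum_apply]
  apply Finset.sum_congr rfl
  intro k _
  rfl

lemma isc_finsetSum {ι : Type*} (s : Finset ι) (f : ι → P → R)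
    (h : ∀ i ∈ s, IsFloerChain 𝔠.act (f i)) :
    IsFloerChain 𝔠.act (∑ i ∈ s, f i) := by
  classical
  induction s using Finset.induction_on with
  | empty => simpa using isc_zero
  | insert a s hni ih =>
    rw [Finset.sum_insert hni]
    exact isc_add (h a (Finset.mem_insert_self a s))
      (ih fun i hi => h i (Finset.mem_insert_of_mem hi))

lemma D_finsetSum {ι : Type*} (s : Finset ι) (f : ι → P → R)
    (h : ∀ i ∈ s, IsFloerChain 𝔠.act (f i)) :
    floerBdry 𝔠.bnd (∑ i ∈ s, f i) = ∑ i ∈ s, floerBdry 𝔠.bnd (f i) := by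
  classical
  induction s using Finset.induction_on with
  | empty => simpa using D_zero
  | insert a s hni ih =>
    rw [Finset.sum_insert hni, Finset.sum_insert hni,
      D_add (h a (Finset.mem_insert_self a s))
        (isc_finsetSum 𝔠 s f fun i hi => h i (Finset.mem_insert_of_mem hi)),
      ih fun i hi => h i (Finset.mem_insert_of_mem hi)]

lemma bdd_finsetSum {ι : Type*} (s : Finset ι) (f : ι → P → R) {μ : ℝ}
    (h : ∀ i ∈ s, Bdd 𝔠 (f i) μ) : Bdd 𝔠 (∑ i ∈ s, f i) μ := by
  classical
  induction s using Finset.induction_on with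
  | empty => simpa using bdd_zero (𝔠 := 𝔠) μ
  | insert a s hni ih =>
    rw [Finset.sum_insert hni]
    exact (h a (Finset.mem_insert_self a s)).add
      (ih fun i hi => h i (Finset.mem_insert_of_mem hi))

lemma isc_mact (r : MonoidAlgebra R (Kg 𝔠)) {c : P → R} (hc : IsFloerChain 𝔠.act c) :
    IsFloerChain 𝔠.act (mact 𝔠 r c) := by
  rw [mact, Finsupp.sum]
  exact isc_finsetSum 𝔠 _ _ fun k _ => isc_smul _ (isc_sh _ hc)

lemma bdd_mact (r : MonoidAlgebra R (Kg 𝔠)) {c : P → R} {μ : ℝ} (hc : Bdd 𝔠 c μ) :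
    Bdd 𝔠 (mact 𝔠 r c) μ := by
  rw [mact, Finsupp.sum]
  apply bdd_finsetSum
  intro k _
  have h1 := (hc.sh ((k : Γ))).smul (r.coeff k)
  rw [per_kg] at h1
  simpa using h1

lemma D_mact (r : MonoidAlgebra R (Kg 𝔠)) {c : P → R} (hc : IsFloerChain 𝔠.act c) :
    floerBdry 𝔠.bnd (mact 𝔠 r c) = mact 𝔠 r (floerBdry 𝔠.bnd c) := by
  rw [mact, mact, Finsupp.sum, Finsupp.sum,
    D_finsetSum 𝔠 _ _ fun k _ => isc_smul _ (isc_sh _ hc)]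
  apply Finset.sum_congr rfl
  intro k _
  rw [D_smul _ (isc_sh _ hc), D_sh]

lemma mact_sub (r : MonoidAlgebra R (Kg 𝔠)) (c c' : P → R) :
    mact 𝔠 r (c - c') = mact 𝔠 r c - mact 𝔠 r c' := by
  funext p
  rw [Pi.sub_apply, mact_apply, mact_apply, mact_apply, ← Finset.sum_sub_distrib]
  apply Finset.sum_congr rfl
  intro k _
  rw [Pi.sub_apply, mul_sub]

/-- the coordinate map intertwines the group algebra actions -/
lemma coord_mact {x : P → R} (hx : IsFloerChain 𝔠.act x) (r : MonoidAlgebra R (Kg 𝔠))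
    (ν : ℝ) (q : MulAction.orbitRel.Quotient Γ P) :
    coord 𝔠 (mact 𝔠 r x) ν q = r * coord 𝔠 x ν q := by
  ext k₀
  rw [coord_apply 𝔠 (isc_mact 𝔠 r hx), mact_apply, MonoidAlgebra.coeff_mul_apply_left]
  rw [Finsupp.sum]
  apply Finset.sum_congr rfl
  intro k _
  rw [coord_apply 𝔠 hx]
  congr 1
  rw [← mul_smul]
  congr 1

/-- the coordinate map is compatible with the coherent translations between levels -/
lemma coord_sh_beta {x : P → R} (hx : IsFloerChain 𝔠.act x) {ν ν' : ℝ} (h : lrel 𝔠 ν ν')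
    (q : MulAction.orbitRel.Quotient Γ P) :
    coord 𝔠 (sh ((gsh 𝔠 ν')⁻¹ * gsh 𝔠 ν) x) ν' q = coord 𝔠 x ν q := by
  ext k
  rw [coord_apply 𝔠 (isc_sh _ hx), sh_apply, coord_apply 𝔠 hx]
  congr 1
  rw [← sig_coherent 𝔠 h q]
  rw [← mul_smul, ← mul_smul]
  congr 1
  simp [mul_comm, mul_left_comm, mul_assoc]

end CoordMap


/-! ### Auxiliary lemmas for the generator construction -/

section Aux

variable [Nonempty P] (𝔠)

lemma coord_zero (ν : ℝ) (q : MulAction.orbitRel.Quotient Γ P) :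
    coord 𝔠 (0 : P → R) ν q = 0 := by
  ext k
  rw [coord_apply 𝔠 isc_zero]
  rfl

lemma coord_finsetSum {ι : Type*} (s : Finset ι) (f : ι → P → R)
    (h : ∀ i ∈ s, IsFloerChain 𝔠.act (f i)) (ν : ℝ)
    (q : MulAction.orbitRel.Quotient Γ P) :
    coord 𝔠 (∑ i ∈ s, f i) ν q = ∑ i ∈ s, coord 𝔠 (f i) ν q := by
  classical
  induction s using Finset.induction_on with
  | empty => simpa using coord_zero 𝔠 ν q
  | insert a s hni ih =>
    rw [Finset.sum_insert hni, Finset.sum_insert hni,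
      coord_add 𝔠 (h a (Finset.mem_insert_self a s))
        (isc_finsetSum 𝔠 s f fun i hi => h i (Finset.mem_insert_of_mem hi)),
      ih fun i hi => h i (Finset.mem_insert_of_mem hi)]

lemma topAt_cls {x : P → R} {ν : ℝ} (h : TopAt 𝔠 x ν) : (clsSet 𝔠 ν).Nonempty := by
  obtain ⟨-, p, hp, hν⟩ := h
  exact HasPt.cls 𝔠 (⟨p, rfl, hν⟩ : HasPt 𝔠 (qm p) ν)

lemma lrel_of_refQ_eq {ν ν' : ℝ} (h : (clsSet 𝔠 ν).Nonempty) (h' : (clsSet 𝔠 ν').Nonempty)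
    (he : refQ 𝔠 ν = refQ 𝔠 ν') : lrel 𝔠 ν ν' := by
  have hlam : lam 𝔠 ν = lam 𝔠 ν' := by rw [lam, lam, he]
  refine lrel_trans 𝔠 (lrel_symm 𝔠 (lrel_lam 𝔠 h)) ?_
  rw [hlam]
  exact lrel_lam 𝔠 h'

/-- existence of a "gap" below the attained top level of a chain -/
lemma exists_gap {x : P → R} {ν : ℝ} (hx : IsFloerChain 𝔠.act x) (ht : TopAt 𝔠 x ν) :
    ∃ g : ℝ, 0 < g ∧ g ≤ 1 ∧ ∀ p, x p ≠ 0 → 𝔠.act p = ν ∨ 𝔠.act p ≤ ν - g := by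
  classical
  have hfin := hx (ν - 1)
  set S : Finset ℝ := (hfin.toFinset.image fun p => 𝔠.act p).erase ν with hS
  rcases eq_or_ne S ∅ with hSe | hSe
  · refine ⟨1, one_pos, le_refl 1, fun p hp => ?_⟩
    rcases le_or_gt (𝔠.act p) (ν - 1) with h | h
    · exact Or.inr h
    · left
      by_contra hne
      have : 𝔠.act p ∈ S := Finset.mem_erase.2 ⟨hne, Finset.mem_image.2
        ⟨p, hfin.mem_toFinset.2 ⟨hp, h⟩, rfl⟩⟩
      rw [hSe] at this
      exact absurd this (Finset.notMem_empty _)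
  · have hne : S.Nonempty := Finset.nonempty_iff_ne_empty.2 hSe
    have hlt : S.max' hne < ν := by
      have hmem := S.max'_mem hne
      have h1 : S.max' hne ≠ ν := (Finset.mem_erase.1 hmem).1
      obtain ⟨p, hp, hact⟩ := Finset.mem_image.1 (Finset.mem_erase.1 hmem).2
      have hb : 𝔠.act p ≤ ν := ht.1 p (hfin.mem_toFinset.1 hp).1
      rw [hact] at hb
      exact lt_of_le_of_ne hb h1
    refine ⟨min 1 (ν - S.max' hne), lt_min one_pos (by linarith), min_le_left _ _,
      fun p hp => ?_⟩
    rcases le_or_gt (𝔠.act p) (ν - 1) with h | h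
    · exact Or.inr (le_trans h (by
        have : min 1 (ν - S.max' hne) ≤ 1 := min_le_left _ _
        linarith))
    · by_cases hne2 : 𝔠.act p = ν
      · exact Or.inl hne2
      · right
        have : 𝔠.act p ∈ S := Finset.mem_erase.2 ⟨hne2, Finset.mem_image.2
          ⟨p, hfin.mem_toFinset.2 ⟨hp, h⟩, rfl⟩⟩
        have h2 : 𝔠.act p ≤ S.max' hne := Finset.le_max' _ _ this
        have h3 : min 1 (ν - S.max' hne) ≤ ν - S.max' hne := min_le_right _ _
        linarith

/-- extraction of a finite generating subset of a spanning set, over a Noetherian ring -/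
lemma exists_finset_span {A' : Type*} [CommRing A'] [IsNoetherianRing A']
    {M : Type*} [AddCommGroup M] [Module A' M] [Module.Finite A' M] (S : Set M) :
    ∃ T : Finset M, ↑T ⊆ S ∧ Submodule.span A' (T : Set M) = Submodule.span A' S := by
  classical
  haveI : IsNoetherian A' M := isNoetherian_of_isNoetherianRing_of_finite A' M
  obtain ⟨F, hF⟩ := IsNoetherian.noetherian (Submodule.span A' S)
  have hmem : ∀ v ∈ F, ∃ t : Finset M, ↑t ⊆ S ∧ (v : M) ∈ Submodule.span A' (t : Set M) := by
    intro v hv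
    apply Submodule.mem_span_finite_of_mem_span
    rw [← hF]
    exact Submodule.subset_span hv
  choose t ht1 ht2 using hmem
  refine ⟨F.attach.biUnion (fun v => t v.1 v.2), ?_, le_antisymm ?_ ?_⟩
  · intro w hw
    obtain ⟨v, -, hvw⟩ := Finset.mem_biUnion.1 hw
    exact ht1 v.1 v.2 hvw
  · apply Submodule.span_le.2
    intro w hw
    obtain ⟨v, -, hvw⟩ := Finset.mem_biUnion.1 (by exact_mod_cast hw)
    exact Submodule.span_mono (ht1 v.1 v.2) (Submodule.subset_span hvw)
  · rw [← hF]
    apply Submodule.span_le.2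
    intro v hv
    have hv' : v ∈ F := by exact_mod_cast hv
    refine Submodule.span_mono ?_ (ht2 v hv')
    intro w hw
    exact Finset.mem_coe.2 (Finset.mem_biUnion.2 ⟨⟨v, hv'⟩, F.mem_attach _, hw⟩)

end Aux


/-! ### The key step: killing the top of an approximable chain, with uniform bounds -/

section Kill

variable [Nonempty P] (𝔠)

lemma exists_kill [Group.FG Γ] [IsNoetherianRing R] :
    ∃ KK δ : ℝ, 0 < δ ∧ δ ≤ 1 ∧ ∀ x ν, Approx 𝔠 x → TopAt 𝔠 x ν →
      ∃ h, IsFloerChain 𝔠.act h ∧ Bdd 𝔠 h (ν + KK) ∧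
        ∀ p, ν - δ < 𝔠.act p →
          (x - floerBdry 𝔠.bnd h) p = if 𝔠.act p = ν then 0 else x p := by
  classical
  haveI : Finite (MulAction.orbitRel.Quotient Γ P) := 𝔠.finiteOrbits
  haveI : Fintype (MulAction.orbitRel.Quotient Γ P) := Fintype.ofFinite _
  haveI : IsNoetherianRing (MonoidAlgebra R (Kg 𝔠)) := kg_noetherian (𝔠 := 𝔠)
  -- the generating sets of leading coordinates, one for each orbit class
  set V := MulAction.orbitRel.Quotient Γ P → MonoidAlgebra R (Kg 𝔠) with hV
  set gen : MulAction.orbitRel.Quotient Γ P → Set V := fun q₀ =>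
    {v | ∃ x, ∃ ν : ℝ, Approx 𝔠 x ∧ TopAt 𝔠 x ν ∧ refQ 𝔠 ν = q₀ ∧
      v = fun q => coord 𝔠 x ν q} with hgen
  have hspan : ∀ q₀, ∃ T : Finset V, ↑T ⊆ gen q₀ ∧
      Submodule.span (MonoidAlgebra R (Kg 𝔠)) (T : Set V) =
        Submodule.span (MonoidAlgebra R (Kg 𝔠)) (gen q₀) :=
    fun q₀ => exists_finset_span (gen q₀)
  choose T hTsub hTspan using hspan
  -- data attached to each generator
  have hwit : ∀ q₀, ∀ v ∈ T q₀, ∃ x, ∃ ν : ℝ, Approx 𝔠 x ∧ TopAt 𝔠 x ν ∧ refQ 𝔠 ν = q₀ ∧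
      v = fun q => coord 𝔠 x ν q := fun q₀ v hv => hTsub q₀ hv
  choose xg νg hgApp hgTop hgRef hgCoord using hwit
  -- chosen approximants to depth ν - 1
  have happ : ∀ q₀, ∀ v, ∀ hv : v ∈ T q₀, ∃ hh, IsFloerChain 𝔠.act hh ∧
      Bdd 𝔠 (xg q₀ v hv - floerBdry 𝔠.bnd hh) (νg q₀ v hv - 1) := by
    intro q₀ v hv
    exact (hgApp q₀ v hv).2 (νg q₀ v hv - 1)
  choose hg hgIsc hgBdd using happ
  -- level bounds for the approximants
  have hbnd : ∀ q₀, ∀ v, ∀ hv : v ∈ T q₀, ∃ τ : ℝ, Bdd 𝔠 (hg q₀ v hv) τ := by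
    intro q₀ v hv
    exact isc_bdd (hgIsc q₀ v hv)
  choose τg hτg using hbnd
  -- gaps below the top for the generators
  have hgap : ∀ q₀, ∀ v, ∀ hv : v ∈ T q₀, ∃ g : ℝ, 0 < g ∧ g ≤ 1 ∧
      ∀ p, xg q₀ v hv p ≠ 0 →
        𝔠.act p = νg q₀ v hv ∨ 𝔠.act p ≤ νg q₀ v hv - g := by
    intro q₀ v hv
    exact exists_gap 𝔠 (hgApp q₀ v hv).1 (hgTop q₀ v hv)
  choose gg hgg0 hgg1 hggap using hgap
  -- the global constants
  set scoreSet : Finset ℝ := insert (0 : ℝ)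
    ((Finset.univ : Finset (MulAction.orbitRel.Quotient Γ P)).biUnion fun q₀ =>
      (T q₀).attach.image fun v => τg q₀ v.1 v.2 - νg q₀ v.1 v.2) with hscore
  set gapSet : Finset ℝ := insert (1 : ℝ)
    ((Finset.univ : Finset (MulAction.orbitRel.Quotient Γ P)).biUnion fun q₀ =>
      (T q₀).attach.image fun v => gg q₀ v.1 v.2) with hgapset
  have hscoreNe : scoreSet.Nonempty := ⟨0, Finset.mem_insert_self _ _⟩
  have hgapNe : gapSet.Nonempty := ⟨1, Finset.mem_insert_self _ _⟩
  set KK := scoreSet.max' hscoreNe with hKK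
  set δ := gapSet.min' hgapNe with hδdef
  have hδ1 : δ ≤ 1 := Finset.min'_le _ _ (Finset.mem_insert_self _ _)
  refine ⟨KK, δ, ?_, hδ1, ?_⟩
  · -- 0 < δ
    rw [hδdef, Finset.lt_min'_iff]
    intro b hb
    rcases Finset.mem_insert.1 hb with h | h
    · rw [h]; exact one_pos
    · obtain ⟨q₀, -, hv⟩ := Finset.mem_biUnion.1 h
      obtain ⟨v, -, hvv⟩ := Finset.mem_image.1 hv
      rw [← hvv]
      exact hgg0 q₀ v.1 v.2
  · -- the main statement
    intro x ν hApp hTop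
    have hcls : (clsSet 𝔠 ν).Nonempty := topAt_cls 𝔠 hTop
    set q₀ := refQ 𝔠 ν with hq₀
    -- membership of the leading coordinates in the span of the generators
    have hmem : (fun q => coord 𝔠 x ν q) ∈
        Submodule.span (MonoidAlgebra R (Kg 𝔠)) ((T q₀ : Set V)) := by
      rw [hTspan]
      exact Submodule.subset_span ⟨x, ν, hApp, hTop, rfl, rfl⟩
    obtain ⟨f, -, hf⟩ := Submodule.mem_span_finset.1 hmem
    -- the coherent translations
    set β : ∀ v, v ∈ T q₀ → Γ := fun v hv => (gsh 𝔠 ν)⁻¹ * gsh 𝔠 (νg q₀ v hv) with hβ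
    have hlrel : ∀ v (hv : v ∈ T q₀), lrel 𝔠 (νg q₀ v hv) ν := fun v hv =>
      lrel_of_refQ_eq 𝔠 (topAt_cls 𝔠 (hgTop q₀ v hv)) hcls ((hgRef q₀ v hv).trans hq₀)
    have hperβ : ∀ v (hv : v ∈ T q₀), 𝔠.per (β v hv) = νg q₀ v hv - ν := fun v hv =>
      per_beta 𝔠 (topAt_cls 𝔠 (hgTop q₀ v hv)) hcls (hlrel v hv)
    -- the correcting chain, the kill chain and the error chain
    set h : P → R := ∑ v ∈ (T q₀).attach, mact 𝔠 (f v.1) (sh (β v.1 v.2) (hg q₀ v.1 v.2))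
      with hh
    set y : P → R := ∑ v ∈ (T q₀).attach, mact 𝔠 (f v.1) (sh (β v.1 v.2) (xg q₀ v.1 v.2))
      with hy
    set e : P → R := ∑ v ∈ (T q₀).attach, mact 𝔠 (f v.1)
      (sh (β v.1 v.2) (xg q₀ v.1 v.2 - floerBdry 𝔠.bnd (hg q₀ v.1 v.2))) with he
    have hIscH : IsFloerChain 𝔠.act h :=
      isc_finsetSum 𝔠 _ _ fun v _ => isc_mact 𝔠 _ (isc_sh _ (hgIsc q₀ v.1 v.2))
    have hIscY : IsFloerChain 𝔠.act y :=
      isc_finsetSum 𝔠 _ _ fun v _ => isc_mact 𝔠 _ (isc_sh _ (hgApp q₀ v.1 v.2).1)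
    -- D h = y - e
    have hDh : floerBdry 𝔠.bnd h = y - e := by
      rw [hh, D_finsetSum 𝔠 _ _ fun v _ => isc_mact 𝔠 _ (isc_sh _ (hgIsc q₀ v.1 v.2)),
        hy, he, ← Finset.sum_sub_distrib]
      apply Finset.sum_congr rfl
      intro v _
      rw [D_mact 𝔠 _ (isc_sh _ (hgIsc q₀ v.1 v.2)), D_sh, ← mact_sub, ← sh_sub]
      congr 1
      rw [sub_sub_cancel]
    -- the error term is bounded by ν - 1
    have hEbdd : Bdd 𝔠 e (ν - 1) := by
      rw [he]
      apply bdd_finsetSum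
      intro v _
      apply bdd_mact
      have h1 := (hgBdd q₀ v.1 v.2).sh (β v.1 v.2)
      rw [hperβ v.1 v.2] at h1
      have h2 : νg q₀ v.1 v.2 - 1 - (νg q₀ v.1 v.2 - ν) = ν - 1 := by ring
      rwa [h2] at h1
    -- δ is below every gap of this class
    have hδg : ∀ v (hv : v ∈ T q₀), δ ≤ gg q₀ v hv := by
      intro v hv
      apply Finset.min'_le
      apply Finset.mem_insert_of_mem
      exact Finset.mem_biUnion.2 ⟨q₀, Finset.mem_univ _,
        Finset.mem_image.2 ⟨⟨v, hv⟩, Finset.mem_attach _ _, rfl⟩⟩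
    -- the kill chain vanishes close below the top level and above it
    have hYvanish : ∀ p, ν - δ < 𝔠.act p → 𝔠.act p ≠ ν → y p = 0 := by
      intro p hp hpν
      rw [hy, Finset.sum_apply]
      apply Finset.sum_eq_zero
      intro v _
      rw [mact_apply]
      apply Finset.sum_eq_zero
      intro k _
      rw [sh_apply]
      rcases eq_or_ne (xg q₀ v.1 v.2 ((β v.1 v.2)⁻¹ • (k : Γ)⁻¹ • p)) 0 with h0 | h0
      · rw [h0, mul_zero]
      · exfalso
        have hact : 𝔠.act ((β v.1 v.2)⁻¹ • (k : Γ)⁻¹ • p) =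
            𝔠.act p + (νg q₀ v.1 v.2 - ν) := by
          rw [act_inv_smul, act_inv_smul, per_kg, hperβ v.1 v.2]
          ring
        rcases hggap q₀ v.1 v.2 _ h0 with h1 | h1
        · rw [hact] at h1
          exact hpν (by linarith)
        · rw [hact] at h1
          have := hδg v.1 v.2
          linarith
    -- the kill chain agrees with `x` at the top level
    have hYtop : ∀ p, 𝔠.act p = ν → y p = x p := by
      intro p hp
      obtain ⟨k₀, hk₀⟩ := exists_kg_smul_sig 𝔠 hp
      have hcoordy : ∀ q, coord 𝔠 y ν q = coord 𝔠 x ν q := by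
        intro q
        rw [hy, coord_finsetSum 𝔠 _ _
          (fun v _ => isc_mact 𝔠 _ (isc_sh _ (hgApp q₀ v.1 v.2).1)) ν q]
        have hterm : ∀ v : {v // v ∈ T q₀},
            coord 𝔠 (mact 𝔠 (f v.1) (sh (β v.1 v.2) (xg q₀ v.1 v.2))) ν q
              = (f v.1 • v.1) q := by
          intro v
          rw [coord_mact 𝔠 (isc_sh _ (hgApp q₀ v.1 v.2).1),
            coord_sh_beta 𝔠 (hgApp q₀ v.1 v.2).1 (hlrel v.1 v.2) q,
            Pi.smul_apply, smul_eq_mul]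
          congr 1
          conv_rhs => rw [hgCoord q₀ v.1 v.2]
        rw [Finset.sum_congr rfl fun v _ => hterm v, ← Finset.sum_apply,
          Finset.sum_attach (T q₀) (fun i => f i • i), hf]
      have h4 : (coord 𝔠 y ν (qm p)).coeff k₀ = y p := by
        rw [coord_apply 𝔠 hIscY, hk₀]
      rw [← h4, hcoordy, coord_apply 𝔠 hApp.1, hk₀]
    -- conclusion
    refine ⟨h, hIscH, ?_, ?_⟩
    · rw [hh]
      apply bdd_finsetSum
      intro v _
      apply bdd_mact
      have h1 := (hτg q₀ v.1 v.2).sh (β v.1 v.2)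
      rw [hperβ v.1 v.2] at h1
      have h3 : τg q₀ v.1 v.2 - νg q₀ v.1 v.2 ≤ KK := by
        apply Finset.le_max'
        apply Finset.mem_insert_of_mem
        exact Finset.mem_biUnion.2 ⟨q₀, Finset.mem_univ _,
          Finset.mem_image.2 ⟨⟨v.1, v.2⟩, Finset.mem_attach _ _, rfl⟩⟩
      exact h1.mono (by linarith)
    · intro p hpδ
      have hxDh : (x - floerBdry 𝔠.bnd h) p = x p - y p + e p := by
        rw [hDh]
        show x p - (y - e) p = x p - y p + e p
        rw [Pi.sub_apply]
        ring
      have hep : e p = 0 := by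
        by_contra h0
        have := hEbdd p h0
        linarith
      by_cases hpν : 𝔠.act p = ν
      · rw [if_pos hpν, hxDh, hYtop p hpν, hep]
        ring
      · rw [if_neg hpν, hxDh, hYvanish p hpδ hpν, hep]
        ring

end Kill


/-! ### The uniform level-decreasing step -/

section Step

variable [Nonempty P] (𝔠)

lemma exists_step [Group.FG Γ] [IsNoetherianRing R] :
    ∃ KK δ : ℝ, 0 < δ ∧ ∀ x ν, Approx 𝔠 x → Bdd 𝔠 x ν →
      ∃ h, IsFloerChain 𝔠.act h ∧ Bdd 𝔠 h (ν + KK) ∧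
        Bdd 𝔠 (x - floerBdry 𝔠.bnd h) (ν - δ) := by
  classical
  obtain ⟨KK, δ, hδ0, hδ1, hkill⟩ := exists_kill 𝔠
  refine ⟨KK, δ, hδ0, ?_⟩
  intro x ν hx hb
  have key : ∀ n : ℕ, ∀ x, Approx 𝔠 x → Bdd 𝔠 x ν →
      (𝔠.act '' {p | x p ≠ 0 ∧ ν - δ < 𝔠.act p}).ncard ≤ n →
      ∃ h, IsFloerChain 𝔠.act h ∧ Bdd 𝔠 h (ν + KK) ∧
        Bdd 𝔠 (x - floerBdry 𝔠.bnd h) (ν - δ) := by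
    intro n
    induction n with
    | zero =>
      intro x hx hb hc
      have hfin : ({p | x p ≠ 0 ∧ ν - δ < 𝔠.act p}).Finite := hx.1 (ν - δ)
      have hemp : 𝔠.act '' {p | x p ≠ 0 ∧ ν - δ < 𝔠.act p} = ∅ := by
        rw [← Set.ncard_eq_zero (hfin.image _)]
        omega
      have hemp2 : {p | x p ≠ 0 ∧ ν - δ < 𝔠.act p} = ∅ := by
        rw [← Set.image_eq_empty (f := 𝔠.act)]
        exact hemp
      refine ⟨0, isc_zero, bdd_zero (𝔠 := 𝔠) _, ?_⟩
      rw [D_zero, sub_zero]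
      intro p hp
      by_contra hgt
      push_neg at hgt
      have : p ∈ ({p | x p ≠ 0 ∧ ν - δ < 𝔠.act p} : Set P) := ⟨hp, hgt⟩
      rw [hemp2] at this
      exact this
    | succ n ih =>
      intro x hx hb hc
      have hfin : ({p | x p ≠ 0 ∧ ν - δ < 𝔠.act p}).Finite := hx.1 (ν - δ)
      have hfinL : (𝔠.act '' {p | x p ≠ 0 ∧ ν - δ < 𝔠.act p}).Finite := hfin.image _
      rcases Set.eq_empty_or_nonempty {p | x p ≠ 0 ∧ ν - δ < 𝔠.act p} with hemp | hne
      · -- empty window: already done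
        refine ⟨0, isc_zero, bdd_zero (𝔠 := 𝔠) _, ?_⟩
        rw [D_zero, sub_zero]
        intro p hp
        by_contra hgt
        push_neg at hgt
        have : p ∈ ({p | x p ≠ 0 ∧ ν - δ < 𝔠.act p} : Set P) := ⟨hp, hgt⟩
        rw [hemp] at this
        exact this
      · -- kill the top window level
        set F := hfinL.toFinset with hF
        have hFne : F.Nonempty := by
          rw [hF, Set.Finite.toFinset_nonempty]
          exact hne.image _
        set νt := F.max' hFne with hνt
        have hνtmem : νt ∈ 𝔠.act '' {p | x p ≠ 0 ∧ ν - δ < 𝔠.act p} := by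
          have h0 : νt ∈ hfinL.toFinset := F.max'_mem hFne
          exact Set.Finite.mem_toFinset hfinL |>.1 h0
        obtain ⟨pt, hpt, hptν⟩ := hνtmem
        have hνtδ : ν - δ < νt := by rw [← hptν]; exact hpt.2
        have hνtν : νt ≤ ν := by rw [← hptν]; exact hb pt hpt.1
        have hTop : TopAt 𝔠 x νt := by
          refine ⟨?_, pt, hpt.1, hptν⟩
          intro p hp
          rcases le_or_gt (𝔠.act p) (ν - δ) with h | h
          · linarith
          · apply F.le_max' _
            rw [hF, Set.Finite.mem_toFinset]
            exact ⟨p, ⟨hp, h⟩, rfl⟩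
        obtain ⟨h₁, hIsc₁, hBdd₁, hpt₁⟩ := hkill x νt hx hTop
        set x' := x - floerBdry 𝔠.bnd h₁ with hx'
        have hx'App : Approx 𝔠 x' := hx.subD hIsc₁
        have hx'Bdd : Bdd 𝔠 x' ν := by
          intro p hp
          rcases le_or_gt (𝔠.act p) (νt - δ) with h | h
          · linarith
          · have := hpt₁ p h
            rcases eq_or_ne (𝔠.act p) νt with he | he
            · rw [if_pos he] at this
              exact absurd this hp
            · rw [if_neg he] at this
              rw [this] at hp
              exact hb p hp
        have hsub : 𝔠.act '' {p | x' p ≠ 0 ∧ ν - δ < 𝔠.act p} ⊆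
            (𝔠.act '' {p | x p ≠ 0 ∧ ν - δ < 𝔠.act p}) \ {νt} := by
          rintro lv ⟨p, ⟨hp, hpδ⟩, rfl⟩
          have hgt : νt - δ < 𝔠.act p := by linarith
          have := hpt₁ p hgt
          rcases eq_or_ne (𝔠.act p) νt with he | he
          · rw [if_pos he] at this
            exact absurd this hp
          · rw [if_neg he] at this
            refine ⟨⟨p, ⟨?_, hpδ⟩, rfl⟩, he⟩
            rw [← this]
            exact hp
        have hcard : (𝔠.act '' {p | x' p ≠ 0 ∧ ν - δ < 𝔠.act p}).ncard ≤ n := by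
          have h1 : ((𝔠.act '' {p | x p ≠ 0 ∧ ν - δ < 𝔠.act p}) \ {νt}).ncard ≤ n := by
            have h2 := Set.ncard_diff_singleton_of_mem
              (by exact ⟨pt, hpt, hptν⟩ : νt ∈ 𝔠.act '' {p | x p ≠ 0 ∧ ν - δ < 𝔠.act p})
            omega
          exact le_trans (Set.ncard_le_ncard hsub hfinL.diff) h1
        obtain ⟨h₂, hIsc₂, hBdd₂, hBddx₂⟩ := ih x' hx'App hx'Bdd hcard
        refine ⟨h₁ + h₂, isc_add hIsc₁ hIsc₂, ?_, ?_⟩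
        · exact (hBdd₁.mono (by linarith)).add hBdd₂
        · rw [D_add hIsc₁ hIsc₂]
          have heq : x - (floerBdry 𝔠.bnd h₁ + floerBdry 𝔠.bnd h₂) =
              x' - floerBdry 𝔠.bnd h₂ := by
            rw [hx']
            abel
          rw [heq]
          exact hBddx₂
  exact key _ x hx hb le_rfl

end Step


/-! ### The limit construction: an approximable chain is a boundary -/

section Limit

lemma finsum_nat_split {M : Type*} [AddCommMonoid M] (f : ℕ → M)
    (hf : (Function.support f).Finite) (N : ℕ) :
    ∑ᶠ n, f n = (∑ n ∈ Finset.range N, f n) + ∑ᶠ n, f (N + n) := by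
  classical
  obtain ⟨B, hB⟩ : ∃ B, ∀ n ∈ Function.support f, n < B := by
    rcases hf.bddAbove with ⟨B, hB⟩
    exact ⟨B + 1, fun n hn => Nat.lt_succ_of_le (hB hn)⟩
  have h1 : ∑ᶠ n, f n = ∑ n ∈ Finset.range (N + B), f n := by
    apply finsum_eq_sum_of_support_subset
    intro n hn
    simp only [Finset.coe_range, Set.mem_Iio]
    exact lt_of_lt_of_le (hB n hn) (le_add_self)
  have h2 : ∑ᶠ n, f (N + n) = ∑ n ∈ Finset.range B, f (N + n) := by
    apply finsum_eq_sum_of_support_subset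
    intro n hn
    have hn' : N + n ∈ Function.support f := hn
    simp only [Finset.coe_range, Set.mem_Iio]
    have := hB _ hn'
    omega
  rw [h1, h2, Finset.sum_range_add]

variable (𝔠)

lemma approx_is_boundary [Nonempty P] [Group.FG Γ] [IsNoetherianRing R] {c₀ : P → R}
    (hApp : Approx 𝔠 c₀) : ∃ H, IsFloerChain 𝔠.act H ∧ floerBdry 𝔠.bnd H = c₀ := by
  classical
  obtain ⟨KK, δ, hδ0, hstep⟩ := exists_step 𝔠
  obtain ⟨ν₀, hν₀⟩ := isc_bdd hApp.1
  set pick : (P → R) → ℝ → (P → R) := fun x ν =>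
    if hx : Approx 𝔠 x ∧ Bdd 𝔠 x ν then (hstep x ν hx.1 hx.2).choose else 0 with hpick
  set X : ℕ → (P → R) := fun n =>
    Nat.rec c₀ (fun m xm => xm - floerBdry 𝔠.bnd (pick xm (ν₀ - m * δ))) n with hX
  set Hs : ℕ → (P → R) := fun n => pick (X n) (ν₀ - n * δ) with hHs
  have hXsucc : ∀ n, X (n + 1) = X n - floerBdry 𝔠.bnd (Hs n) := fun n => rfl
  -- the invariant
  have hinv : ∀ n, Approx 𝔠 (X n) ∧ Bdd 𝔠 (X n) (ν₀ - n * δ) := by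
    intro n
    induction n with
    | zero => exact ⟨hApp, by show Bdd 𝔠 c₀ _; simpa using hν₀⟩
    | succ n ih =>
      have hHseq : Hs n = (hstep (X n) (ν₀ - n * δ) ih.1 ih.2).choose := by
        show (if hx : Approx 𝔠 (X n) ∧ Bdd 𝔠 (X n) (ν₀ - n * δ) then
          (hstep (X n) (ν₀ - n * δ) hx.1 hx.2).choose else 0) = _
        rw [dif_pos ⟨ih.1, ih.2⟩]
      have spec := (hstep (X n) (ν₀ - n * δ) ih.1 ih.2).choose_spec
      constructor
      · rw [hXsucc n, hHseq]
        exact ih.1.subD spec.1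
      · rw [hXsucc n, hHseq]
        apply (spec.2.2).mono
        push_cast
        ring_nf
        linarith [hδ0]
  have hHseq : ∀ n, Hs n = (hstep (X n) (ν₀ - n * δ) (hinv n).1 (hinv n).2).choose := by
    intro n
    show (if hx : Approx 𝔠 (X n) ∧ Bdd 𝔠 (X n) (ν₀ - n * δ) then
      (hstep (X n) (ν₀ - n * δ) hx.1 hx.2).choose else 0) = _
    rw [dif_pos ⟨(hinv n).1, (hinv n).2⟩]
  have hHsIsc : ∀ n, IsFloerChain 𝔠.act (Hs n) := by
    intro n
    rw [hHseq n]
    exact ((hstep (X n) (ν₀ - n * δ) (hinv n).1 (hinv n).2).choose_spec).1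
  have hHsBdd : ∀ n, Bdd 𝔠 (Hs n) (ν₀ - n * δ + KK) := by
    intro n
    rw [hHseq n]
    exact ((hstep (X n) (ν₀ - n * δ) (hinv n).1 (hinv n).2).choose_spec).2.1
  -- pointwise finiteness of the series
  have hptfin : ∀ p, (Function.support fun n => Hs n p).Finite := by
    intro p
    obtain ⟨N, hN⟩ := exists_nat_gt ((ν₀ + KK - 𝔠.act p) / δ)
    apply (Finset.range N).finite_toSet.subset
    intro n hn
    have h1 : 𝔠.act p ≤ ν₀ - n * δ + KK := hHsBdd n p hn
    simp only [Finset.coe_range, Set.mem_Iio]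
    by_contra hlt
    push_neg at hlt
    have h2 : (N : ℝ) ≤ (n : ℝ) := Nat.cast_le.2 hlt
    rw [div_lt_iff₀ hδ0] at hN
    nlinarith
  set H : P → R := fun p => ∑ᶠ n, Hs n p with hHdef
  -- H is a Floer chain
  have hHIsc : IsFloerChain 𝔠.act H := by
    intro C
    obtain ⟨N, hN⟩ := exists_nat_gt ((ν₀ + KK - C) / δ)
    rw [div_lt_iff₀ hδ0] at hN
    have hsub : {p : P | H p ≠ 0 ∧ C < 𝔠.act p} ⊆
        ⋃ n ∈ Finset.range N, {p : P | Hs n p ≠ 0 ∧ C < 𝔠.act p} := by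
      rintro p ⟨hp, hC⟩
      have : ∃ n, Hs n p ≠ 0 := by
        by_contra hall
        push_neg at hall
        exact hp (finsum_eq_zero_of_forall_eq_zero hall)
      obtain ⟨n, hn⟩ := this
      have h1 : 𝔠.act p ≤ ν₀ - n * δ + KK := hHsBdd n p hn
      have h2 : n < N := by
        by_contra hge
        push_neg at hge
        have h3 : (N : ℝ) ≤ (n : ℝ) := Nat.cast_le.2 hge
        nlinarith
      exact Set.mem_biUnion (Finset.mem_range.2 h2) ⟨hn, hC⟩
    exact (Set.Finite.biUnion (Finset.range N).finite_toSet
      fun n _ => hHsIsc n C).subset hsub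
  -- splitting into partial sums and tails
  have hsplit : ∀ (N : ℕ) (p : P),
      H p = (∑ n ∈ Finset.range N, Hs n p) + ∑ᶠ n, Hs (N + n) p := by
    intro N p
    exact finsum_nat_split _ (hptfin p) N
  have htailBdd : ∀ N : ℕ, Bdd 𝔠 (fun p => ∑ᶠ n, Hs (N + n) p) (ν₀ - N * δ + KK) := by
    intro N p hp
    have : ∃ n, Hs (N + n) p ≠ 0 := by
      by_contra hall
      push_neg at hall
      exact hp (finsum_eq_zero_of_forall_eq_zero hall)
    obtain ⟨n, hn⟩ := this
    have h1 : 𝔠.act p ≤ ν₀ - (N + n) * δ + KK := by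
      have := hHsBdd (N + n) p hn
      push_cast at this ⊢
      linarith
    have h2 : (N : ℝ) * δ ≤ ((N : ℝ) + (n : ℝ)) * δ := by
      apply mul_le_mul_of_nonneg_right _ (le_of_lt hδ0)
      linarith [Nat.cast_nonneg (α := ℝ) n]
    linarith
  have hHeq : ∀ N : ℕ, H = (∑ n ∈ Finset.range N, Hs n) + fun p => ∑ᶠ n, Hs (N + n) p := by
    intro N
    funext p
    rw [Pi.add_apply, Finset.sum_apply]
    exact hsplit N p
  have htailIsc : ∀ N : ℕ, IsFloerChain 𝔠.act (fun p => ∑ᶠ n, Hs (N + n) p) := by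
    intro N
    have heq2 : (fun p => ∑ᶠ n, Hs (N + n) p) =
        H - ∑ n ∈ Finset.range N, Hs n := by
      funext p
      rw [Pi.sub_apply, Finset.sum_apply, hsplit N p]
      ring
    rw [heq2]
    exact isc_sub hHIsc (isc_finsetSum 𝔠 _ _ fun n _ => hHsIsc n)
  -- the partial sums recover X
  have hXN : ∀ N : ℕ, X N = c₀ - floerBdry 𝔠.bnd (∑ n ∈ Finset.range N, Hs n) := by
    intro N
    induction N with
    | zero =>
      rw [Finset.range_zero, Finset.sum_empty, D_zero, sub_zero]
      rfl
    | succ N ih =>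
      rw [hXsucc N, ih, Finset.sum_range_succ,
        D_add (isc_finsetSum 𝔠 _ _ fun n _ => hHsIsc n) (hHsIsc N)]
      abel
  -- the boundary of H is c₀
  have hfinal : ∀ C : ℝ, Bdd 𝔠 (c₀ - floerBdry 𝔠.bnd H) C := by
    intro C
    obtain ⟨N, hN⟩ := exists_nat_gt (max ((ν₀ - C) / δ) ((ν₀ + KK - C) / δ))
    have hN1 : (ν₀ - C) / δ < N := lt_of_le_of_lt (le_max_left _ _) hN
    have hN2 : (ν₀ + KK - C) / δ < N := lt_of_le_of_lt (le_max_right _ _) hN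
    rw [div_lt_iff₀ hδ0] at hN1 hN2
    have hkey : c₀ - floerBdry 𝔠.bnd H =
        X N - floerBdry 𝔠.bnd (fun p => ∑ᶠ n, Hs (N + n) p) := by
      rw [hXN N]
      conv_lhs => rw [hHeq N]
      rw [D_add (isc_finsetSum 𝔠 _ _ fun n _ => hHsIsc n) (htailIsc N)]
      abel
    rw [hkey]
    apply Bdd.sub
    · exact ((hinv N).2).mono (by linarith)
    · exact ((htailBdd N).D).mono (by linarith)
  refine ⟨H, hHIsc, ?_⟩
  have h0 := eq_zero_of_forall_bdd hfinal
  have h1 : c₀ = floerBdry 𝔠.bnd H := by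
    have := sub_eq_zero.1 h0
    exact this
  exact h1.symm

end Limit


end FloerProof

open FloerProof

/-- over a Noetherian ring, the spectral number
`ρ(a) = inf {ℓ(c) : [c] = a}` of any nonzero homology class `a = [c₀]` is
finite, i.e. `ρ(a) > -∞`. -/
theorem spectral_number_finite [Group.FG Γ] [IsNoetherianRing R]
    (𝔠 : FloerComplex R Γ P) (c₀ : P → R)
    (hchain : IsFloerChain 𝔠.act c₀) (hcycle : floerBdry 𝔠.bnd c₀ = 0)
    (hnonzero : ¬ ∃ h : P → R, IsFloerChain 𝔠.act h ∧ floerBdry 𝔠.bnd h = c₀) :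
    ⊥ < sInf (repLevels 𝔠 c₀) := by
  by_contra hlow
  have hbot : sInf (repLevels 𝔠 c₀) = ⊥ := by
    rwa [bot_lt_iff_ne_bot, not_ne_iff] at hlow
  cases isEmpty_or_nonempty P with
  | inl hP =>
    exact hnonzero ⟨0, isc_zero, by funext p; exact (hP.false p).elim⟩
  | inr hP =>
    have hApp : Approx 𝔠 c₀ := by
      refine ⟨hchain, fun μ => ?_⟩
      have hlt : sInf (repLevels 𝔠 c₀) < (μ : EReal) := by
        rw [hbot]
        exact EReal.bot_lt_coe μ
      obtain ⟨xE, hxE, hxlt⟩ := sInf_lt_iff.1 hlt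
      obtain ⟨c, hcIsc, hccyc, ⟨hh, hhIsc, hhD⟩, hxlev⟩ := hxE
      refine ⟨-hh, isc_neg hhIsc, ?_⟩
      have hD : floerBdry 𝔠.bnd (-hh) = -(c - c₀) := by rw [D_neg, hhD]
      have hceq : c₀ - floerBdry 𝔠.bnd (-hh) = c := by
        rw [hD]
        abel
      rw [hceq]
      intro p hp
      have h1 : (𝔠.act p : EReal) ≤ floerLevel 𝔠.act c := by
        rw [floerLevel]
        exact le_iSup₂ (f := fun p (_ : p ∈ {p : P | c p ≠ 0}) => (𝔠.act p : EReal)) p hp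
      rw [← hxlev] at h1
      have h2 : (𝔠.act p : EReal) < (μ : EReal) := lt_of_le_of_lt h1 hxlt
      exact le_of_lt (EReal.coe_lt_coe_iff.1 h2)
    obtain ⟨H, hHIsc, hHD⟩ := approx_is_boundary 𝔠 hApp
    exact hnonzero ⟨H, hHIsc, hHD⟩
end
end

section
/- Let 𝔠 be a filtered Floer-Novikov complex over a Noetherian ring R. Then there exists M ∈ ℝ such that for any boundary c ∈ C_*(𝔠) (i.e., [c] = 0) there is h ∈ C_*(𝔠) with ∂h = c and ℓ(h) ≤ ℓ(c) + M. -/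
noncomputable section

open Filter

variable {R : Type*} [CommRing R] {Γ : Type*} [CommGroup Γ] {P : Type*} [MulAction Γ P]

/-! ### Auxiliary development -/

/-- convolution action of a group-ring element on a chain -/
def smc (m : MonoidAlgebra R Γ) (c : P → R) : P → R :=
  fun p => m.coeff.sum fun h r => r * c (h⁻¹ • p)

namespace FloerComplex

variable (𝔠 : FloerComplex R Γ P)

theorem per_one : 𝔠.per 1 = 0 := by
  have := 𝔠.per_hom 1 1; simpa using this.symm

theorem per_inv (g : Γ) : 𝔠.per g⁻¹ = - 𝔠.per g := by
  have := 𝔠.per_hom g g⁻¹; rw [mul_inv_cancel, 𝔠.per_one] at this; linarith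

theorem act_inv_smul (g : Γ) (p : P) : 𝔠.act (g⁻¹ • p) = 𝔠.act p + 𝔠.per g := by
  rw [𝔠.act_smul, 𝔠.per_inv]; ring

/-- the (real-valued) filtration level of a chain -/
def lvl (c : P → R) : ℝ := sSup (𝔠.act '' Function.support c)

theorem exists_ne_zero {c : P → R} (h0 : c ≠ 0) : ∃ p, c p ≠ 0 := by
  by_contra h; push_neg at h; exact h0 (funext fun p => h p)

theorem lvl_isGreatest {c : P → R} (hc : IsFloerChain 𝔠.act c) (h0 : c ≠ 0) :
    IsGreatest (𝔠.act '' Function.support c) (𝔠.lvl c) := by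
  obtain ⟨p₀, hp₀⟩ := exists_ne_zero h0
  have hS : {p : P | c p ≠ 0 ∧ 𝔠.act p₀ - 1 < 𝔠.act p}.Finite := hc _
  have hne : (hS.toFinset.image 𝔠.act).Nonempty :=
    ⟨𝔠.act p₀, Finset.mem_image_of_mem _ (hS.mem_toFinset.2 ⟨hp₀, by linarith⟩)⟩
  set m := (hS.toFinset.image 𝔠.act).max' hne with hm
  have hub : ∀ p, c p ≠ 0 → 𝔠.act p ≤ m := by
    intro p hp
    rcases le_or_gt (𝔠.act p) (𝔠.act p₀ - 1) with h | h
    · have : 𝔠.act p₀ ≤ m :=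
        Finset.le_max' _ _ (Finset.mem_image_of_mem _ (hS.mem_toFinset.2 ⟨hp₀, by linarith⟩))
      linarith
    · exact Finset.le_max' _ _ (Finset.mem_image_of_mem _ (hS.mem_toFinset.2 ⟨hp, h⟩))
  have hmem : m ∈ 𝔠.act '' Function.support c := by
    have h1 := (hS.toFinset.image 𝔠.act).max'_mem hne
    rw [Finset.mem_image] at h1
    obtain ⟨p, hp, hpm⟩ := h1
    exact ⟨p, (hS.mem_toFinset.1 hp).1, hpm⟩
  have hg : IsGreatest (𝔠.act '' Function.support c) m :=
    ⟨hmem, by rintro x ⟨p, hp, rfl⟩; exact hub p hp⟩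
  have : 𝔠.lvl c = m := hg.csSup_eq
  rw [this]; exact hg

theorem le_lvl {c : P → R} (hc : IsFloerChain 𝔠.act c) (h0 : c ≠ 0) {p : P}
    (hp : c p ≠ 0) : 𝔠.act p ≤ 𝔠.lvl c :=
  (𝔠.lvl_isGreatest hc h0).2 ⟨p, hp, rfl⟩

theorem exists_lvl {c : P → R} (hc : IsFloerChain 𝔠.act c) (h0 : c ≠ 0) :
    ∃ p, c p ≠ 0 ∧ 𝔠.act p = 𝔠.lvl c := by
  obtain ⟨p, hp, hpl⟩ := (𝔠.lvl_isGreatest hc h0).1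
  exact ⟨p, hp, hpl⟩

theorem floerLevel_eq {c : P → R} (hc : IsFloerChain 𝔠.act c) (h0 : c ≠ 0) :
    floerLevel 𝔠.act c = ((𝔠.lvl c : ℝ) : EReal) := by
  apply le_antisymm
  · exact iSup₂_le fun p hp => EReal.coe_le_coe_iff.2 (𝔠.le_lvl hc h0 hp)
  · obtain ⟨p, hp, hpl⟩ := 𝔠.exists_lvl hc h0
    exact le_iSup₂_of_le p hp (by rw [hpl])

theorem floerLevel_le {c : P → R} {t : ℝ} (h : ∀ p, c p ≠ 0 → 𝔠.act p ≤ t) :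
    floerLevel 𝔠.act c ≤ (t : EReal) :=
  iSup₂_le fun p hp => EReal.coe_le_coe_iff.2 (h p hp)

theorem isC_zero : IsFloerChain 𝔠.act (0 : P → R) := by
  intro C
  convert Set.finite_empty
  ext p; simp

theorem isC_sub {x y : P → R} (hx : IsFloerChain 𝔠.act x) (hy : IsFloerChain 𝔠.act y) :
    IsFloerChain 𝔠.act (x - y) := by
  intro C
  apply ((hx C).union (hy C)).subset
  rintro p ⟨hp, hC⟩
  by_cases h : x p ≠ 0
  · exact Or.inl ⟨h, hC⟩
  · push_neg at h
    refine Or.inr ⟨fun h' => hp ?_, hC⟩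
    simp [Pi.sub_apply, h, h']

theorem isC_sum {ι : Type*} (s : Finset ι) (f : ι → P → R)
    (hf : ∀ i ∈ s, IsFloerChain 𝔠.act (f i)) :
    IsFloerChain 𝔠.act (∑ i ∈ s, f i) := by
  classical
  induction s using Finset.induction_on with
  | empty => simpa using 𝔠.isC_zero
  | insert a s hni ih =>
    rw [Finset.sum_insert hni]
    have h1 := hf a (Finset.mem_insert_self a s)
    have h2 := ih (fun i hi => hf i (Finset.mem_insert_of_mem hi))
    -- a + b = a - (0 - b)
    have : f a + ∑ i ∈ s, f i = f a - (0 - ∑ i ∈ s, f i) := by ring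
    rw [this]
    exact 𝔠.isC_sub h1 (𝔠.isC_sub 𝔠.isC_zero h2)

end FloerComplex

theorem smc_zero_left {c : P → R} : smc (0 : MonoidAlgebra R Γ) c = 0 := by
  funext p; simp [smc]

theorem smc_apply_ne {m : MonoidAlgebra R Γ} {c : P → R} {p : P}
    (h : smc m c p ≠ 0) : ∃ g ∈ m.coeff.support, m.coeff g * c (g⁻¹ • p) ≠ 0 := by
  by_contra hno; push_neg at hno
  exact h (Finset.sum_eq_zero hno)

namespace FloerComplex

theorem isC_smc (𝔠 : FloerComplex R Γ P) {c : P → R} (hc : IsFloerChain 𝔠.act c)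
    (m : MonoidAlgebra R Γ) : IsFloerChain 𝔠.act (smc m c) := by
  intro C
  apply Set.Finite.subset
    (Set.Finite.biUnion m.coeff.support.finite_toSet
      (fun g _ => ((hc (C + 𝔠.per g)).image (fun q => g • q))))
  rintro p ⟨hp, hC⟩
  obtain ⟨g, hg, hcg⟩ := smc_apply_ne hp
  refine Set.mem_biUnion hg ⟨g⁻¹ • p, ⟨right_ne_zero_of_mul hcg, ?_⟩, smul_inv_smul g p⟩
  rw [𝔠.act_inv_smul]; linarith

end FloerComplex

/-! ### Boundary operator lemmas -/

theorem bdry_apply_eq_sum (𝔠 : FloerComplex R Γ P) (c : P → R) (q : P) {F : Finset P}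
    (hF : ∀ p, c p ≠ 0 → 𝔠.bnd p q ≠ 0 → p ∈ F) :
    floerBdry 𝔠.bnd c q = ∑ p ∈ F, c p * 𝔠.bnd p q := by
  apply finsum_eq_sum_of_support_subset
  intro p hp
  exact hF p (left_ne_zero_of_mul hp) (right_ne_zero_of_mul hp)

namespace FloerComplex

variable (𝔠 : FloerComplex R Γ P)

theorem bdry_zero : floerBdry 𝔠.bnd (0 : P → R) = 0 := by
  funext q; simp [floerBdry]

theorem bdry_sub {x y : P → R} (hx : IsFloerChain 𝔠.act x) (hy : IsFloerChain 𝔠.act y) :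
    floerBdry 𝔠.bnd (x - y) = floerBdry 𝔠.bnd x - floerBdry 𝔠.bnd y := by
  classical
  funext q
  have hfin : ({p : P | x p ≠ 0 ∧ 𝔠.act q < 𝔠.act p} ∪
      {p : P | y p ≠ 0 ∧ 𝔠.act q < 𝔠.act p}).Finite := (hx _).union (hy _)
  set F := hfin.toFinset with hFdef
  have hmemx : ∀ p, x p ≠ 0 → 𝔠.bnd p q ≠ 0 → p ∈ F := fun p h1 h2 =>
    hfin.mem_toFinset.2 (Or.inl ⟨h1, 𝔠.bnd_vanish p q h2⟩)
  have hmemy : ∀ p, y p ≠ 0 → 𝔠.bnd p q ≠ 0 → p ∈ F := fun p h1 h2 =>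
    hfin.mem_toFinset.2 (Or.inr ⟨h1, 𝔠.bnd_vanish p q h2⟩)
  have hmemxy : ∀ p, (x - y) p ≠ 0 → 𝔠.bnd p q ≠ 0 → p ∈ F := by
    intro p h1 h2
    by_cases hxp : x p ≠ 0
    · exact hmemx p hxp h2
    · push_neg at hxp
      apply hmemy p _ h2
      intro hyp; apply h1; simp [Pi.sub_apply, hxp, hyp]
  rw [Pi.sub_apply, bdry_apply_eq_sum 𝔠 _ q hmemxy, bdry_apply_eq_sum 𝔠 _ q hmemx,
    bdry_apply_eq_sum 𝔠 _ q hmemy, ← Finset.sum_sub_distrib]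
  apply Finset.sum_congr rfl
  intro p _
  rw [Pi.sub_apply, sub_mul]

theorem bdry_add {x y : P → R} (hx : IsFloerChain 𝔠.act x) (hy : IsFloerChain 𝔠.act y) :
    floerBdry 𝔠.bnd (x + y) = floerBdry 𝔠.bnd x + floerBdry 𝔠.bnd y := by
  have h1 : x + y = x - (0 - y) := by ring
  have h2 := 𝔠.bdry_sub hx (𝔠.isC_sub 𝔠.isC_zero hy)
  rw [h1, h2, 𝔠.bdry_sub 𝔠.isC_zero hy, 𝔠.bdry_zero]
  ring

theorem bdry_sum {ι : Type*} (s : Finset ι) (f : ι → P → R)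
    (hf : ∀ i ∈ s, IsFloerChain 𝔠.act (f i)) :
    floerBdry 𝔠.bnd (∑ i ∈ s, f i) = ∑ i ∈ s, floerBdry 𝔠.bnd (f i) := by
  classical
  induction s using Finset.induction_on with
  | empty => simpa using 𝔠.bdry_zero
  | insert a s hni ih =>
    rw [Finset.sum_insert hni, Finset.sum_insert hni,
      𝔠.bdry_add (hf a (Finset.mem_insert_self a s))
        (𝔠.isC_sum s f fun i hi => hf i (Finset.mem_insert_of_mem hi)),
      ih fun i hi => hf i (Finset.mem_insert_of_mem hi)]

theorem bdry_smc {c : P → R} (hc : IsFloerChain 𝔠.act c) (m : MonoidAlgebra R Γ) :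
    floerBdry 𝔠.bnd (smc m c) = smc m (floerBdry 𝔠.bnd c) := by
  classical
  funext q
  -- the sets T g and the big finset F
  have hT : ∀ g : Γ, {p : P | c (g⁻¹ • p) ≠ 0 ∧ 𝔠.act q < 𝔠.act p}.Finite := by
    intro g
    apply ((hc (𝔠.act q + 𝔠.per g)).image (fun p' => g • p')).subset
    rintro p ⟨h1, h2⟩
    refine ⟨g⁻¹ • p, ⟨h1, ?_⟩, smul_inv_smul g p⟩
    rw [𝔠.act_inv_smul]; linarith
  have hUf : (⋃ g ∈ (m.coeff.support : Set Γ), {p : P | c (g⁻¹ • p) ≠ 0 ∧ 𝔠.act q < 𝔠.act p}).Finite :=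
    Set.Finite.biUnion m.coeff.support.finite_toSet (fun g _ => hT g)
  set F := hUf.toFinset with hFdef
  have hsub : ∀ g ∈ m.coeff.support, ∀ p, c (g⁻¹ • p) ≠ 0 → 𝔠.bnd p q ≠ 0 → p ∈ F := by
    intro g hg p h1 h2
    exact hUf.mem_toFinset.2 (Set.mem_biUnion hg ⟨h1, 𝔠.bnd_vanish p q h2⟩)
  have hL : floerBdry 𝔠.bnd (smc m c) q = ∑ p ∈ F, smc m c p * 𝔠.bnd p q := by
    apply bdry_apply_eq_sum
    intro p h1 h2
    obtain ⟨g, hg, hcg⟩ := smc_apply_ne h1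
    exact hsub g hg p (right_ne_zero_of_mul hcg) h2
  rw [hL]
  -- expand smc and swap
  have hexp : ∀ p ∈ F, smc m c p * 𝔠.bnd p q
      = ∑ g ∈ m.coeff.support, m.coeff g * (c (g⁻¹ • p) * 𝔠.bnd p q) := by
    intro p _
    rw [smc, Finsupp.sum, Finset.sum_mul]
    apply Finset.sum_congr rfl
    intro g _; ring
  rw [Finset.sum_congr rfl hexp, Finset.sum_comm]
  -- now compute RHS
  rw [smc, Finsupp.sum]
  apply Finset.sum_congr rfl
  intro g hg
  rw [← Finset.mul_sum]
  congr 1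
  -- ∑ p ∈ F, c (g⁻¹ • p) * bnd p q = floerBdry c (g⁻¹ • q)
  have e : ∀ p' : P, c p' * 𝔠.bnd p' (g⁻¹ • q) = c (g⁻¹ • (g • p')) * 𝔠.bnd (g • p') q := by
    intro p'
    rw [inv_smul_smul, ← 𝔠.bnd_equivariant g⁻¹ (g • p') q, inv_smul_smul]
  have h2 : floerBdry 𝔠.bnd c (g⁻¹ • q) = ∑ᶠ p' : P, c (g⁻¹ • (g • p')) * 𝔠.bnd (g • p') q := by
    rw [floerBdry]; exact finsum_congr e
  have h3 : (∑ᶠ p' : P, c (g⁻¹ • (g • p')) * 𝔠.bnd (g • p') q)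
      = ∑ᶠ p : P, c (g⁻¹ • p) * 𝔠.bnd p q := by
    exact finsum_comp_equiv (MulAction.toPerm g) (f := fun p => c (g⁻¹ • p) * 𝔠.bnd p q)
  rw [h2, h3]
  symm
  apply finsum_eq_sum_of_support_subset
  intro p hp
  exact hsub g hg p (left_ne_zero_of_mul hp) (right_ne_zero_of_mul hp)

end FloerComplex

/-! ### Leading terms and the encoding -/

theorem exists_smul_out (p : P) :
    ∃ g : Γ, g • (Quotient.mk'' p : Quotient (MulAction.orbitRel Γ P)).out = p := by
  have h := Quotient.mk_out' (s₁ := MulAction.orbitRel Γ P) p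
  rw [MulAction.orbitRel_apply, MulAction.mem_orbit_iff] at h
  obtain ⟨g, hg⟩ := h
  exact ⟨g⁻¹, by rw [← hg, inv_smul_smul]⟩

namespace FloerComplex

variable (𝔠 : FloerComplex R Γ P)

/-- the leading part of a chain -/
def lead (c : P → R) : P → R := fun p => if 𝔠.act p = 𝔠.lvl c then c p else 0

theorem lead_ne {c : P → R} {p : P} (h : 𝔠.lead c p ≠ 0) :
    c p ≠ 0 ∧ 𝔠.act p = 𝔠.lvl c := by
  by_cases hp : 𝔠.act p = 𝔠.lvl c
  · refine ⟨?_, hp⟩; rw [lead, if_pos hp] at h; exact h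
  · rw [lead, if_neg hp] at h; exact absurd rfl h

theorem smul_out_injective (𝔠 : FloerComplex R Γ P) (s : Quotient (MulAction.orbitRel Γ P)) :
    Function.Injective (fun g : Γ => g • s.out) := by
  intro g g' h
  simp only at h
  have h2 : (g'⁻¹ * g) • s.out = s.out := by rw [mul_smul, h, inv_smul_smul]
  have h3 := 𝔠.free _ _ h2
  rw [inv_mul_eq_one] at h3
  exact h3.symm

theorem encTop_finite {c : P → R} (hc : IsFloerChain 𝔠.act c)
    (s : Quotient (MulAction.orbitRel Γ P)) :
    (Function.support fun g : Γ => 𝔠.lead c (g • s.out)).Finite := by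
  have hS : {p : P | c p ≠ 0 ∧ 𝔠.lvl c - 1 < 𝔠.act p}.Finite := hc _
  apply Set.Finite.subset (hS.preimage ((𝔠.smul_out_injective s).injOn))
  intro g hg
  obtain ⟨h1, h2⟩ := 𝔠.lead_ne hg
  exact ⟨h1, by rw [h2]; linarith⟩

/-- the encoding of the leading part of a chain into `Ω → MonoidAlgebra R Γ` -/
def encTop (c : P → R) : Quotient (MulAction.orbitRel Γ P) → MonoidAlgebra R Γ :=
  fun s => @dite _ ((Function.support fun g : Γ => 𝔠.lead c (g • s.out)).Finite)
    (Classical.dec _) (fun h => MonoidAlgebra.ofCoeff (Finsupp.ofSupportFinite _ h)) (fun _ => 0)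

theorem encTop_apply {c : P → R} (hc : IsFloerChain 𝔠.act c)
    (s : Quotient (MulAction.orbitRel Γ P)) (g : Γ) :
    (𝔠.encTop c s).coeff g = 𝔠.lead c (g • s.out) := by
  rw [encTop, dif_pos (𝔠.encTop_finite hc s)]
  rfl

/-! ### The homogeneous decomposition of the leading term -/

theorem dec {J : Type*} [Fintype J] (Cg : J → (P → R))
    (hCgc : ∀ j, IsFloerChain 𝔠.act (Cg j)) (hCg0 : ∀ j, Cg j ≠ 0)
    {c : P → R} (hc : IsFloerChain 𝔠.act c) (h0 : c ≠ 0)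
    (hmem : 𝔠.encTop c ∈ Submodule.span (MonoidAlgebra R Γ)
      (Set.range fun j => 𝔠.encTop (Cg j))) :
    ∃ m : J → MonoidAlgebra R Γ,
      (∀ j g, (m j).coeff g ≠ 0 → 𝔠.per g = 𝔠.lvl (Cg j) - 𝔠.lvl c) ∧
      (∀ p, 𝔠.lvl c ≤ 𝔠.act p → c p = ∑ j, smc (m j) (Cg j) p) := by
  classical
  obtain ⟨m₀, hm₀⟩ := (Submodule.mem_span_range_iff_exists_fun _).mp hmem
  refine ⟨fun j => MonoidAlgebra.ofCoeff ((m₀ j).coeff.filter fun g => 𝔠.per g = 𝔠.lvl (Cg j) - 𝔠.lvl c), ?_, ?_⟩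
  · intro j g hg
    rw [MonoidAlgebra.coeff_ofCoeff, Finsupp.filter_apply] at hg
    by_cases h : 𝔠.per g = 𝔠.lvl (Cg j) - 𝔠.lvl c
    · exact h
    · rw [if_neg h] at hg; exact absurd rfl hg
  · intro p hp
    rcases eq_or_lt_of_le hp with heq | hlt
    · -- act p = lvl c (heq : lvl c = act p)
      set s := (Quotient.mk'' p : Quotient (MulAction.orbitRel Γ P)) with hs
      obtain ⟨g₀, hg₀⟩ := exists_smul_out (Γ := Γ) p
      have h1 : ((∑ j, m₀ j • 𝔠.encTop (Cg j)) s).coeff g₀ = (𝔠.encTop c s).coeff g₀ := by rw [hm₀]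
      have hL : (𝔠.encTop c s).coeff g₀ = c p := by
        rw [𝔠.encTop_apply hc, hg₀, lead, if_pos heq.symm]
      have hR : ((∑ j, m₀ j • 𝔠.encTop (Cg j)) s).coeff g₀
          = ∑ j, ∑ g ∈ (m₀ j).coeff.support, (m₀ j).coeff g * 𝔠.lead (Cg j) (g⁻¹ • p) := by
        rw [Finset.sum_apply, MonoidAlgebra.coeff_sum, Finset.sum_apply']
        apply Finset.sum_congr rfl
        intro j _
        rw [Pi.smul_apply, smul_eq_mul, MonoidAlgebra.coeff_mul_apply_left, Finsupp.sum]
        apply Finset.sum_congr rfl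
        intro g _
        rw [𝔠.encTop_apply (hCgc j)]
        congr 2
        rw [mul_smul, hg₀]
      rw [hL, hR] at h1
      rw [← h1]
      apply Finset.sum_congr rfl
      intro j _
      -- smc (filter) (Cg j) p = ∑ g ∈ (m₀ j).support, m₀ j g * lead (Cg j) (g⁻¹ • p)
      have hterm : ∀ g ∈ (m₀ j).coeff.support,
          (m₀ j).coeff g * 𝔠.lead (Cg j) (g⁻¹ • p)
            = if 𝔠.per g = 𝔠.lvl (Cg j) - 𝔠.lvl c then (m₀ j).coeff g * Cg j (g⁻¹ • p) else 0 := by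
        intro g _
        have hcond : (𝔠.act (g⁻¹ • p) = 𝔠.lvl (Cg j))
            ↔ (𝔠.per g = 𝔠.lvl (Cg j) - 𝔠.lvl c) := by
          rw [𝔠.act_inv_smul, ← heq]
          constructor <;> intro h <;> linarith
        by_cases h : 𝔠.per g = 𝔠.lvl (Cg j) - 𝔠.lvl c
        · rw [if_pos h, lead, if_pos (hcond.2 h)]
        · rw [if_neg h, lead, if_neg (fun hh => h (hcond.1 hh)), mul_zero]
      rw [Finset.sum_congr rfl hterm, ← Finset.sum_filter]
      simp only [smc, Finsupp.sum, MonoidAlgebra.coeff_ofCoeff, Finsupp.support_filter]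
      apply Finset.sum_congr
      · rw [Finset.filter_congr_decidable]
      · intro g hg
        rw [Finset.mem_filter] at hg
        rw [Finsupp.filter_apply, if_pos hg.2]
    · -- lvl c < act p : both sides vanish
      have hcp : c p = 0 := by
        by_contra h; exact absurd (𝔠.le_lvl hc h0 h) (not_le.2 hlt)
      rw [hcp]
      symm; apply Finset.sum_eq_zero
      intro j _
      simp only [smc, Finsupp.sum, MonoidAlgebra.coeff_ofCoeff]
      apply Finset.sum_eq_zero
      intro g hg
      rw [Finsupp.support_filter, Finset.mem_filter] at hg
      have hz : Cg j (g⁻¹ • p) = 0 := by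
        by_contra hne
        have h1 := 𝔠.le_lvl (hCgc j) (hCg0 j) hne
        rw [𝔠.act_inv_smul, hg.2] at h1
        linarith
      rw [hz, mul_zero]

end FloerComplex

/-! ### Finiteness of bounded sums from a finite positive set -/

theorem multiset_sum_count (D : Finset ℝ) :
    ∀ (μ : Multiset ℝ), (∀ y ∈ μ, y ∈ D) → μ.sum = ∑ d ∈ D, (μ.count d : ℝ) * d := by
  classical
  intro μ
  induction μ using Multiset.induction_on with
  | empty => intro _; simp
  | cons a s ih =>
    intro hmem
    have ha : a ∈ D := hmem a (Multiset.mem_cons_self a s)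
    have hs : ∀ y ∈ s, y ∈ D := fun y hy => hmem y (Multiset.mem_cons_of_mem hy)
    rw [Multiset.sum_cons, ih hs]
    have : ∀ d ∈ D, ((a ::ₘ s).count d : ℝ) * d
        = (s.count d : ℝ) * d + (if d = a then a else 0) := by
      intro d _
      rw [Multiset.count_cons]
      by_cases h : d = a
      · subst h; simp; ring
      · simp [h, Ne.symm h]
    rw [Finset.sum_congr rfl this, Finset.sum_add_distrib, Finset.sum_ite_eq' D a (fun _ => a),
      if_pos ha]
    ring

theorem finite_bounded_sums (D : Finset ℝ) (hD : ∀ d ∈ D, (0:ℝ) < d) (C : ℝ) :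
    {x : ℝ | (∃ μ : Multiset ℝ, (∀ y ∈ μ, y ∈ D) ∧ μ.sum = x) ∧ x ≤ C}.Finite := by
  classical
  rcases D.eq_empty_or_nonempty with hD0 | hD0
  · apply Set.Finite.subset (Set.finite_singleton (0:ℝ))
    rintro x ⟨⟨μ, hμD, hsum⟩, _⟩
    have : μ = 0 := by
      rw [Multiset.eq_zero_iff_forall_notMem]
      intro y hy
      exact absurd (hμD y hy) (by simp [hD0])
    simp [this] at hsum
    simp [← hsum]
  · set δ₀ := D.min' hD0 with hδ₀
    have hδ₀pos : 0 < δ₀ := hD (D.min' hD0) (D.min'_mem hD0)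
    set n := Nat.ceil (C / δ₀) with hn
    apply Set.Finite.subset
      ((Set.finite_range (fun f : (↥D → Fin (n+1)) => ∑ d : ↥D, ((f d : ℕ) : ℝ) * (d : ℝ))))
    rintro x ⟨⟨μ, hμD, hsum⟩, hxC⟩
    -- counts are bounded
    have hcount : ∀ d ∈ D, μ.count d ≤ n := by
      intro d hd
      have h1 : (μ.count d : ℝ) * d ≤ x := by
        rw [← hsum, multiset_sum_count D μ hμD]
        apply Finset.single_le_sum (f := fun d => (μ.count d : ℝ) * d) _ hd
        intro i hi
        exact mul_nonneg (Nat.cast_nonneg _) (le_of_lt (hD i hi))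
      have h2 : (μ.count d : ℝ) * δ₀ ≤ C := by
        calc (μ.count d : ℝ) * δ₀ ≤ (μ.count d : ℝ) * d := by
              apply mul_le_mul_of_nonneg_left (D.min'_le d hd) (Nat.cast_nonneg _)
          _ ≤ x := h1
          _ ≤ C := hxC
      have h3 : (μ.count d : ℝ) ≤ C / δ₀ := by
        rw [le_div_iff₀ hδ₀pos]; exact h2
      have h4 : (μ.count d : ℝ) ≤ (n : ℝ) := le_trans h3 (Nat.le_ceil _)
      exact_mod_cast h4
    refine ⟨fun d => ⟨μ.count (d : ℝ), Nat.lt_succ_of_le (hcount (d : ℝ) d.2)⟩, ?_⟩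
    rw [← hsum, multiset_sum_count D μ hμD,
      ← Finset.sum_coe_sort D (fun d => (μ.count d : ℝ) * d)]

/-! ### A finsum/Finset.sum exchange lemma -/

theorem finsum_finsetSum_comm {α ι M : Type*} [AddCommMonoid M] (s : Finset ι) (f : α → ι → M)
    (h : ∀ i ∈ s, (Function.support fun a => f a i).Finite) :
    ∑ᶠ a, ∑ i ∈ s, f a i = ∑ i ∈ s, ∑ᶠ a, f a i := by
  classical
  set F : Finset α := s.attach.biUnion (fun i => (h i i.2).toFinset) with hF
  have hsub : ∀ i ∈ s, (Function.support fun a => f a i) ⊆ ↑F := by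
    intro i hi a ha
    rw [Finset.mem_coe, hF, Finset.mem_biUnion]
    exact ⟨⟨i, hi⟩, s.mem_attach _, (h i hi).mem_toFinset.2 ha⟩
  have h1 : (Function.support fun a => ∑ i ∈ s, f a i) ⊆ ↑F := by
    intro a ha
    have : ∃ i ∈ s, f a i ≠ 0 := by
      by_contra hno; push_neg at hno
      exact ha (Finset.sum_eq_zero hno)
    obtain ⟨i, hi, hne⟩ := this
    exact hsub i hi hne
  rw [finsum_eq_sum_of_support_subset _ h1, Finset.sum_comm]
  apply Finset.sum_congr rfl
  intro i hi
  exact (finsum_eq_sum_of_support_subset _ (hsub i hi)).symm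


/-- over a Noetherian ring there is a constant `M` such that any
boundary `c` bounds a chain `h` with `ℓ(h) ≤ ℓ(c) + M`. -/
theorem bounding_chain_estimate [Group.FG Γ] [IsNoetherianRing R]
    (𝔠 : FloerComplex R Γ P) :
    ∃ M : ℝ, ∀ c : P → R, IsFloerChain 𝔠.act c →
      (∃ h₀ : P → R, IsFloerChain 𝔠.act h₀ ∧ floerBdry 𝔠.bnd h₀ = c) →
      ∃ h : P → R, IsFloerChain 𝔠.act h ∧ floerBdry 𝔠.bnd h = c ∧
        floerLevel 𝔠.act h ≤ floerLevel 𝔠.act c + (M : EReal) := by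
  classical
  haveI : Finite (Quotient (MulAction.orbitRel Γ P)) := 𝔠.finiteOrbits
  haveI : Monoid.FG Γ := Group.fg_iff_monoid_fg.mp inferInstance
  haveI hNoethA : IsNoetherianRing (MonoidAlgebra R Γ) :=
    Algebra.FiniteType.isNoetherianRing R _
  haveI : IsNoetherian (MonoidAlgebra R Γ) (MonoidAlgebra R Γ) :=
    isNoetherianRing_iff.mp hNoethA
  haveI hV : IsNoetherian (MonoidAlgebra R Γ)
      (Quotient (MulAction.orbitRel Γ P) → MonoidAlgebra R Γ) := isNoetherian_pi'
  -- the set of encodings of leading terms of nonzero boundaries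
  set S₀ : Set (Quotient (MulAction.orbitRel Γ P) → MonoidAlgebra R Γ) :=
    {v | ∃ x : P → R, IsFloerChain 𝔠.act x ∧
      (∃ y, IsFloerChain 𝔠.act y ∧ floerBdry 𝔠.bnd y = x) ∧ x ≠ 0 ∧ v = 𝔠.encTop x}
    with hS₀
  -- a finite spanning subset of S₀
  obtain ⟨T, hTS, hTspan⟩ : ∃ T : Finset (Quotient (MulAction.orbitRel Γ P) → MonoidAlgebra R Γ),
      (↑T : Set _) ⊆ S₀ ∧ Submodule.span (MonoidAlgebra R Γ) (↑T : Set _)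
        = Submodule.span (MonoidAlgebra R Γ) S₀ := by
    obtain ⟨F, hF⟩ := IsNoetherian.noetherian (Submodule.span (MonoidAlgebra R Γ) S₀)
    have hFs : ∀ f : ↥F, ∃ Tf : Finset (Quotient (MulAction.orbitRel Γ P) → MonoidAlgebra R Γ),
        (↑Tf : Set _) ⊆ S₀ ∧
        (f : Quotient (MulAction.orbitRel Γ P) → MonoidAlgebra R Γ)
          ∈ Submodule.span (MonoidAlgebra R Γ) (↑Tf : Set _) := by
      intro f
      apply Submodule.mem_span_finite_of_mem_span
      rw [← hF]
      exact Submodule.subset_span f.2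
    choose Tf hTf1 hTf2 using hFs
    refine ⟨F.attach.biUnion Tf, ?_, le_antisymm ?_ ?_⟩
    · intro v hv
      rw [Finset.mem_coe, Finset.mem_biUnion] at hv
      obtain ⟨f, _, hvf⟩ := hv
      exact hTf1 f (Finset.mem_coe.mpr hvf)
    · apply Submodule.span_le.2
      intro v hv
      rw [Finset.mem_coe, Finset.mem_biUnion] at hv
      obtain ⟨f, _, hvf⟩ := hv
      exact Submodule.subset_span (hTf1 f (Finset.mem_coe.mpr hvf))
    · rw [← hF]
      apply Submodule.span_le.2
      intro f hf
      apply Submodule.span_mono (Finset.coe_subset.2 (Finset.subset_biUnion_of_mem Tf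
        (F.mem_attach ⟨f, hf⟩)))
      exact hTf2 ⟨f, hf⟩
  -- choose the generator chains and their bounding chains
  have hTspec : ∀ j : ↥T, ∃ x : P → R, IsFloerChain 𝔠.act x ∧
      (∃ y, IsFloerChain 𝔠.act y ∧ floerBdry 𝔠.bnd y = x) ∧ x ≠ 0 ∧ (j : _) = 𝔠.encTop x :=
    fun j => hTS j.2
  choose Cg hCgc hCgB hCg0 hCgenc using hTspec
  choose Yg hYgc hYgb using hCgB
  have hYg0 : ∀ j, Yg j ≠ 0 := by
    intro j h
    apply hCg0 j
    rw [← hYgb j, h, 𝔠.bdry_zero]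
  have hrange : (Set.range fun j : ↥T => 𝔠.encTop (Cg j)) = (↑T : Set _) := by
    ext v
    constructor
    · rintro ⟨j, rfl⟩
      show 𝔠.encTop (Cg j) ∈ (↑T : Set _)
      rw [← hCgenc j]; exact j.2
    · intro hv
      exact ⟨⟨v, hv⟩, (hCgenc ⟨v, hv⟩).symm⟩
  have hSP : ∀ x : P → R, IsFloerChain 𝔠.act x →
      (∃ y, IsFloerChain 𝔠.act y ∧ floerBdry 𝔠.bnd y = x) → x ≠ 0 →
      𝔠.encTop x ∈ Submodule.span (MonoidAlgebra R Γ)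
        (Set.range fun j : ↥T => 𝔠.encTop (Cg j)) := by
    intro x h1 h2 h3
    rw [hrange, hTspan]
    exact Submodule.subset_span (show 𝔠.encTop x ∈ S₀ from ⟨x, h1, h2, h3, rfl⟩)
  -- the constant M
  set M : ℝ := ∑ j : ↥T, max (𝔠.lvl (Yg j) - 𝔠.lvl (Cg j)) 0 with hM
  have hM0 : 0 ≤ M := Finset.sum_nonneg fun j _ => le_max_right _ _
  have hMj : ∀ j : ↥T, 𝔠.lvl (Yg j) - 𝔠.lvl (Cg j) ≤ M := fun j =>
    le_trans (le_max_left _ _)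
      (Finset.single_le_sum (f := fun j => max (𝔠.lvl (Yg j) - 𝔠.lvl (Cg j)) 0)
        (fun i _ => le_max_right _ _) (Finset.mem_univ j))
  refine ⟨M, ?_⟩
  intro c hc hcB
  by_cases h0 : c = 0
  · refine ⟨0, 𝔠.isC_zero, by rw [𝔠.bdry_zero, h0], ?_⟩
    have hbot : floerLevel 𝔠.act (0 : P → R) = ⊥ := by
      rw [floerLevel]
      have he : {p : P | (0 : P → R) p ≠ 0} = ∅ := by ext p; simp
      rw [he]
      simp
    rw [hbot]
    exact bot_le
  -- main case
  have hdec : ∀ x : P → R, (IsFloerChain 𝔠.act x ∧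
      (∃ y, IsFloerChain 𝔠.act y ∧ floerBdry 𝔠.bnd y = x) ∧ x ≠ 0) →
      ∃ m : ↥T → MonoidAlgebra R Γ,
        (∀ j g, (m j).coeff g ≠ 0 → 𝔠.per g = 𝔠.lvl (Cg j) - 𝔠.lvl x) ∧
        (∀ p, 𝔠.lvl x ≤ 𝔠.act p → x p = ∑ j, smc (m j) (Cg j) p) :=
    fun x hx => 𝔠.dec Cg hCgc hCg0 hx.1 hx.2.2 (hSP x hx.1 hx.2.1 hx.2.2)
  set Pr : (P → R) → Prop := fun x => IsFloerChain 𝔠.act x ∧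
      (∃ y, IsFloerChain 𝔠.act y ∧ floerBdry 𝔠.bnd y = x) ∧ x ≠ 0 with hPrdef
  set stepm : (P → R) → ↥T → MonoidAlgebra R Γ :=
    fun x => if h : Pr x then (hdec x h).choose else fun _ => 0 with hstepmdef
  set step : (P → R) → (P → R) := fun x => x - ∑ j, smc (stepm x j) (Cg j) with hstepdef
  set cs : ℕ → (P → R) := fun k => step^[k] c with hcsdef
  have hcs0 : cs 0 = c := rfl
  have hcsS : ∀ k, cs (k+1) = step (cs k) := fun k => Function.iterate_succ_apply' step k c
  have hstepE : ∀ x, step x = x - ∑ j, smc (stepm x j) (Cg j) := fun x => rfl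
  have hstepm_pos : ∀ x, (h : Pr x) →
      (∀ j g, (stepm x j).coeff g ≠ 0 → 𝔠.per g = 𝔠.lvl (Cg j) - 𝔠.lvl x) ∧
      (∀ p, 𝔠.lvl x ≤ 𝔠.act p → x p = ∑ j, smc (stepm x j) (Cg j) p) := by
    intro x h
    have : stepm x = (hdec x h).choose := by rw [hstepmdef]; simp only [dif_pos h]
    rw [this]
    exact (hdec x h).choose_spec
  have hstepm_neg : ∀ x, ¬ Pr x → stepm x = fun _ => 0 := by
    intro x h; rw [hstepmdef]; simp only [dif_neg h]
  -- basic invariants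
  have hinv : ∀ k, IsFloerChain 𝔠.act (cs k) ∧
      ∃ y, IsFloerChain 𝔠.act y ∧ floerBdry 𝔠.bnd y = cs k := by
    intro k
    induction k with
    | zero => exact ⟨hc, hcB⟩
    | succ k ih =>
      rw [hcsS k, hstepE]
      have hsmcC : IsFloerChain 𝔠.act (∑ j, smc (stepm (cs k) j) (Cg j)) :=
        𝔠.isC_sum _ _ (fun j _ => 𝔠.isC_smc (hCgc j) _)
      refine ⟨𝔠.isC_sub ih.1 hsmcC, ?_⟩
      obtain ⟨y, hy1, hy2⟩ := ih.2
      have hsmcY : IsFloerChain 𝔠.act (∑ j, smc (stepm (cs k) j) (Yg j)) :=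
        𝔠.isC_sum _ _ (fun j _ => 𝔠.isC_smc (hYgc j) _)
      refine ⟨y - ∑ j, smc (stepm (cs k) j) (Yg j), 𝔠.isC_sub hy1 hsmcY, ?_⟩
      rw [𝔠.bdry_sub hy1 hsmcY, hy2, 𝔠.bdry_sum _ _ (fun j _ => 𝔠.isC_smc (hYgc j) _)]
      congr 1
      apply Finset.sum_congr rfl
      intro j _
      rw [𝔠.bdry_smc (hYgc j), hYgb j]
  have hPr_of : ∀ k, cs k ≠ 0 → Pr (cs k) := fun k hk => ⟨(hinv k).1, (hinv k).2, hk⟩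
  have hzero_succ : ∀ k, cs k = 0 → cs (k+1) = 0 := by
    intro k h
    rw [hcsS k, hstepE, h, hstepm_neg 0 (fun hPr => hPr.2.2 rfl)]
    funext p
    simp [smc_zero_left]
  have hne_of_succ : ∀ k, cs (k+1) ≠ 0 → cs k ≠ 0 := fun k h hk => h (hzero_succ k hk)
  have htop : ∀ k, cs k ≠ 0 → ∀ p, 𝔠.lvl (cs k) ≤ 𝔠.act p → cs (k+1) p = 0 := by
    intro k hk p hp
    rw [hcsS k, hstepE, Pi.sub_apply, Finset.sum_apply, sub_eq_zero]
    exact (hstepm_pos (cs k) (hPr_of k hk)).2 p hp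
  have hlt : ∀ k, cs (k+1) ≠ 0 → 𝔠.lvl (cs (k+1)) < 𝔠.lvl (cs k) := by
    intro k h
    have hk := hne_of_succ k h
    obtain ⟨p, hp, hpl⟩ := 𝔠.exists_lvl (hinv (k+1)).1 h
    rw [← hpl]
    by_contra hge
    push_neg at hge
    exact hp (htop k hk p hge)
  have hmono : ∀ k, cs k ≠ 0 → 𝔠.lvl (cs k) ≤ 𝔠.lvl c := by
    intro k
    induction k with
    | zero => intro _; exact le_of_eq rfl
    | succ k ih =>
      intro h
      exact le_trans (le_of_lt (hlt k h)) (ih (hne_of_succ k h))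
  have hstrict : ∀ k k', k < k' → cs k' ≠ 0 → 𝔠.lvl (cs k') < 𝔠.lvl (cs k) := by
    intro k k' hkk h'
    induction k' with
    | zero => omega
    | succ k'' ih =>
      rcases Nat.lt_succ_iff_lt_or_eq.mp hkk with h1 | h1
      · exact lt_trans (hlt k'' h') (ih h1 (hne_of_succ _ h'))
      · subst h1; exact hlt _ h'
  -- the reachable set of levels
  set Glev : Set ℝ := {t | ∃ p₀, c p₀ ≠ 0 ∧ ∃ μ : Multiset ℝ,
    (∀ y ∈ μ, (0 < y ∧ ∃ j : ↥T, ∃ q, Cg j q ≠ 0 ∧ y = 𝔠.lvl (Cg j) - 𝔠.act q)) ∧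
    t = 𝔠.act p₀ - μ.sum} with hGlevdef
  have hGinv : ∀ k p, cs k p ≠ 0 → 𝔠.act p ∈ Glev := by
    intro k
    induction k with
    | zero => exact fun p hp => ⟨p, hp, 0, by simp, by simp⟩
    | succ k ih =>
      intro p hp
      have hkp1 : cs (k+1) ≠ 0 := fun h => hp (by rw [h]; rfl)
      have hk : cs k ≠ 0 := hne_of_succ k hkp1
      by_cases hcp : cs k p ≠ 0
      · exact ih p hcp
      · push_neg at hcp
        have hsum_ne : (∑ j, smc (stepm (cs k) j) (Cg j)) p ≠ 0 := by
          intro hz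
          apply hp
          rw [hcsS k, hstepE, Pi.sub_apply, hcp, hz, sub_zero]
        rw [Finset.sum_apply] at hsum_ne
        obtain ⟨j, _, hj⟩ := Finset.exists_ne_zero_of_sum_ne_zero hsum_ne
        obtain ⟨g, hg, hgne⟩ := smc_apply_ne hj
        have hper : 𝔠.per g = 𝔠.lvl (Cg j) - 𝔠.lvl (cs k) :=
          (hstepm_pos (cs k) (hPr_of k hk)).1 j g (Finsupp.mem_support_iff.mp hg)
        have hCq : Cg j (g⁻¹ • p) ≠ 0 := right_ne_zero_of_mul hgne
        have hact := 𝔠.act_inv_smul g p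
        have hδ : 𝔠.act p = 𝔠.lvl (cs k) - (𝔠.lvl (Cg j) - 𝔠.act (g⁻¹ • p)) := by
          rw [hper] at hact; linarith
        have hδ0 : 0 ≤ 𝔠.lvl (Cg j) - 𝔠.act (g⁻¹ • p) := by
          have := 𝔠.le_lvl (hCgc j) (hCg0 j) hCq; linarith
        obtain ⟨p₁, hp₁, hp₁l⟩ := 𝔠.exists_lvl (hinv k).1 hk
        obtain ⟨p₀, hp₀, μ, hμ, hμeq⟩ := ih p₁ hp₁
        rcases eq_or_lt_of_le hδ0 with hδe | hδp
        · refine ⟨p₀, hp₀, μ, hμ, ?_⟩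
          have h1 : 𝔠.act p₁ = 𝔠.act p₀ - μ.sum := hμeq
          have h2 : 𝔠.act p₁ = 𝔠.lvl (cs k) := hp₁l
          linarith
        · refine ⟨p₀, hp₀, (𝔠.lvl (Cg j) - 𝔠.act (g⁻¹ • p)) ::ₘ μ, ?_, ?_⟩
          · intro y hy
            rcases Multiset.mem_cons.mp hy with rfl | hy'
            · exact ⟨hδp, j, g⁻¹ • p, hCq, rfl⟩
            · exact hμ y hy'
          · rw [Multiset.sum_cons, hδ]
            have h1 : 𝔠.act p₁ = 𝔠.act p₀ - μ.sum := hμeq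
            have h2 : 𝔠.act p₁ = 𝔠.lvl (cs k) := hp₁l
            linarith
  -- levels ≥ B are only finitely often attained
  have hIfin : ∀ B : ℝ, {k : ℕ | cs k ≠ 0 ∧ B ≤ 𝔠.lvl (cs k)}.Finite := by
    intro B
    have hDfin : {y : ℝ | (0 < y ∧ ∃ j : ↥T, ∃ q, Cg j q ≠ 0 ∧ y = 𝔠.lvl (Cg j) - 𝔠.act q)
        ∧ y ≤ 𝔠.lvl c - B}.Finite := by
      apply Set.Finite.subset (Set.Finite.biUnion (Set.finite_univ (α := ↥T))
        (fun j _ => ((hCgc j (𝔠.lvl (Cg j) - (𝔠.lvl c - B) - 1)).image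
          (fun q => 𝔠.lvl (Cg j) - 𝔠.act q))))
      rintro y ⟨⟨hy0, j, q, hq, rfl⟩, hyC⟩
      exact Set.mem_biUnion (Set.mem_univ j) ⟨q, ⟨hq, by linarith⟩, rfl⟩
    have hGfin : (Glev ∩ Set.Ici B).Finite := by
      have hDpos : ∀ d ∈ hDfin.toFinset, (0:ℝ) < d := by
        intro d hd
        exact (hDfin.mem_toFinset.mp hd).1.1
      apply Set.Finite.subset (Set.Finite.image (fun pr : ℝ × ℝ => pr.1 - pr.2)
        ((((hc (B-1)).image 𝔠.act)).prod (finite_bounded_sums hDfin.toFinset hDpos (𝔠.lvl c - B))))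
      rintro tt ⟨⟨p₀, hp₀, μ, hμ, rfl⟩, htB⟩
      have htB' : B ≤ 𝔠.act p₀ - μ.sum := htB
      have hμ0 : ∀ y ∈ μ, (0:ℝ) ≤ y := fun y hy => le_of_lt (hμ y hy).1
      have hμsum0 : 0 ≤ μ.sum := Multiset.sum_nonneg hμ0
      have hlvlp₀ : 𝔠.act p₀ ≤ 𝔠.lvl c := 𝔠.le_lvl hc h0 hp₀
      have hentry : ∀ y ∈ μ, y ∈ hDfin.toFinset := by
        intro y hy
        rw [hDfin.mem_toFinset]
        refine ⟨(hμ y hy), ?_⟩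
        have h1 : y ≤ μ.sum := Multiset.single_le_sum hμ0 y hy
        linarith
      refine ⟨(𝔠.act p₀, μ.sum), ⟨⟨p₀, ⟨hp₀, by linarith⟩, rfl⟩, ⟨μ, hentry, rfl⟩, by linarith⟩, rfl⟩
    apply Set.Finite.of_finite_image (f := fun k => 𝔠.lvl (cs k))
    · apply hGfin.subset
      rintro tt ⟨k, ⟨hk, hkB⟩, rfl⟩
      refine ⟨?_, hkB⟩
      obtain ⟨p, hp, hpl⟩ := 𝔠.exists_lvl (hinv k).1 hk
      show 𝔠.lvl (cs k) ∈ Glev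
      rw [← hpl]
      exact hGinv k p hp
    · intro k hk k' hk' he
      by_contra hne
      rcases lt_or_gt_of_ne hne with hlt' | hlt'
      · exact absurd he (ne_of_gt (hstrict k k' hlt' hk'.1))
      · exact absurd he.symm (ne_of_gt (hstrict k' k hlt' hk.1))
  have hterm : ∀ B : ℝ, ∃ K : ℕ, ∀ k, K ≤ k → cs k = 0 ∨ 𝔠.lvl (cs k) < B := by
    intro B
    obtain ⟨K₀, hK₀⟩ := (hIfin B).bddAbove
    refine ⟨K₀ + 1, fun k hk => ?_⟩
    by_cases h : cs k = 0
    · exact Or.inl h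
    · right
      by_contra hge
      push_neg at hge
      have hmem : k ∈ {k : ℕ | cs k ≠ 0 ∧ B ≤ 𝔠.lvl (cs k)} := ⟨h, hge⟩
      have := hK₀ hmem
      omega
  -- the bounding chain
  set tk : ℕ → P → R := fun k => ∑ j, smc (stepm (cs k) j) (Yg j) with htkdef
  have htIsC : ∀ k, IsFloerChain 𝔠.act (tk k) :=
    fun k => 𝔠.isC_sum _ _ fun j _ => 𝔠.isC_smc (hYgc j) _
  have htb : ∀ k, floerBdry 𝔠.bnd (tk k) = cs k - cs (k+1) := by
    intro k
    have h1 : floerBdry 𝔠.bnd (tk k) = ∑ j, smc (stepm (cs k) j) (Cg j) := by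
      simp only [htkdef]
      rw [𝔠.bdry_sum _ _ (fun j _ => 𝔠.isC_smc (hYgc j) _)]
      apply Finset.sum_congr rfl
      intro j _
      rw [𝔠.bdry_smc (hYgc j), hYgb j]
    rw [h1, hcsS k, hstepE, sub_sub_cancel]
  have htz : ∀ k, cs k = 0 → tk k = 0 := by
    intro k h
    simp only [htkdef]
    rw [hstepm_neg (cs k) (fun hPr => hPr.2.2 h)]
    funext p
    simp [smc_zero_left]
  have htlev : ∀ k p, tk k p ≠ 0 → cs k ≠ 0 ∧ 𝔠.act p ≤ 𝔠.lvl (cs k) + M := by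
    intro k p hp
    have hk : cs k ≠ 0 := by
      intro h; apply hp; rw [htz k h]; rfl
    refine ⟨hk, ?_⟩
    simp only [htkdef] at hp
    rw [Finset.sum_apply] at hp
    obtain ⟨j, _, hj⟩ := Finset.exists_ne_zero_of_sum_ne_zero hp
    obtain ⟨g, hg, hgne⟩ := smc_apply_ne hj
    have hper : 𝔠.per g = 𝔠.lvl (Cg j) - 𝔠.lvl (cs k) :=
      (hstepm_pos (cs k) (hPr_of k hk)).1 j g (Finsupp.mem_support_iff.mp hg)
    have hY := 𝔠.le_lvl (hYgc j) (hYg0 j) (right_ne_zero_of_mul hgne)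
    have hact := 𝔠.act_inv_smul g p
    have hMj' := hMj j
    linarith
  set ch : P → R := fun p => ∑ᶠ k, tk k p with hchdef
  have hsupp_fin : ∀ p, (Function.support fun k => tk k p).Finite := by
    intro p
    apply (hIfin (𝔠.act p - M)).subset
    intro k hk
    obtain ⟨h1, h2⟩ := htlev k p hk
    exact ⟨h1, by linarith⟩
  have hch_ne : ∀ p, ch p ≠ 0 → ∃ k, tk k p ≠ 0 := by
    intro p hp
    by_contra hno
    push_neg at hno
    apply hp
    simp only [hchdef]
    have he : (fun k => tk k p) = fun _ => (0:R) := funext hno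
    rw [he]
    exact finsum_zero
  have hisCh : IsFloerChain 𝔠.act ch := by
    intro C
    apply Set.Finite.subset (Set.Finite.biUnion (hIfin (C - M)) (fun k _ => htIsC k C))
    rintro p ⟨hp, hC⟩
    obtain ⟨k, hk⟩ := hch_ne p hp
    obtain ⟨h1, h2⟩ := htlev k p hk
    exact Set.mem_biUnion (show k ∈ {k : ℕ | cs k ≠ 0 ∧ C - M ≤ 𝔠.lvl (cs k)}
      from ⟨h1, by linarith⟩) ⟨hk, hC⟩
  have hbdry : floerBdry 𝔠.bnd ch = c := by
    funext q
    obtain ⟨K, hK⟩ := hterm (𝔠.act q - M)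
    have hq1 : ∀ p k, K ≤ k → tk k p * 𝔠.bnd p q = 0 := by
      intro p k hk
      rcases hK k hk with h1 | h1
      · rw [htz k h1]; simp
      · by_cases h2 : tk k p = 0
        · rw [h2, zero_mul]
        · obtain ⟨h3, h4⟩ := htlev k p h2
          have hb : 𝔠.bnd p q = 0 := by
            by_contra hb
            have := 𝔠.bnd_vanish p q hb
            linarith
          rw [hb, mul_zero]
    have hpt : ∀ p, ch p * 𝔠.bnd p q = ∑ k ∈ Finset.range K, tk k p * 𝔠.bnd p q := by
      intro p
      have h1 : ch p = ∑ᶠ k, tk k p := rfl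
      rw [h1, finsum_mul' _ _ (hsupp_fin p)]
      apply finsum_eq_sum_of_support_subset
      intro k hk
      rw [Finset.coe_range, Set.mem_Iio]
      by_contra hK'
      push_neg at hK'
      exact hk (hq1 p k hK')
    have hfs : ∀ k ∈ Finset.range K, (Function.support fun p => tk k p * 𝔠.bnd p q).Finite := by
      intro k _
      apply (htIsC k (𝔠.act q)).subset
      intro p hp
      exact ⟨left_ne_zero_of_mul hp, 𝔠.bnd_vanish p q (right_ne_zero_of_mul hp)⟩
    have h2 : floerBdry 𝔠.bnd ch q = ∑ k ∈ Finset.range K, ∑ᶠ p, tk k p * 𝔠.bnd p q := by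
      rw [floerBdry, finsum_congr hpt]
      exact finsum_finsetSum_comm _ _ hfs
    rw [h2]
    have h3 : ∀ k ∈ Finset.range K, (∑ᶠ p, tk k p * 𝔠.bnd p q) = cs k q - cs (k+1) q := by
      intro k _
      have h4 : (∑ᶠ p, tk k p * 𝔠.bnd p q) = floerBdry 𝔠.bnd (tk k) q := rfl
      rw [h4, htb k, Pi.sub_apply]
    rw [Finset.sum_congr rfl h3, Finset.sum_range_sub' (fun k => cs k q)]
    have hKq : cs K q = 0 := by
      rcases hK K le_rfl with h1 | h1
      · rw [h1]; rfl
      · by_contra h2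
        have h5 : cs K ≠ 0 := fun hz => h2 (by rw [hz]; rfl)
        have := 𝔠.le_lvl (hinv K).1 h5 h2
        linarith
    rw [hKq, hcs0, sub_zero]
  have hlev : floerLevel 𝔠.act ch ≤ floerLevel 𝔠.act c + (M : EReal) := by
    rw [𝔠.floerLevel_eq hc h0, ← EReal.coe_add]
    apply 𝔠.floerLevel_le
    intro p hp
    obtain ⟨k, hk⟩ := hch_ne p hp
    obtain ⟨h1, h2⟩ := htlev k p hk
    have := hmono k h1
    linarith
  exact ⟨ch, hisCh, hbdry, hlev⟩
end
end

section
/- Let 𝔠 be a filtered Floer-Novikov complex over a Noetherian ring R. Then for every homology class a ∈ H_*(𝔠) there exists a cycle α ∈ C_*(𝔠) with [α] = a and ℓ(α) = ρ(a), i.e., the infimum defining the spectral number is attained. -/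
noncomputable section

open Filter

variable {R : Type*} [CommRing R] {Γ : Type*} [CommGroup Γ] {P : Type*} [MulAction Γ P]

namespace FloerAux

attribute [local instance] Classical.propDecidable

open Function Set

section level

variable {act : P → ℝ} {c d : P → R}

lemma fc_zero (act : P → ℝ) : IsFloerChain act (0 : P → R) := by
  intro C
  convert Set.finite_empty
  ext p; simp

lemma fc_congr (h : ∀ p, c p = d p) (hc : IsFloerChain act c) : IsFloerChain act d := by
  intro C; apply (hc C).subset; intro p hp
  rw [Set.mem_setOf_eq] at hp ⊢
  exact ⟨by rw [h p]; exact hp.1, hp.2⟩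

lemma fc_add (hc : IsFloerChain act c) (hd : IsFloerChain act d) :
    IsFloerChain act (c + d) := by
  intro C
  apply ((hc C).union (hd C)).subset
  intro p hp
  by_cases h : c p ≠ 0 ∧ C < act p
  · exact Or.inl h
  · right
    refine ⟨fun h0 => hp.1 ?_, hp.2⟩
    have : c p = 0 := by
      by_contra hcp; exact h ⟨hcp, hp.2⟩
    simp [Pi.add_apply, this, h0]

lemma fc_neg (hc : IsFloerChain act c) : IsFloerChain act (-c) := by
  intro C; apply (hc C).subset; intro p hp; refine ⟨?_, hp.2⟩
  simpa using hp.1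

lemma fc_sub (hc : IsFloerChain act c) (hd : IsFloerChain act d) :
    IsFloerChain act (c - d) := by
  have := fc_add hc (fc_neg hd)
  apply fc_congr (c := c + -d) (fun p => by simp [sub_eq_add_neg]) this

lemma fc_smul (r : R) (hc : IsFloerChain act c) : IsFloerChain act (fun p => r * c p) := by
  intro C; apply (hc C).subset; intro p hp
  refine ⟨fun h0 => hp.1 ?_, hp.2⟩
  simp [h0]

lemma fc_finset_sum {ι : Type*} (s : Finset ι) (f : ι → P → R)
    (hf : ∀ i ∈ s, IsFloerChain act (f i)) : IsFloerChain act (∑ i ∈ s, f i) := by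
  classical
  induction s using Finset.induction_on with
  | empty => simpa using fc_zero (R := R) act
  | @insert a s' hx ih =>
      rw [Finset.sum_insert hx]
      exact fc_add (hf a (Finset.mem_insert_self a s'))
        (ih fun i hi => hf i (Finset.mem_insert_of_mem hi))

/-- the level of a nonzero Floer chain is attained -/
lemma exists_max (hc : IsFloerChain act c) (hne : c ≠ 0) :
    ∃ p, c p ≠ 0 ∧ ∀ q, c q ≠ 0 → act q ≤ act p := by
  have h0 : ∃ p₀, c p₀ ≠ 0 := by
    by_contra h; push_neg at h; exact hne (funext fun p => h p)
  obtain ⟨p₀, hp₀⟩ := h0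
  set s := {p : P | c p ≠ 0 ∧ act p₀ - 1 < act p} with hs
  have hsf : s.Finite := hc _
  have hsne : s.Nonempty := ⟨p₀, hp₀, by linarith⟩
  obtain ⟨p, hps, hpmax⟩ := Set.Finite.exists_maximalFor act s hsf hsne
  refine ⟨p, hps.1, fun q hq => ?_⟩
  by_cases hq' : act p₀ - 1 < act q
  · have hqs : q ∈ s := ⟨hq, hq'⟩
    by_contra hlt
    push_neg at hlt
    have := hpmax hqs (le_of_lt hlt)
    linarith
  · push_neg at hq'
    have h1 : act p₀ - 1 < act p := hps.2
    linarith

lemma level_le_iff {t : ℝ} :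
    floerLevel act c ≤ (t : EReal) ↔ ∀ p, c p ≠ 0 → act p ≤ t := by
  rw [floerLevel]
  rw [iSup₂_le_iff]
  constructor
  · intro h p hp; exact_mod_cast h p hp
  · intro h p hp; exact_mod_cast h p hp

lemma level_zero : floerLevel act (0 : P → R) = ⊥ := by
  have h : {p : P | (0 : P → R) p ≠ 0} = ∅ := by ext p; simp
  rw [floerLevel, h]
  simp

lemma le_level {p : P} (hp : c p ≠ 0) : (act p : EReal) ≤ floerLevel act c := by
  exact le_iSup₂ (f := fun p _ => (act p : EReal)) p hp

lemma level_eq_act (hc : IsFloerChain act c) (hne : c ≠ 0) :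
    ∃ p, c p ≠ 0 ∧ floerLevel act c = (act p : EReal) := by
  obtain ⟨p, hp, hmax⟩ := exists_max hc hne
  exact ⟨p, hp, le_antisymm (level_le_iff.2 hmax) (le_level hp)⟩

lemma level_lt_coe_iff (hc : IsFloerChain act c) {t : ℝ} :
    floerLevel act c < (t : EReal) ↔ ∀ p, c p ≠ 0 → act p < t := by
  constructor
  · intro h p hp
    have := (le_level hp).trans_lt h
    exact_mod_cast this
  · intro h
    by_cases hne : c = 0
    · subst hne; rw [level_zero]; exact bot_lt_iff_ne_bot.2 (by simp)
    · obtain ⟨p, hp, hlev⟩ := level_eq_act hc hne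
      rw [hlev]; exact_mod_cast h p hp

lemma level_ne_top (hc : IsFloerChain act c) : floerLevel act c ≠ ⊤ := by
  by_cases hne : c = 0
  · subst hne; rw [level_zero]; simp
  · obtain ⟨p, _, hlev⟩ := level_eq_act hc hne
    rw [hlev]; exact EReal.coe_ne_top _

end level



section complex

variable (𝔠 : FloerComplex R Γ P)

lemma per_one : 𝔠.per 1 = 0 := by
  have := 𝔠.per_hom 1 1
  simp at this
  linarith

lemma per_inv (g : Γ) : 𝔠.per g⁻¹ = - 𝔠.per g := by
  have := 𝔠.per_hom g g⁻¹
  rw [mul_inv_cancel] at this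
  rw [per_one] at this
  linarith

lemma act_inv_smul (g : Γ) (p : P) : 𝔠.act (g⁻¹ • p) = 𝔠.act p + 𝔠.per g := by
  rw [𝔠.act_smul, per_inv]; ring

/-- the shift of a chain by a group element -/
def sh (g : Γ) (c : P → R) : P → R := fun p => c (g⁻¹ • p)

lemma sh_apply (g : Γ) (c : P → R) (p : P) : sh g c p = c (g⁻¹ • p) := rfl

lemma sh_zero (g : Γ) : sh g (0 : P → R) = 0 := rfl

lemma sh_add (g : Γ) (c d : P → R) : sh g (c + d) = sh g c + sh g d := rfl

lemma sh_sub (g : Γ) (c d : P → R) : sh g (c - d) = sh g c - sh g d := rfl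

lemma sh_sh (g h : Γ) (c : P → R) : sh g (sh h c) = sh (g * h) c := by
  funext p; simp [sh, mul_smul]

lemma sh_one (c : P → R) : sh (1 : Γ) c = c := by
  funext p; simp [sh]

lemma sh_inv_sh (g : Γ) (c : P → R) : sh g⁻¹ (sh g c) = c := by
  rw [sh_sh]; simp [sh_one]

lemma fc_sh (g : Γ) {c : P → R} (hc : IsFloerChain 𝔠.act c) :
    IsFloerChain 𝔠.act (sh g c) := by
  intro C
  have himg : {p : P | sh g c p ≠ 0 ∧ C < 𝔠.act p} ⊆
      (fun p' => g • p') '' {p' : P | c p' ≠ 0 ∧ C + 𝔠.per g < 𝔠.act p'} := by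
    intro p hp
    refine ⟨g⁻¹ • p, ⟨hp.1, ?_⟩, by simp⟩
    rw [act_inv_smul]
    have := hp.2
    linarith
  exact (Set.Finite.image _ (hc (C + 𝔠.per g))).subset himg

lemma sh_supp {g : Γ} {c : P → R} {p : P} (hp : sh g c p ≠ 0) :
    c (g⁻¹ • p) ≠ 0 ∧ 𝔠.act (g⁻¹ • p) = 𝔠.act p + 𝔠.per g :=
  ⟨hp, act_inv_smul 𝔠 g p⟩

lemma level_sh_le_iff {g : Γ} {c : P → R} {t : ℝ} :
    floerLevel 𝔠.act (sh g c) ≤ (t : EReal) ↔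
      floerLevel 𝔠.act c ≤ ((t + 𝔠.per g : ℝ) : EReal) := by
  rw [level_le_iff, level_le_iff]
  constructor
  · intro h p hp
    have := h (g • p) (by simpa [sh] using hp)
    rw [𝔠.act_smul] at this
    linarith
  · intro h p hp
    have := h (g⁻¹ • p) hp
    rw [act_inv_smul] at this
    linarith

section bdry

variable {c d : P → R}

lemma bdry_supp_fin (hc : IsFloerChain 𝔠.act c) (q : P) :
    (Function.support fun p => c p * 𝔠.bnd p q).Finite := by
  apply (hc (𝔠.act q)).subset
  intro p hp
  rw [Function.mem_support] at hp
  have h1 : c p ≠ 0 := fun h => hp (by simp [h])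
  have h2 : 𝔠.bnd p q ≠ 0 := fun h => hp (by simp [h])
  exact ⟨h1, 𝔠.bnd_vanish p q h2⟩

lemma bdry_sub (hc : IsFloerChain 𝔠.act c) (hd : IsFloerChain 𝔠.act d) :
    floerBdry 𝔠.bnd (c - d) = floerBdry 𝔠.bnd c - floerBdry 𝔠.bnd d := by
  funext q
  have : (fun p => (c - d) p * 𝔠.bnd p q) = fun p => c p * 𝔠.bnd p q - d p * 𝔠.bnd p q := by
    funext p; simp [sub_mul]
  rw [floerBdry, Pi.sub_apply, floerBdry, floerBdry, this]
  exact finsum_sub_distrib (bdry_supp_fin 𝔠 hc q) (bdry_supp_fin 𝔠 hd q)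

lemma bdry_add (hc : IsFloerChain 𝔠.act c) (hd : IsFloerChain 𝔠.act d) :
    floerBdry 𝔠.bnd (c + d) = floerBdry 𝔠.bnd c + floerBdry 𝔠.bnd d := by
  funext q
  have : (fun p => (c + d) p * 𝔠.bnd p q) = fun p => c p * 𝔠.bnd p q + d p * 𝔠.bnd p q := by
    funext p; simp [add_mul]
  rw [floerBdry, Pi.add_apply, floerBdry, floerBdry, this]
  exact finsum_add_distrib (bdry_supp_fin 𝔠 hc q) (bdry_supp_fin 𝔠 hd q)

lemma bdry_zero : floerBdry 𝔠.bnd (0 : P → R) = 0 := by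
  funext q; rw [floerBdry]; simp

lemma bdry_neg (hc : IsFloerChain 𝔠.act c) :
    floerBdry 𝔠.bnd (-c) = - floerBdry 𝔠.bnd c := by
  have h := bdry_sub 𝔠 (fc_zero 𝔠.act) hc
  rw [bdry_zero] at h
  simpa using h

lemma bdry_smul (r : R) (hc : IsFloerChain 𝔠.act c) :
    floerBdry 𝔠.bnd (fun p => r * c p) = fun q => r * floerBdry 𝔠.bnd c q := by
  funext q
  rw [floerBdry, floerBdry]
  rw [mul_finsum' _ r (bdry_supp_fin 𝔠 hc q)]
  apply finsum_congr; intro p; ring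

lemma bdry_finset_sum {ι : Type*} (s : Finset ι) (f : ι → P → R)
    (hf : ∀ i ∈ s, IsFloerChain 𝔠.act (f i)) :
    floerBdry 𝔠.bnd (∑ i ∈ s, f i) = ∑ i ∈ s, floerBdry 𝔠.bnd (f i) := by
  classical
  induction s using Finset.induction_on with
  | empty => simpa using bdry_zero 𝔠
  | @insert a s' hx ih =>
      rw [Finset.sum_insert hx, Finset.sum_insert hx,
        bdry_add 𝔠 (hf a (Finset.mem_insert_self a s'))
          (fc_finset_sum s' f fun i hi => hf i (Finset.mem_insert_of_mem hi)),
        ih fun i hi => hf i (Finset.mem_insert_of_mem hi)]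

lemma bdry_supp {q : P} (h : floerBdry 𝔠.bnd c q ≠ 0) :
    ∃ p, c p ≠ 0 ∧ 𝔠.act q < 𝔠.act p := by
  by_contra hcon
  push_neg at hcon
  apply h
  rw [floerBdry]
  apply finsum_eq_zero_of_forall_eq_zero
  intro p
  by_cases h1 : c p = 0
  · simp [h1]
  · by_cases h2 : 𝔠.bnd p q = 0
    · simp [h2]
    · exact absurd (𝔠.bnd_vanish p q h2) (not_lt.2 (hcon p h1))

lemma bdry_sh (g : Γ) (c : P → R) :
    floerBdry 𝔠.bnd (sh g c) = sh g (floerBdry 𝔠.bnd c) := by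
  funext q
  rw [floerBdry, sh_apply, floerBdry]
  have := finsum_comp_equiv (MulAction.toPerm g (α := Γ) (β := P))
    (f := fun p => sh g c p * 𝔠.bnd p q)
  rw [← this]
  apply finsum_congr
  intro p
  have h1 : sh g c (g • p) = c p := by simp [sh]
  have h2 : 𝔠.bnd (g • p) q = 𝔠.bnd p (g⁻¹ • q) := by
    have := 𝔠.bnd_equivariant g p (g⁻¹ • q)
    rw [smul_inv_smul] at this
    exact this
  simp only [MulAction.toPerm_apply, h1, h2]

end bdry

end complex

section orbits

variable (𝔠 : FloerComplex R Γ P)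

/-- the orbit space -/
abbrev QT (𝔠 : FloerComplex R Γ P) := MulAction.orbitRel.Quotient Γ P

/-- class of a point -/
def qmk (𝔠 : FloerComplex R Γ P) (p : P) : QT 𝔠 := Quotient.mk'' p

/-- the action value of the basepoint of an orbit -/
def aLev (i : QT 𝔠) : ℝ := 𝔠.act i.out

lemma qdec (p : P) : ∃ g : Γ, p = g • (qmk 𝔠 p).out := by
  have h : (MulAction.orbitRel Γ P) ((qmk 𝔠 p).out) p := Quotient.mk_out' p
  rw [MulAction.orbitRel_apply, MulAction.mem_orbit_iff] at h
  obtain ⟨g, hg⟩ := h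
  exact ⟨g⁻¹, by rw [← hg]; simp⟩

lemma act_dec {p : P} {g : Γ} (h : p = g • (qmk 𝔠 p).out) :
    𝔠.per g = aLev 𝔠 (qmk 𝔠 p) - 𝔠.act p := by
  have := 𝔠.act_smul g ((qmk 𝔠 p).out)
  rw [← h] at this
  rw [aLev]; linarith

lemma smul_eq_unique (hfree : ∀ (g : Γ) (p : P), g • p = p → g = 1)
    {g g' : Γ} {p : P} (h : g • p = g' • p) : g = g' := by
  have h2 : (g'⁻¹ * g) • p = p := by rw [mul_smul, h]; simp
  have h1 := hfree _ _ h2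
  have h3 : g' * (g'⁻¹ * g) = g' * 1 := by rw [h1]
  simpa [mul_assoc] using h3

/-- the kernel of the period homomorphism -/
def Kg (𝔠 : FloerComplex R Γ P) : Subgroup Γ where
  carrier := {g | 𝔠.per g = 0}
  mul_mem' := by
    intro a b ha hb
    simp only [Set.mem_setOf_eq] at *
    rw [𝔠.per_hom]; linarith
  one_mem' := per_one 𝔠
  inv_mem' := by
    intro a ha
    simp only [Set.mem_setOf_eq] at *
    rw [per_inv]; linarith

lemma per_Kg (k : ↥(Kg 𝔠)) : 𝔠.per (k : Γ) = 0 := k.2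

lemma act_Kg_smul (k : ↥(Kg 𝔠)) (p : P) : 𝔠.act ((k : Γ) • p) = 𝔠.act p := by
  rw [𝔠.act_smul, per_Kg]; ring

lemma Kg_fg [Group.FG Γ] : Group.FG ↥(Kg 𝔠) := by
  rw [Group.fg_iff_subgroup_fg, Subgroup.fg_iff_add_fg]
  haveI : Module.Finite ℤ (Additive Γ) := Module.Finite.iff_addGroup_fg.mpr inferInstance
  haveI : IsNoetherian ℤ (Additive Γ) := isNoetherian_of_isNoetherianRing_of_finite ℤ (Additive Γ)
  have h : (AddSubgroup.toIntSubmodule ((Kg 𝔠).toAddSubgroup)).FG := IsNoetherian.noetherian _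
  have h2 := (Submodule.fg_iff_addSubgroup_fg _).1 h
  rwa [AddSubgroup.toIntSubmodule_toAddSubgroup] at h2

lemma na_noetherian [Group.FG Γ] [IsNoetherianRing R] :
    IsNoetherianRing (MonoidAlgebra R ↥(Kg 𝔠)) := by
  haveI : Monoid.FG ↥(Kg 𝔠) := Group.fg_iff_monoid_fg.mp (Kg_fg 𝔠)
  exact Algebra.FiniteType.isNoetherianRing R (MonoidAlgebra R ↥(Kg 𝔠))

end orbits

section psi

variable (𝔠 : FloerComplex R Γ P)

/-- whether orbit `j` could have points at level `aLev i` -/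
def bex (i j : QT 𝔠) : Prop := ∃ g : Γ, 𝔠.per g = aLev 𝔠 j - aLev 𝔠 i

/-- basepoint for orbit `j` at level `aLev i` -/
def bpt (i j : QT 𝔠) : P :=
  if h : bex 𝔠 i j then (Classical.choose h) • j.out else j.out

lemma act_bpt {i j : QT 𝔠} (h : bex 𝔠 i j) : 𝔠.act (bpt 𝔠 i j) = aLev 𝔠 i := by
  have hs := Classical.choose_spec h
  rw [bpt, dif_pos h, 𝔠.act_smul]
  unfold aLev at hs ⊢
  linarith

/-- action of the group algebra of `Kg` on chains -/
def rho (α : MonoidAlgebra R ↥(Kg 𝔠)) (c : P → R) : P → R :=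
  fun p => α.coeff.sum fun k r => r * c ((k : Γ)⁻¹ • p)

lemma rho_eq_sum (α : MonoidAlgebra R ↥(Kg 𝔠)) (c : P → R) :
    rho 𝔠 α c = ∑ k ∈ α.coeff.support, (fun p => α.coeff k * sh ((k : ↥(Kg 𝔠)) : Γ) c p) := by
  funext p
  rw [rho, Finsupp.sum, Finset.sum_apply]
  rfl

lemma fc_rho (α : MonoidAlgebra R ↥(Kg 𝔠)) {c : P → R} (hc : IsFloerChain 𝔠.act c) :
    IsFloerChain 𝔠.act (rho 𝔠 α c) := by
  rw [rho_eq_sum]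
  exact fc_finset_sum _ _ fun k _ => fc_smul _ (fc_sh 𝔠 _ hc)

lemma bdry_rho (α : MonoidAlgebra R ↥(Kg 𝔠)) {c : P → R} (hc : IsFloerChain 𝔠.act c) :
    floerBdry 𝔠.bnd (rho 𝔠 α c) = rho 𝔠 α (floerBdry 𝔠.bnd c) := by
  rw [rho_eq_sum, rho_eq_sum]
  rw [bdry_finset_sum 𝔠 _ _ fun k _ => fc_smul _ (fc_sh 𝔠 _ hc)]
  apply Finset.sum_congr rfl
  intro k _
  rw [bdry_smul 𝔠 _ (fc_sh 𝔠 _ hc), bdry_sh]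

lemma rho_supp {α : MonoidAlgebra R ↥(Kg 𝔠)} {c : P → R} {p : P}
    (hp : rho 𝔠 α c p ≠ 0) : ∃ p', c p' ≠ 0 ∧ 𝔠.act p' = 𝔠.act p := by
  rw [rho, Finsupp.sum] at hp
  obtain ⟨k, _, hk⟩ := Finset.exists_ne_zero_of_sum_ne_zero hp
  refine ⟨((k : ↥(Kg 𝔠)) : Γ)⁻¹ • p, fun h => hk (by rw [h]; ring), ?_⟩
  rw [act_inv_smul, per_Kg]
  ring

lemma rho_zero (c : P → R) : rho 𝔠 (0 : MonoidAlgebra R ↥(Kg 𝔠)) c = 0 := by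
  funext p; rw [rho, MonoidAlgebra.coeff_zero, Finsupp.sum_zero_index]; rfl

lemma rho_add (α β : MonoidAlgebra R ↥(Kg 𝔠)) (c : P → R) :
    rho 𝔠 (α + β) c = rho 𝔠 α c + rho 𝔠 β c := by
  funext p
  rw [Pi.add_apply, rho, rho, rho, MonoidAlgebra.coeff_add]
  exact Finsupp.sum_add_index' (fun k => by simp) (fun k r s => by ring)

lemma rho_single (u : ↥(Kg 𝔠)) (r : R) (c : P → R) :
    rho 𝔠 (MonoidAlgebra.single u r) c = fun p => r * c ((u : Γ)⁻¹ • p) := by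
  funext p
  rw [rho, MonoidAlgebra.coeff_single, Finsupp.sum_single_index (by simp)]

/-- the leading-coefficient vector of a chain at level `aLev i` -/
def psi (i : QT 𝔠) (c : P → R) (j : QT 𝔠) : MonoidAlgebra R ↥(Kg 𝔠) :=
  if h : bex 𝔠 i j ∧ {k : ↥(Kg 𝔠) | c ((k : Γ) • bpt 𝔠 i j) ≠ 0}.Finite then
    MonoidAlgebra.ofCoeff ⟨h.2.toFinset, fun k => c ((k : Γ) • bpt 𝔠 i j), by intro k; simp⟩
  else 0

lemma psi_fin {c : P → R} (hc : IsFloerChain 𝔠.act c) (b : P) :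
    {k : ↥(Kg 𝔠) | c ((k : Γ) • b) ≠ 0}.Finite := by
  have hinj : Set.InjOn (fun k : ↥(Kg 𝔠) => (k : Γ) • b)
      {k : ↥(Kg 𝔠) | c ((k : Γ) • b) ≠ 0} := by
    intro k _ k' _ h
    exact Subtype.ext (smul_eq_unique 𝔠.free h)
  apply Set.Finite.of_finite_image _ hinj
  apply (hc (𝔠.act b - 1)).subset
  rintro q ⟨k, hk, rfl⟩
  refine ⟨hk, ?_⟩
  rw [act_Kg_smul]
  linarith

lemma psi_apply' {c : P → R} (hc : IsFloerChain 𝔠.act c) {i j : QT 𝔠} (hb : bex 𝔠 i j)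
    (k : ↥(Kg 𝔠)) : (psi 𝔠 i c j).coeff k = c ((k : Γ) • bpt 𝔠 i j) := by
  rw [psi, dif_pos ⟨hb, psi_fin 𝔠 hc _⟩]
  simp

lemma psi_not_bex {c : P → R} {i j : QT 𝔠} (hb : ¬ bex 𝔠 i j) : psi 𝔠 i c j = 0 := by
  rw [psi, dif_neg (fun h => hb h.1)]

lemma psi_zero (i : QT 𝔠) : psi 𝔠 i (0 : P → R) = 0 := by
  funext j
  by_cases hb : bex 𝔠 i j
  · ext k
    rw [psi_apply' 𝔠 (fc_zero 𝔠.act) hb]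
    rfl
  · rw [psi_not_bex 𝔠 hb]; rfl

lemma psi_add {c d : P → R} (hc : IsFloerChain 𝔠.act c) (hd : IsFloerChain 𝔠.act d)
    (i : QT 𝔠) : psi 𝔠 i (c + d) = psi 𝔠 i c + psi 𝔠 i d := by
  funext j
  by_cases hb : bex 𝔠 i j
  · ext k
    rw [Pi.add_apply, MonoidAlgebra.coeff_add, Finsupp.add_apply, psi_apply' 𝔠 (fc_add hc hd) hb,
      psi_apply' 𝔠 hc hb, psi_apply' 𝔠 hd hb]
    rfl
  · rw [Pi.add_apply, psi_not_bex 𝔠 hb, psi_not_bex 𝔠 hb, psi_not_bex 𝔠 hb]; simp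

lemma psi_smul {c : P → R} (hc : IsFloerChain 𝔠.act c) (i : QT 𝔠)
    (α : MonoidAlgebra R ↥(Kg 𝔠)) :
    psi 𝔠 i (rho 𝔠 α c) = α • psi 𝔠 i c := by
  induction α using MonoidAlgebra.induction_linear with
  | zero => rw [rho_zero, psi_zero]; simp
  | add f g hf hg =>
      rw [rho_add, psi_add 𝔠 (fc_rho 𝔠 f hc) (fc_rho 𝔠 g hc), hf, hg, add_smul]
  | single u r =>
      funext j
      by_cases hb : bex 𝔠 i j
      · ext k
        rw [psi_apply' 𝔠 (fc_rho 𝔠 _ hc) hb, rho_single]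
        have hrhs : ((MonoidAlgebra.single u r • psi 𝔠 i c) j).coeff k
            = r * (psi 𝔠 i c j).coeff (u⁻¹ * k) := by
          rw [Pi.smul_apply, smul_eq_mul, MonoidAlgebra.coeff_single_mul_apply]
        rw [hrhs, psi_apply' 𝔠 hc hb]
        have huk : ((↑(u⁻¹ * k) : Γ)) • bpt 𝔠 i j = (u : Γ)⁻¹ • (k : Γ) • bpt 𝔠 i j := by
          rw [Subgroup.coe_mul, mul_smul]
          norm_cast
        rw [huk]
      · rw [Pi.smul_apply, psi_not_bex 𝔠 hb, psi_not_bex 𝔠 hb, smul_eq_mul, mul_zero]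

lemma psi_eq_of_agree {c d : P → R} (hc : IsFloerChain 𝔠.act c) (hd : IsFloerChain 𝔠.act d)
    {i : QT 𝔠} (hag : ∀ p, 𝔠.act p = aLev 𝔠 i → c p = d p) : psi 𝔠 i c = psi 𝔠 i d := by
  funext j
  by_cases hb : bex 𝔠 i j
  · ext k
    rw [psi_apply' 𝔠 hc hb, psi_apply' 𝔠 hd hb]
    apply hag
    rw [act_Kg_smul, act_bpt 𝔠 hb]
  · rw [psi_not_bex 𝔠 hb, psi_not_bex 𝔠 hb]

lemma exists_bpt_decomp {i : QT 𝔠} {p : P} (hp : 𝔠.act p = aLev 𝔠 i) :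
    ∃ (j : QT 𝔠) (k : ↥(Kg 𝔠)), bex 𝔠 i j ∧ p = (k : Γ) • bpt 𝔠 i j := by
  obtain ⟨g, hg⟩ := qdec 𝔠 p
  have hper : 𝔠.per g = aLev 𝔠 (qmk 𝔠 p) - aLev 𝔠 i := by
    rw [act_dec 𝔠 hg, hp]
  have hb : bex 𝔠 i (qmk 𝔠 p) := ⟨g, hper⟩
  set g₁ := Classical.choose hb with hg₁
  have hg₁s : 𝔠.per g₁ = aLev 𝔠 (qmk 𝔠 p) - aLev 𝔠 i := Classical.choose_spec hb
  have hkper : 𝔠.per (g * g₁⁻¹) = 0 := by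
    rw [𝔠.per_hom, per_inv]
    linarith
  refine ⟨qmk 𝔠 p, ⟨g * g₁⁻¹, hkper⟩, hb, ?_⟩
  rw [bpt, dif_pos hb, ← hg₁]
  show p = (g * g₁⁻¹) • g₁ • (qmk 𝔠 p).out
  rw [← mul_smul, inv_mul_cancel_right]
  exact hg

end psi

section reduction

variable (𝔠 : FloerComplex R Γ P)

lemma psi_finset_sum (i : QT 𝔠) {ι : Type*} (s : Finset ι) (F : ι → P → R)
    (hF : ∀ m ∈ s, IsFloerChain 𝔠.act (F m)) :
    psi 𝔠 i (∑ m ∈ s, F m) = ∑ m ∈ s, psi 𝔠 i (F m) := by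
  classical
  induction s using Finset.induction_on with
  | empty => simpa using psi_zero 𝔠 i
  | @insert m s' hx ih =>
      rw [Finset.sum_insert hx, Finset.sum_insert hx,
        psi_add 𝔠 (hF m (Finset.mem_insert_self m s'))
          (fc_finset_sum s' F fun m' hm' => hF m' (Finset.mem_insert_of_mem hm')) i,
        ih fun m' hm' => hF m' (Finset.mem_insert_of_mem hm')]

lemma gap_of_chain {d : P → R} (hd : IsFloerChain 𝔠.act d) (a : ℝ) :
    ∃ δ : ℝ, 0 < δ ∧ δ ≤ 1 ∧ ∀ p, d p ≠ 0 → 𝔠.act p < a → 𝔠.act p ≤ a - δ := by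
  set S := {p : P | d p ≠ 0 ∧ a - 1 < 𝔠.act p ∧ 𝔠.act p < a} with hS
  have hSfin : S.Finite := by
    apply (hd (a - 1)).subset
    intro p hp
    exact ⟨hp.1, hp.2.1⟩
  by_cases hne : S.Nonempty
  · have hFne : hSfin.toFinset.Nonempty := by
      rwa [Set.Finite.toFinset_nonempty]
    obtain ⟨m, hmF, hmax⟩ := Finset.exists_max_image hSfin.toFinset 𝔠.act hFne
    rw [Set.Finite.mem_toFinset] at hmF
    refine ⟨a - 𝔠.act m, by linarith [hmF.2.2], by linarith [hmF.2.1], ?_⟩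
    intro p hp hpa
    by_cases hp1 : a - 1 < 𝔠.act p
    · have hpS : p ∈ hSfin.toFinset := by
        rw [Set.Finite.mem_toFinset]; exact ⟨hp, hp1, hpa⟩
      have := hmax p hpS
      linarith
    · push_neg at hp1
      linarith [hmF.2.1]
  · refine ⟨1, one_pos, le_refl 1, ?_⟩
    intro p hp hpa
    by_contra hcon
    push_neg at hcon
    exact hne ⟨p, hp, by linarith, hpa⟩

lemma height_of_chain {d : P → R} (hd : IsFloerChain 𝔠.act d) (a : ℝ) :
    ∃ β : ℝ, 0 ≤ β ∧ ∀ p, d p ≠ 0 → 𝔠.act p ≤ a + β := by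
  by_cases hne : d = 0
  · exact ⟨0, le_refl 0, fun p hp => absurd (by rw [hne]; rfl) hp⟩
  · obtain ⟨m, hm, hmax⟩ := exists_max hd hne
    refine ⟨max (𝔠.act m - a) 0, le_max_right _ _, ?_⟩
    intro p hp
    have := hmax p hp
    have h2 : 𝔠.act m - a ≤ max (𝔠.act m - a) 0 := le_max_left _ _
    linarith

/-- the leading-term module at level `aLev i` -/
def Vmod [Group.FG Γ] [IsNoetherianRing R] (i : QT 𝔠) :
    Submodule (MonoidAlgebra R ↥(Kg 𝔠)) (QT 𝔠 → MonoidAlgebra R ↥(Kg 𝔠)) where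
  carrier := {v | ∃ H : P → R, IsFloerChain 𝔠.act H ∧
    (∀ p, floerBdry 𝔠.bnd H p ≠ 0 → 𝔠.act p ≤ aLev 𝔠 i) ∧
    v = psi 𝔠 i (floerBdry 𝔠.bnd H)}
  zero_mem' := ⟨0, fc_zero _, by rw [bdry_zero]; simp, by rw [bdry_zero, psi_zero]⟩
  add_mem' := by
    rintro v w ⟨H, hH, hlev, rfl⟩ ⟨H', hH', hlev', rfl⟩
    refine ⟨H + H', fc_add hH hH', ?_, ?_⟩
    · intro p hp
      rw [bdry_add 𝔠 hH hH', Pi.add_apply] at hp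
      by_cases h1 : floerBdry 𝔠.bnd H p ≠ 0
      · exact hlev p h1
      · push_neg at h1
        apply hlev' p
        intro h2
        rw [h1, h2, add_zero] at hp
        exact hp rfl
    · rw [bdry_add 𝔠 hH hH',
        psi_add 𝔠 (𝔠.bdry_isChain H hH) (𝔠.bdry_isChain H' hH')]
  smul_mem' := by
    rintro α v ⟨H, hH, hlev, rfl⟩
    refine ⟨rho 𝔠 α H, fc_rho 𝔠 α hH, ?_, ?_⟩
    · intro p hp
      rw [bdry_rho 𝔠 α hH] at hp
      obtain ⟨p', hp', hact⟩ := rho_supp 𝔠 hp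
      rw [← hact]
      exact hlev p' hp'
    · rw [bdry_rho 𝔠 α hH, psi_smul 𝔠 (𝔠.bdry_isChain H hH)]

lemma orbit_reduce [Group.FG Γ] [IsNoetherianRing R] (i : QT 𝔠) :
    ∃ δ β : ℝ, 0 < δ ∧ δ ≤ 1 ∧ 0 ≤ β ∧
      ∀ y : P → R, IsFloerChain 𝔠.act y →
        (∀ p, y p ≠ 0 → 𝔠.act p ≤ aLev 𝔠 i) →
        (∃ w, IsFloerChain 𝔠.act w ∧
          ∀ p, (y - floerBdry 𝔠.bnd w) p ≠ 0 → 𝔠.act p < aLev 𝔠 i) →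
        ∃ h, IsFloerChain 𝔠.act h ∧
          (∀ p, h p ≠ 0 → 𝔠.act p ≤ aLev 𝔠 i + β) ∧
          (∀ p, (y - floerBdry 𝔠.bnd h) p ≠ 0 → 𝔠.act p < aLev 𝔠 i) ∧
          (∀ p, floerBdry 𝔠.bnd h p ≠ 0 →
            𝔠.act p = aLev 𝔠 i ∨ 𝔠.act p ≤ aLev 𝔠 i - δ) := by
  classical
  haveI : IsNoetherianRing (MonoidAlgebra R ↥(Kg 𝔠)) := na_noetherian 𝔠
  haveI := 𝔠.finiteOrbits
  haveI : Fintype (QT 𝔠) := Fintype.ofFinite _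
  obtain ⟨s, hs⟩ := IsNoetherian.noetherian (Vmod 𝔠 i)
  have hsmem : ∀ m ∈ s, (m : QT 𝔠 → MonoidAlgebra R ↥(Kg 𝔠)) ∈ Vmod 𝔠 i := by
    intro m hm
    rw [← hs]
    exact Submodule.subset_span hm
  -- aggregate constants over the finite generating set
  have agg : ∀ s' : Finset (QT 𝔠 → MonoidAlgebra R ↥(Kg 𝔠)),
      (∀ m ∈ s', m ∈ Vmod 𝔠 i) →
      ∃ δ β : ℝ, 0 < δ ∧ δ ≤ 1 ∧ 0 ≤ β ∧
        ∀ m ∈ s', ∃ H : P → R, IsFloerChain 𝔠.act H ∧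
          (∀ p, floerBdry 𝔠.bnd H p ≠ 0 → 𝔠.act p ≤ aLev 𝔠 i) ∧
          m = psi 𝔠 i (floerBdry 𝔠.bnd H) ∧
          (∀ p, floerBdry 𝔠.bnd H p ≠ 0 → 𝔠.act p < aLev 𝔠 i →
            𝔠.act p ≤ aLev 𝔠 i - δ) ∧
          (∀ p, H p ≠ 0 → 𝔠.act p ≤ aLev 𝔠 i + β) := by
    intro s'
    induction s' using Finset.induction_on with
    | empty =>
        intro _
        exact ⟨1, 0, one_pos, le_refl 1, le_refl 0, fun m hm => absurd hm (by simp)⟩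
    | @insert m s'' hx ih =>
        intro hmem
        obtain ⟨δ', β', hδ'0, hδ'1, hβ'0, hprops⟩ :=
          ih fun m' hm' => hmem m' (Finset.mem_insert_of_mem hm')
        obtain ⟨H, hH, hlev, hpsi⟩ := hmem m (Finset.mem_insert_self m s'')
        obtain ⟨δm, hδm0, hδm1, hδm⟩ := gap_of_chain 𝔠 (𝔠.bdry_isChain H hH) (aLev 𝔠 i)
        obtain ⟨βm, hβm0, hβm⟩ := height_of_chain 𝔠 hH (aLev 𝔠 i)
        refine ⟨min δ' δm, max β' βm, lt_min hδ'0 hδm0,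
          min_le_of_left_le hδ'1, le_max_of_le_left hβ'0, ?_⟩
        intro m' hm'
        rcases Finset.mem_insert.mp hm' with h | h
        · subst h
          refine ⟨H, hH, hlev, hpsi, ?_, ?_⟩
          · intro p hp hlt
            have := hδm p hp hlt
            have h2 : min δ' δm ≤ δm := min_le_right _ _
            linarith
          · intro p hp
            have := hβm p hp
            have h2 : βm ≤ max β' βm := le_max_right _ _
            linarith
        · obtain ⟨H', hH', hlev', hpsi', hgap', hht'⟩ := hprops m' h
          refine ⟨H', hH', hlev', hpsi', ?_, ?_⟩
          · intro p hp hlt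
            have := hgap' p hp hlt
            have h2 : min δ' δm ≤ δ' := min_le_left _ _
            linarith
          · intro p hp
            have := hht' p hp
            have h2 : β' ≤ max β' βm := le_max_left _ _
            linarith
  obtain ⟨δ, β, hδ0, hδ1, hβ0, hprops⟩ := agg s hsmem
  refine ⟨δ, β, hδ0, hδ1, hβ0, ?_⟩
  intro y hy hylev ⟨w, hw, hred⟩
  -- ψ i y lies in the leading module
  have hbdryw : IsFloerChain 𝔠.act (floerBdry 𝔠.bnd w) := 𝔠.bdry_isChain w hw
  have hagree : ∀ p, 𝔠.act p = aLev 𝔠 i → y p = floerBdry 𝔠.bnd w p := by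
    intro p hp
    by_contra hne
    have hsub : (y - floerBdry 𝔠.bnd w) p ≠ 0 := by
      rw [Pi.sub_apply, sub_ne_zero]; exact hne
    have := hred p hsub
    linarith [hp.ge]
  have hvmem : psi 𝔠 i y ∈ Vmod 𝔠 i := by
    refine ⟨w, hw, ?_, ?_⟩
    · intro p hp
      by_cases h1 : (y - floerBdry 𝔠.bnd w) p ≠ 0
      · exact le_of_lt (hred p h1)
      · push_neg at h1
        rw [Pi.sub_apply, sub_eq_zero] at h1
        rw [← h1] at hp
        exact hylev p hp
    · exact psi_eq_of_agree 𝔠 hy hbdryw hagree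
  rw [← hs] at hvmem
  rw [Submodule.mem_span_finset] at hvmem
  obtain ⟨f, -, hf⟩ := hvmem
  -- realizer choice
  set HF : (QT 𝔠 → MonoidAlgebra R ↥(Kg 𝔠)) → (P → R) := fun m =>
    if hm : m ∈ s then Classical.choose (hprops m hm) else 0 with hHF
  have hHFspec : ∀ m (hm : m ∈ s),
      IsFloerChain 𝔠.act (HF m) ∧
      (∀ p, floerBdry 𝔠.bnd (HF m) p ≠ 0 → 𝔠.act p ≤ aLev 𝔠 i) ∧
      m = psi 𝔠 i (floerBdry 𝔠.bnd (HF m)) ∧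
      (∀ p, floerBdry 𝔠.bnd (HF m) p ≠ 0 → 𝔠.act p < aLev 𝔠 i →
        𝔠.act p ≤ aLev 𝔠 i - δ) ∧
      (∀ p, HF m p ≠ 0 → 𝔠.act p ≤ aLev 𝔠 i + β) := by
    intro m hm
    rw [hHF]
    simp only [dif_pos hm]
    exact Classical.choose_spec (hprops m hm)
  set Mh : P → R := ∑ m ∈ s.attach, rho 𝔠 (f m.1) (HF m.1) with hMh
  have hMhfc : IsFloerChain 𝔠.act Mh :=
    fc_finset_sum _ _ fun m _ => fc_rho 𝔠 _ (hHFspec m.1 m.2).1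
  have hMhbdry : floerBdry 𝔠.bnd Mh
      = ∑ m ∈ s.attach, rho 𝔠 (f m.1) (floerBdry 𝔠.bnd (HF m.1)) := by
    rw [hMh, bdry_finset_sum 𝔠 _ _ fun m _ => fc_rho 𝔠 _ (hHFspec m.1 m.2).1]
    apply Finset.sum_congr rfl
    intro m _
    exact bdry_rho 𝔠 _ (hHFspec m.1 m.2).1
  have hpsiMh : psi 𝔠 i (floerBdry 𝔠.bnd Mh) = psi 𝔠 i y := by
    rw [hMhbdry, psi_finset_sum 𝔠 i _ _
      (fun m _ => fc_rho 𝔠 _ (𝔠.bdry_isChain _ (hHFspec m.1 m.2).1))]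
    have : ∀ m ∈ s.attach, psi 𝔠 i (rho 𝔠 (f m.1) (floerBdry 𝔠.bnd (HF m.1)))
        = f m.1 • m.1 := by
      intro m _
      rw [psi_smul 𝔠 (𝔠.bdry_isChain _ (hHFspec m.1 m.2).1)]
      rw [← (hHFspec m.1 m.2).2.2.1]
    rw [Finset.sum_congr rfl this]
    rw [Finset.sum_attach s (fun m => f m • m)]
    exact hf
  -- support bounds for the boundary of Mh
  have hMhbdd : ∀ p, floerBdry 𝔠.bnd Mh p ≠ 0 →
      𝔠.act p = aLev 𝔠 i ∨ 𝔠.act p ≤ aLev 𝔠 i - δ := by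
    intro p hp
    rw [hMhbdry] at hp
    rw [Finset.sum_apply] at hp
    obtain ⟨m, hm, hmp⟩ := Finset.exists_ne_zero_of_sum_ne_zero hp
    obtain ⟨p', hp', hact⟩ := rho_supp 𝔠 hmp
    rcases lt_or_eq_of_le ((hHFspec m.1 m.2).2.1 p' hp') with hlt | heq
    · right
      have := (hHFspec m.1 m.2).2.2.2.1 p' hp' hlt
      linarith [hact.symm.le, hact.le]
    · left; rw [← hact]; exact heq
  have hMhht : ∀ p, Mh p ≠ 0 → 𝔠.act p ≤ aLev 𝔠 i + β := by
    intro p hp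
    rw [hMh, Finset.sum_apply] at hp
    obtain ⟨m, hm, hmp⟩ := Finset.exists_ne_zero_of_sum_ne_zero hp
    obtain ⟨p', hp', hact⟩ := rho_supp 𝔠 hmp
    rw [← hact]
    exact (hHFspec m.1 m.2).2.2.2.2 p' hp'
  refine ⟨Mh, hMhfc, hMhht, ?_, hMhbdd⟩
  -- the difference drops strictly below level `aLev i`
  intro p hp
  have hple : 𝔠.act p ≤ aLev 𝔠 i := by
    rw [Pi.sub_apply] at hp
    by_cases h1 : y p ≠ 0
    · exact hylev p h1
    · push_neg at h1
      have h2 : floerBdry 𝔠.bnd Mh p ≠ 0 := by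
        intro h; rw [h1, h, sub_zero] at hp; exact hp rfl
      rcases hMhbdd p h2 with h | h
      · exact h.le
      · linarith
  rcases lt_or_eq_of_le hple with h | h
  · exact h
  · exfalso
    apply hp
    obtain ⟨j, k, hb, hpd⟩ := exists_bpt_decomp 𝔠 h
    rw [Pi.sub_apply, sub_eq_zero, hpd]
    have h1 := psi_apply' 𝔠 hy hb k
    have h2 := psi_apply' 𝔠 (𝔠.bdry_isChain _ hMhfc) hb k
    rw [← h1, ← h2, hpsiMh]

end reduction

section keystep

variable (𝔠 : FloerComplex R Γ P)

lemma key_step [Group.FG Γ] [IsNoetherianRing R] :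
    ∃ δ β : ℝ, 0 < δ ∧ 0 ≤ β ∧
      ∀ (x : P → R) (t : ℝ), IsFloerChain 𝔠.act x →
        (∃ p₀, x p₀ ≠ 0 ∧ 𝔠.act p₀ = t) →
        (∀ p, x p ≠ 0 → 𝔠.act p ≤ t) →
        (∃ w, IsFloerChain 𝔠.act w ∧
          ∀ p, (x - floerBdry 𝔠.bnd w) p ≠ 0 → 𝔠.act p < t) →
        ∃ h, IsFloerChain 𝔠.act h ∧
          (∀ p, h p ≠ 0 → 𝔠.act p ≤ t + β) ∧
          (∀ p, (x - floerBdry 𝔠.bnd h) p ≠ 0 → 𝔠.act p < t) ∧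
          (∀ p, floerBdry 𝔠.bnd h p ≠ 0 → 𝔠.act p = t ∨ 𝔠.act p ≤ t - δ) := by
  classical
  haveI := 𝔠.finiteOrbits
  haveI : Fintype (QT 𝔠) := Fintype.ofFinite _
  by_cases hP : Nonempty P
  · haveI : Nonempty (QT 𝔠) := Nonempty.map (qmk 𝔠) hP
    choose Dδ Dβ hcon using fun i => orbit_reduce 𝔠 i
    set δ : ℝ := Finset.univ.inf' Finset.univ_nonempty Dδ with hδdef
    set β : ℝ := Finset.univ.sup' Finset.univ_nonempty Dβ with hβdef
    have hδpos : 0 < δ := by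
      rw [hδdef, Finset.lt_inf'_iff]
      intro i _
      exact (hcon i).1
    have hβnn : 0 ≤ β := by
      obtain ⟨i⟩ := (inferInstance : Nonempty (QT 𝔠))
      exact le_trans (hcon i).2.2.1 (Finset.le_sup' Dβ (Finset.mem_univ i))
    refine ⟨δ, β, hδpos, hβnn, ?_⟩
    intro x t hx ⟨p₀, hp₀, hact₀⟩ hbd ⟨w, hw, hred⟩
    set i₀ := qmk 𝔠 p₀ with hi₀
    obtain ⟨g₀, hg₀⟩ := qdec 𝔠 p₀
    have hper : 𝔠.per g₀ = aLev 𝔠 i₀ - t := by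
      rw [hi₀, act_dec 𝔠 hg₀, hact₀]
    -- shift x up to the basepoint level
    set y := sh g₀⁻¹ x with hy_def
    have hy : IsFloerChain 𝔠.act y := fc_sh 𝔠 _ hx
    have hyapp : ∀ p, y p = x (g₀ • p) := by
      intro p; rw [hy_def, sh_apply, inv_inv]
    have hact_up : ∀ p : P, 𝔠.act (g₀ • p) = 𝔠.act p - 𝔠.per g₀ := fun p => 𝔠.act_smul g₀ p
    have hybd : ∀ p, y p ≠ 0 → 𝔠.act p ≤ aLev 𝔠 i₀ := by
      intro p hp
      rw [hyapp] at hp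
      have := hbd _ hp
      rw [hact_up] at this
      linarith
    have hyred : ∃ w', IsFloerChain 𝔠.act w' ∧
        ∀ p, (y - floerBdry 𝔠.bnd w') p ≠ 0 → 𝔠.act p < aLev 𝔠 i₀ := by
      refine ⟨sh g₀⁻¹ w, fc_sh 𝔠 _ hw, ?_⟩
      intro p hp
      have hsub : (y - floerBdry 𝔠.bnd (sh g₀⁻¹ w)) p = (x - floerBdry 𝔠.bnd w) (g₀ • p) := by
        rw [Pi.sub_apply, Pi.sub_apply, hyapp, bdry_sh, sh_apply, inv_inv]
      rw [hsub] at hp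
      have := hred _ hp
      rw [hact_up] at this
      linarith
    obtain ⟨h', hh', hht', hred', hgap'⟩ := (hcon i₀).2.2.2 y hy hybd hyred
    refine ⟨sh g₀ h', fc_sh 𝔠 _ hh', ?_, ?_, ?_⟩
    · intro p hp
      rw [sh_apply] at hp
      have := hht' _ hp
      rw [act_inv_smul] at this
      have hDβ : Dβ i₀ ≤ β := Finset.le_sup' Dβ (Finset.mem_univ i₀)
      linarith
    · intro p hp
      have hsub : (x - floerBdry 𝔠.bnd (sh g₀ h')) p
          = (y - floerBdry 𝔠.bnd h') (g₀⁻¹ • p) := by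
        rw [Pi.sub_apply, Pi.sub_apply, hyapp, smul_inv_smul, bdry_sh, sh_apply]
      rw [hsub] at hp
      have := hred' _ hp
      rw [act_inv_smul] at this
      linarith
    · intro p hp
      rw [bdry_sh, sh_apply] at hp
      have hDδ : δ ≤ Dδ i₀ := Finset.inf'_le Dδ (Finset.mem_univ i₀)
      rcases hgap' _ hp with hcase | hcase
      · left
        rw [act_inv_smul] at hcase
        linarith
      · right
        rw [act_inv_smul] at hcase
        linarith
  · refine ⟨1, 0, one_pos, le_refl 0, ?_⟩
    intro x t _ ⟨p₀, _⟩ _ _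
    exact absurd ⟨p₀⟩ hP

end keystep

section series

variable (𝔠 : FloerComplex R Γ P)

lemma fc_finsum (hk : ℕ → P → R) (hfc : ∀ n, IsFloerChain 𝔠.act (hk n))
    (hev : ∀ C : ℝ, ∃ N, ∀ n, N ≤ n → ∀ p, C < 𝔠.act p → hk n p = 0) :
    IsFloerChain 𝔠.act (fun p => ∑ᶠ n, hk n p) := by
  intro C
  obtain ⟨N, hN⟩ := hev C
  have hsub : {p : P | (∑ᶠ n, hk n p) ≠ 0 ∧ C < 𝔠.act p} ⊆
      ⋃ n ∈ Finset.range N, {p : P | hk n p ≠ 0 ∧ C < 𝔠.act p} := by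
    intro p hp
    have hex : ∃ n, hk n p ≠ 0 := by
      by_contra hcon
      push_neg at hcon
      exact hp.1 (finsum_eq_zero_of_forall_eq_zero hcon)
    obtain ⟨n, hn⟩ := hex
    have hnN : n < N := by
      by_contra hge
      push_neg at hge
      exact hn (hN n hge p hp.2)
    exact Set.mem_biUnion (Finset.mem_range.mpr hnN) ⟨hn, hp.2⟩
  exact (Set.Finite.biUnion (Finset.range N).finite_toSet fun n _ => hfc n C).subset hsub

lemma bdry_finsum (hk : ℕ → P → R) (hfc : ∀ n, IsFloerChain 𝔠.act (hk n))
    (hev : ∀ C : ℝ, ∃ N, ∀ n, N ≤ n → ∀ p, C < 𝔠.act p → hk n p = 0) (q : P) :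
    floerBdry 𝔠.bnd (fun p => ∑ᶠ n, hk n p) q = ∑ᶠ n, floerBdry 𝔠.bnd (hk n) q := by
  obtain ⟨N, hN⟩ := hev (𝔠.act q)
  -- first: the chain agrees with the partial sum on the relevant support
  have hkey : ∀ p, (∑ᶠ n, hk n p) * 𝔠.bnd p q
      = ((∑ n ∈ Finset.range N, hk n) p) * 𝔠.bnd p q := by
    intro p
    by_cases hb : 𝔠.bnd p q = 0
    · rw [hb, mul_zero, mul_zero]
    · have hact := 𝔠.bnd_vanish p q hb
      have hsupp : (Function.support fun n => hk n p) ⊆ ↑(Finset.range N) := by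
        intro n hn
        rw [Finset.coe_range, Set.mem_Iio]
        by_contra hge
        push_neg at hge
        exact hn (hN n hge p hact)
      rw [finsum_eq_sum_of_support_subset _ hsupp, Finset.sum_apply]
  have hL : floerBdry 𝔠.bnd (fun p => ∑ᶠ n, hk n p) q
      = floerBdry 𝔠.bnd (∑ n ∈ Finset.range N, hk n) q := by
    rw [floerBdry, floerBdry]
    exact finsum_congr hkey
  rw [hL, bdry_finset_sum 𝔠 _ _ fun n _ => hfc n]
  rw [Finset.sum_apply]
  have hsupp2 : (Function.support fun n => floerBdry 𝔠.bnd (hk n) q) ⊆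
      ↑(Finset.range N) := by
    intro n hn
    rw [Finset.coe_range, Set.mem_Iio]
    by_contra hge
    push_neg at hge
    obtain ⟨p, hp1, hp2⟩ := bdry_supp 𝔠 hn
    exact hp1 (hN n hge p hp2)
  rw [finsum_eq_sum_of_support_subset _ hsupp2]

end series

/-- state of the reduction recursion -/
structure RedState (𝔠 : FloerComplex R Γ P) (c₀ : P → R) where
  x : P → R
  Hp : P → R
  fx : IsFloerChain 𝔠.act x
  fH : IsFloerChain 𝔠.act Hp
  heq : floerBdry 𝔠.bnd Hp = x - c₀

section main

variable (𝔠 : FloerComplex R Γ P)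

lemma sInf_mem [Group.FG Γ] [IsNoetherianRing R] (c₀ : P → R)
    (hchain : IsFloerChain 𝔠.act c₀) (hcycle : floerBdry 𝔠.bnd c₀ = 0) :
    sInf (repLevels 𝔠 c₀) ∈ repLevels 𝔠 c₀ := by
  classical
  by_contra hr
  obtain ⟨δ, β, hδ0, hβ0, hstep⟩ := key_step 𝔠
  have hmemT : ∀ v : RedState 𝔠 c₀, floerLevel 𝔠.act v.x ∈ repLevels 𝔠 c₀ := by
    intro v
    refine ⟨v.x, v.fx, ?_, ⟨v.Hp, v.fH, v.heq⟩, rfl⟩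
    have hxeq : v.x = c₀ + floerBdry 𝔠.bnd v.Hp := by
      rw [v.heq]; funext p; simp
    rw [hxeq, bdry_add 𝔠 hchain (𝔠.bdry_isChain _ v.fH), hcycle,
      𝔠.bdry_bdry _ v.fH]
    simp
  have step : ∀ v : RedState 𝔠 c₀, ∃ (w : RedState 𝔠 c₀) (t : ℝ) (k : P → R),
      floerLevel 𝔠.act v.x = (t : EReal) ∧ IsFloerChain 𝔠.act k ∧
      (∀ p, k p ≠ 0 → 𝔠.act p ≤ t + β) ∧
      (∀ p, floerBdry 𝔠.bnd k p ≠ 0 → 𝔠.act p = t ∨ 𝔠.act p ≤ t - δ) ∧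
      w.x = v.x - floerBdry 𝔠.bnd k ∧ w.Hp = v.Hp - k ∧
      (∀ p, w.x p ≠ 0 → 𝔠.act p < t) := by
    intro v
    have hlevmem := hmemT v
    have hlb : sInf (repLevels 𝔠 c₀) < floerLevel 𝔠.act v.x := by
      rcases lt_or_eq_of_le (sInf_le hlevmem) with h | h
      · exact h
      · exact absurd (h ▸ hlevmem) hr
    have hnbot : floerLevel 𝔠.act v.x ≠ ⊥ := by
      intro hb
      rw [hb] at hlb
      exact absurd hlb (by simp)
    set t := (floerLevel 𝔠.act v.x).toReal with ht
    have hlev : floerLevel 𝔠.act v.x = (t : EReal) :=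
      (EReal.coe_toReal (level_ne_top v.fx) hnbot).symm
    have hxne : v.x ≠ 0 := by
      intro h0; rw [h0, level_zero] at hnbot; exact hnbot rfl
    obtain ⟨p₀, hp₀, hp₀lev⟩ := level_eq_act v.fx hxne
    have hact₀ : 𝔠.act p₀ = t := by
      rw [hlev] at hp₀lev
      exact_mod_cast hp₀lev.symm
    have hbd : ∀ p, v.x p ≠ 0 → 𝔠.act p ≤ t :=
      level_le_iff.mp (le_of_eq hlev)
    have hlb2 : sInf (repLevels 𝔠 c₀) < (t : EReal) := hlev ▸ hlb
    obtain ⟨z, hzT, hzlt⟩ := sInf_lt_iff.mp hlb2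
    obtain ⟨c, hcfc, _hccyc, ⟨hc, hhcfc, hhceq⟩, rfl⟩ := hzT
    have hbb : v.x - floerBdry 𝔠.bnd (v.Hp - hc) = c := by
      rw [bdry_sub 𝔠 v.fH hhcfc, v.heq, hhceq]
      funext p
      simp only [Pi.sub_apply]
      ring
    have hredsupp : ∀ p, (v.x - floerBdry 𝔠.bnd (v.Hp - hc)) p ≠ 0 → 𝔠.act p < t := by
      rw [hbb]
      exact (level_lt_coe_iff hcfc).mp hzlt
    obtain ⟨k, hkfc, hkht, hkred, hkgap⟩ := hstep v.x t v.fx ⟨p₀, hp₀, hact₀⟩ hbd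
      ⟨v.Hp - hc, fc_sub v.fH hhcfc, hredsupp⟩
    have hkb : IsFloerChain 𝔠.act (floerBdry 𝔠.bnd k) := 𝔠.bdry_isChain k hkfc
    refine ⟨⟨v.x - floerBdry 𝔠.bnd k, v.Hp - k, fc_sub v.fx hkb, fc_sub v.fH hkfc, ?_⟩,
      t, k, hlev, hkfc, hkht, hkgap, rfl, rfl, hkred⟩
    rw [bdry_sub 𝔠 v.fH hkfc, v.heq]
    funext p
    simp only [Pi.sub_apply]
    ring
  choose Fst Tst Kst hspec using step
  set v₀ : RedState 𝔠 c₀ :=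
    ⟨c₀, 0, hchain, fc_zero _, by rw [bdry_zero]; funext p; simp⟩ with hv₀
  set seq : ℕ → RedState 𝔠 c₀ := fun n => Nat.rec v₀ (fun _ v => Fst v) n with hseq
  have hseqsucc : ∀ n, seq (n + 1) = Fst (seq n) := fun n => rfl
  set ts : ℕ → ℝ := fun n => Tst (seq n) with hts
  set ks : ℕ → (P → R) := fun n => Kst (seq n) with hks
  have h_lev : ∀ n, floerLevel 𝔠.act (seq n).x = ((ts n : ℝ) : EReal) :=
    fun n => (hspec (seq n)).1
  have h_kfc : ∀ n, IsFloerChain 𝔠.act (ks n) := fun n => (hspec (seq n)).2.1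
  have h_kht : ∀ n, ∀ p, ks n p ≠ 0 → 𝔠.act p ≤ ts n + β :=
    fun n => (hspec (seq n)).2.2.1
  have h_kgap : ∀ n, ∀ p, floerBdry 𝔠.bnd (ks n) p ≠ 0 →
      𝔠.act p = ts n ∨ 𝔠.act p ≤ ts n - δ := fun n => (hspec (seq n)).2.2.2.1
  have h_xeq : ∀ n, (seq (n + 1)).x = (seq n).x - floerBdry 𝔠.bnd (ks n) := by
    intro n
    rw [hseqsucc n]
    exact (hspec (seq n)).2.2.2.2.1
  have h_strict : ∀ n, ∀ p, (seq (n + 1)).x p ≠ 0 → 𝔠.act p < ts n := by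
    intro n
    rw [hseqsucc n]
    exact (hspec (seq n)).2.2.2.2.2.2
  have hsucclt : ∀ n, ts (n + 1) < ts n := by
    intro n
    have h1 : floerLevel 𝔠.act (seq (n + 1)).x < ((ts n : ℝ) : EReal) :=
      (level_lt_coe_iff (seq (n + 1)).fx).mpr (h_strict n)
    rw [h_lev (n + 1)] at h1
    exact_mod_cast h1
  have hanti : StrictAnti ts := strictAnti_nat_of_succ_lt hsucclt
  have xdec : ∀ n, (seq n).x = c₀ - ∑ i ∈ Finset.range n, floerBdry 𝔠.bnd (ks i) := by
    intro n
    induction n with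
    | zero => funext p; simp [hseq, hv₀]
    | succ n ih =>
        rw [h_xeq n, ih, Finset.sum_range_succ, sub_sub]
  by_cases hbel : ∀ C : ℝ, ∃ n, ts n < C
  · -- levels drop to -∞ : the class is represented by 0
    have hev : ∀ C : ℝ, ∃ N, ∀ n, N ≤ n → ∀ p, C < 𝔠.act p → ks n p = 0 := by
      intro C
      obtain ⟨N, hN⟩ := hbel (C - β)
      refine ⟨N, fun n hn p hp => ?_⟩
      by_contra hne
      have h1 := h_kht n p hne
      have h2 : ts n ≤ ts N := hanti.antitone hn
      linarith
    set Hlim : P → R := fun p => ∑ᶠ n, ks n p with hHlim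
    have hHfc : IsFloerChain 𝔠.act Hlim := fc_finsum 𝔠 ks h_kfc hev
    have hHbdry : ∀ q, floerBdry 𝔠.bnd Hlim q = c₀ q := by
      intro q
      rw [hHlim, bdry_finsum 𝔠 ks h_kfc hev q]
      obtain ⟨n, hn⟩ := hbel (𝔠.act q)
      have hxq : (seq n).x q = 0 := by
        by_contra hne
        have h1 := level_le_iff.mp (le_of_eq (h_lev n)) q hne
        linarith
      have hsupp : (Function.support fun i => floerBdry 𝔠.bnd (ks i) q) ⊆
          ↑(Finset.range n) := by
        intro i hi
        rw [Finset.coe_range, Set.mem_Iio]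
        by_contra hge
        push_neg at hge
        have hle : ts i ≤ ts n := hanti.antitone hge
        rcases h_kgap i q hi with h | h
        · linarith
        · linarith
      rw [finsum_eq_sum_of_support_subset _ hsupp]
      have h5 := congrFun (xdec n) q
      rw [hxq] at h5
      simp only [Pi.sub_apply, Finset.sum_apply] at h5
      exact (sub_eq_zero.mp h5.symm).symm
    have hbotmem : (⊥ : EReal) ∈ repLevels 𝔠 c₀ := by
      refine ⟨0, fc_zero _, bdry_zero 𝔠, ⟨-Hlim, fc_neg hHfc, ?_⟩, level_zero.symm⟩
      rw [bdry_neg 𝔠 hHfc]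
      funext q
      rw [Pi.neg_apply, hHbdry q]
      simp
    have hbot : sInf (repLevels 𝔠 c₀) = ⊥ := le_bot_iff.mp (sInf_le hbotmem)
    exact hr (hbot ▸ hbotmem)
  · push_neg at hbel
    obtain ⟨C, hC⟩ := hbel
    have hbdd : BddBelow (Set.range ts) := ⟨C, fun z ⟨n, hn⟩ => hn ▸ hC n⟩
    set ρ := ⨅ n, ts n with hρ
    have hρle : ∀ n, ρ ≤ ts n := fun n => ciInf_le hbdd n
    have hρlt : ∀ n, ρ < ts n := fun n => lt_of_le_of_lt (hρle (n + 1)) (hsucclt n)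
    have hex : ∃ n₀, ts n₀ < ρ + δ / 2 := by
      apply exists_lt_of_ciInf_lt
      rw [← hρ]
      linarith
    obtain ⟨n₀, hn₀⟩ := hex
    set F := {p : P | (c₀ p ≠ 0 ∨ ∃ i, i < n₀ ∧ floerBdry 𝔠.bnd (ks i) p ≠ 0) ∧
      ρ < 𝔠.act p} with hF
    have hFfin : F.Finite := by
      have hsub : F ⊆ {p : P | c₀ p ≠ 0 ∧ ρ < 𝔠.act p} ∪
          ⋃ i ∈ Finset.range n₀, {p : P | floerBdry 𝔠.bnd (ks i) p ≠ 0 ∧ ρ < 𝔠.act p} := by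
        rintro p ⟨hp1 | ⟨i, hi, hp1⟩, hp2⟩
        · exact Or.inl ⟨hp1, hp2⟩
        · exact Or.inr (Set.mem_biUnion (Finset.mem_range.mpr hi) ⟨hp1, hp2⟩)
      exact ((hchain ρ).union
        (Set.Finite.biUnion (Finset.range n₀).finite_toSet
          fun i _ => 𝔠.bdry_isChain _ (h_kfc i) ρ)).subset hsub
    have pfn : ∀ n, ∃ p, (seq n).x p ≠ 0 ∧ 𝔠.act p = ts n := by
      intro n
      have hne : (seq n).x ≠ 0 := by
        intro h0
        have := h_lev n
        rw [h0, level_zero] at this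
        exact (EReal.bot_ne_coe (ts n)) this
      obtain ⟨p, hp, hplev⟩ := level_eq_act (seq n).fx hne
      refine ⟨p, hp, ?_⟩
      have := (h_lev n).symm.trans hplev
      exact_mod_cast this.symm
    choose pf hpf1 hpf2 using pfn
    have hgF : ∀ m : ℕ, pf (n₀ + m) ∈ F := by
      intro m
      set n := n₀ + m with hn
      refine ⟨?_, by rw [hpf2]; exact hρlt n⟩
      have hx := hpf1 n
      rw [xdec n] at hx
      simp only [Pi.sub_apply, Finset.sum_apply] at hx
      have hexi : c₀ (pf n) ≠ 0 ∨ ∃ i, i < n ∧ floerBdry 𝔠.bnd (ks i) (pf n) ≠ 0 := by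
        by_contra hcon
        push_neg at hcon
        apply hx
        rw [Finset.sum_congr rfl (fun i hi => hcon.2 i (Finset.mem_range.mp hi))]
        rw [hcon.1]
        simp
      rcases hexi with h | ⟨i, hi, hne⟩
      · exact Or.inl h
      · right
        refine ⟨i, ?_, hne⟩
        by_contra hge
        push_neg at hge
        rcases h_kgap i (pf n) hne with h | h
        · rw [hpf2 n] at h
          exact absurd (hanti.injective h) (by omega)
        · have h1 : ts i ≤ ts n₀ := hanti.antitone hge
          have h2 := hpf2 n
          have h3 := hρlt n
          linarith
    have hginj : Function.Injective fun m => pf (n₀ + m) := by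
      intro m m' hmm
      have hmm' : pf (n₀ + m) = pf (n₀ + m') := hmm
      have h1 : 𝔠.act (pf (n₀ + m)) = ts (n₀ + m) := hpf2 _
      have h2 : 𝔠.act (pf (n₀ + m')) = ts (n₀ + m') := hpf2 _
      rw [hmm'] at h1
      have := hanti.injective (h1.symm.trans h2)
      omega
    exact absurd hFfin (Set.infinite_of_injective_forall_mem hginj hgF)

end main

end FloerAux

/-- over a Noetherian ring, every homology class `a = [c₀]` has a
representing cycle `α` with `ℓ(α) = ρ(a)`: the infimum defining the spectral
number is attained. -/

theorem spectral_number_attained [Group.FG Γ] [IsNoetherianRing R]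
    (𝔠 : FloerComplex R Γ P) (c₀ : P → R)
    (hchain : IsFloerChain 𝔠.act c₀) (hcycle : floerBdry 𝔠.bnd c₀ = 0) :
    ∃ α : P → R, IsFloerChain 𝔠.act α ∧ floerBdry 𝔠.bnd α = 0 ∧
      (∃ h : P → R, IsFloerChain 𝔠.act h ∧ floerBdry 𝔠.bnd h = α - c₀) ∧
      floerLevel 𝔠.act α = sInf (repLevels 𝔠 c₀) := by
  obtain ⟨c, h1, h2, ⟨h, h3, h4⟩, h5⟩ := FloerAux.sInf_mem 𝔠 c₀ hchain hcycle
  exact ⟨c, h1, h2, ⟨h, h3, h4⟩, h5.symm⟩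
end
end
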